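/- arXiv:1810.10415 — 6 statements merged into one kernel-verified Lean document; each statement's English description precedes it below -/
import Mathlib

section
/- Let k ∈ ℕ, k ≥ 1. For every t > 0 and θ ∈ (0,π), the k-th derivative of φ_t satisfies ∂_θ^k φ_t(θ) = φ_t(θ) · Σ_{(m₁,…,m_k) ∈ ℕ^k, m₁+2m₂+⋯+km_k = k} a_{m₁,…,m_k} t^{m₁+⋯+m_k} (cos θ)^{α_{m₁,…,m_k}} (sin θ)^{β_{m₁,…,m_k}}, where α_{m₁,…,m_k} = Σ_{j=1}^{⌊k/2⌋} m_{2j}, β_{m₁,…,m_k} = Σ_{j=1}^{⌊(k+1)/2⌋} m_{2j-1}, and a_{m₁,…,m_k} = (-1)^{Σ_{j=1}^{⌊k/2⌋} j·m_{2j} + Σ_{j=1}^{⌊(k+1)/2⌋} j·m_{2j-1}} · 2^{m₁+⋯+m_k} · k! / (m₁!·(1!)^{m₁} · m₂!·(2!)^{m₂} ⋯ m_k!·(k!)^{m_k}). -/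
open MeasureTheory Set
open scoped ENNReal NNReal Real

noncomputable section

/-- `φ_t(θ) = exp(-2t(1 - cos θ))`. -/
def phi (t θ : ℝ) : ℝ := Real.exp (-2 * t * (1 - Real.cos θ))

/-- `h_k(θ) = sin θ` if `k` is odd, `cos θ` if `k` is even. -/
def hfun (k : ℕ) (x : ℝ) : ℝ := if Odd k then Real.sin x else Real.cos x

/-- `G(n,t) = (1/π) ∫_0^π exp(-2t(1-cos θ)) cos(nθ) dθ`. -/
def Gker (n : ℤ) (t : ℝ) : ℝ :=
  (1 / Real.pi) * ∫ θ in (0:ℝ)..Real.pi, phi t θ * Real.cos ((n : ℝ) * θ)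

/-- `H_k(z,t) = z^{-k} ∫_0^π ∂_θ^k φ_t(θ) h_k(zθ) dθ`. -/
def Hker (k : ℕ) (z t : ℝ) : ℝ :=
  (1 / z ^ k) * ∫ θ in (0:ℝ)..Real.pi, iteratedDeriv k (phi t) θ * hfun k (z * θ)

/-- Kernel of the Laplace-transform-type multiplier:
`K_Ψ(n) = -∫_0^∞ Ψ(t) ∂_t G(n,t) dt`. -/
def Kker (Ψ : ℝ → ℂ) (n : ℤ) : ℂ :=
  -∫ t in Set.Ioi (0:ℝ), Ψ t * ((deriv (fun s => Gker n s) t : ℝ) : ℂ)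

/-- The ball `B_ℤ(n₀, r₀) = {n ∈ ℤ : |n - n₀| ≤ r₀}`. -/
def zball (n₀ : ℤ) (r₀ : ℝ) : Set ℤ := {n : ℤ | |(n : ℝ) - (n₀ : ℝ)| ≤ r₀}

/-- `b : ℤ → ℂ` is an `(H,p,2)`-atom: supported in a ball `B = B_ℤ(n₀,r₀)` with `r₀ ≥ 1`,
`ℓ²`-norm at most `(#B)^{1/2-1/p}`, and vanishing moments up to order `1/p - 1`. -/
def IsHAtom (p : ℝ) (b : ℤ → ℂ) : Prop :=
  ∃ (n₀ : ℤ) (r₀ : ℝ), 1 ≤ r₀ ∧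
    (∀ n : ℤ, b n ≠ 0 → n ∈ zball n₀ r₀) ∧
    Real.sqrt (∑' n : ℤ, ‖b n‖ ^ 2) ≤ ((zball n₀ r₀).ncard : ℝ) ^ ((1:ℝ)/2 - 1/p) ∧
    (∀ α : ℕ, (α : ℝ) ≤ 1/p - 1 → ∑' n : ℤ, (n : ℂ) ^ α * b n = 0)

namespace FdB

/-- the j-th derivative of θ ↦ -2t(1-cos θ), for j ≥ 1. -/
def vj (t : ℝ) (j : ℕ) (x : ℝ) : ℝ := 2 * t * Real.cos (x + j * (Real.pi / 2))

lemma hasDerivAt_vj (t : ℝ) (j : ℕ) (x : ℝ) :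
    HasDerivAt (vj t j) (vj t (j+1) x) x := by
  have h1 : HasDerivAt (fun y : ℝ => y + j * (Real.pi/2)) 1 x :=
    (hasDerivAt_id x).add_const _
  have h2 := (Real.hasDerivAt_cos (x + j * (Real.pi/2))).comp x h1
  have h3 := h2.const_mul (2 * t)
  refine h3.congr_deriv ?_
  have : ((j:ℝ)+1) * (Real.pi/2) = (x + j * (Real.pi/2)) + Real.pi/2 - x := by ring
  simp only [vj]
  push_cast
  rw [show x + ((j:ℝ)+1) * (Real.pi/2) = (x + j * (Real.pi/2)) + Real.pi/2 by ring,
    Real.cos_add_pi_div_two]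
  ring

lemma hasDerivAt_phi (t : ℝ) (x : ℝ) :
    HasDerivAt (phi t) (phi t x * vj t 1 x) x := by
  have h1 : HasDerivAt (fun y : ℝ => -2 * t * (1 - Real.cos y)) (vj t 1 x) x := by
    have := ((hasDerivAt_const x (1:ℝ)).sub (Real.hasDerivAt_cos x)).const_mul (-2 * t)
    refine this.congr_deriv ?_
    simp [vj, Real.cos_add_pi_div_two]
  have := (Real.hasDerivAt_exp (-2 * t * (1 - Real.cos x))).comp x h1
  exact this

/-- cosine shift pattern -/
lemma cos_shift (j : ℕ) (x : ℝ) :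
    Real.cos (x + j * (Real.pi/2)) = (-1 : ℝ) ^ ((j+1)/2) * hfun j x ∧
    Real.sin (x + j * (Real.pi/2)) = (-1 : ℝ) ^ (j/2) * hfun (j+1) x := by
  induction j with
  | zero => simp [hfun]
  | succ j ih =>
    have hre : (x + (↑(j+1):ℝ) * (Real.pi/2)) = (x + j * (Real.pi/2)) + Real.pi/2 := by
      push_cast; ring
    constructor
    · rw [hre, Real.cos_add_pi_div_two, ih.2]
      rw [show (j+1+1)/2 = j/2 + 1 by omega]
      ring
    · rw [hre, Real.sin_add_pi_div_two, ih.1]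
      have h : Odd (j+1+1) ↔ Odd j := by simp [Nat.odd_iff]; omega
      unfold hfun
      rw [if_congr h rfl rfl]

lemma vj_eq (t : ℝ) (j : ℕ) (x : ℝ) :
    vj t j x = 2 * t * ((-1 : ℝ) ^ ((j+1)/2) * hfun j x) := by
  rw [vj, (cos_shift j x).1]

/-- weight of a multi-index -/
def wtf (K : ℕ) (m : ℕ → ℕ) : ℕ := ∑ j ∈ Finset.range K, (j+1) * m j

/-- denominator -/
def Dden (K : ℕ) (m : ℕ → ℕ) : ℕ :=
  ∏ j ∈ Finset.range K, ((m j).factorial * ((j+1).factorial) ^ (m j))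

def monomF (t : ℝ) (K : ℕ) (m : ℕ → ℕ) (x : ℝ) : ℝ :=
  ∏ j ∈ Finset.range K, (vj t (j+1) x) ^ (m j)

def extF (K : ℕ) (m : Fin K → ℕ) : ℕ → ℕ := fun j => if h : j < K then m ⟨j, h⟩ else 0

lemma extF_inj (K : ℕ) : Function.Injective (extF K) := by
  intro a b h
  funext i
  have := congrFun h i.1
  simpa [extF, i.2] using this

def SS (K n : ℕ) : Finset (ℕ → ℕ) :=
  ((Fintype.piFinset (fun _ : Fin K => Finset.range (K+1))).map
    ⟨extF K, extF_inj K⟩).filter (fun m => wtf K m = n)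

lemma mem_SS {K n : ℕ} {m : ℕ → ℕ} :
    m ∈ SS K n ↔ ((∀ j, m j ≤ K) ∧ ∀ j, K ≤ j → m j = 0) ∧ wtf K m = n := by
  simp only [SS, Finset.mem_filter, Finset.mem_map, Fintype.mem_piFinset,
    Function.Embedding.coeFn_mk, Finset.mem_range]
  constructor
  · rintro ⟨⟨m₀, hm₀, rfl⟩, hw⟩
    refine ⟨⟨fun j => ?_, fun j hj => ?_⟩, hw⟩
    · by_cases h : j < K
      · simpa [extF, h] using Nat.lt_succ_iff.1 (hm₀ ⟨j, h⟩)
      · simp [extF, h]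
    · simp [extF, Nat.not_lt.2 hj]
  · rintro ⟨⟨hb, h0⟩, hw⟩
    refine ⟨⟨fun i => m i.1, fun i => Nat.lt_succ_iff.2 (hb i.1), ?_⟩, hw⟩
    funext j
    by_cases h : j < K
    · simp [extF, h]
    · simp [extF, h, h0 j (Nat.not_lt.1 h)]

lemma mem_SS_of {K n : ℕ} {m : ℕ → ℕ} (hn : n ≤ K)
    (h0 : ∀ j, K ≤ j → m j = 0) (hw : wtf K m = n) : m ∈ SS K n := by
  refine mem_SS.2 ⟨⟨fun j => ?_, h0⟩, hw⟩
  by_cases h : j < K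
  · calc m j ≤ (j+1) * m j := Nat.le_mul_of_pos_left _ (Nat.succ_pos j)
    _ ≤ wtf K m := Finset.single_le_sum (f := fun j => (j+1) * m j)
        (fun _ _ => Nat.zero_le _) (Finset.mem_range.2 h)
    _ ≤ K := hw ▸ hn
  · simp [h0 j (Nat.not_lt.1 h)]

def Bsum (t : ℝ) (K n : ℕ) (x : ℝ) : ℝ :=
  ∑ m ∈ SS K n, ((n.factorial : ℝ) / (Dden K m : ℝ)) * monomF t K m x

lemma Dden_pos (K : ℕ) (m : ℕ → ℕ) : 0 < Dden K m :=
  Finset.prod_pos fun j _ => Nat.mul_pos (Nat.factorial_pos _) (Nat.pow_pos (Nat.factorial_pos _))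

lemma Bsum_zero (t : ℝ) (K : ℕ) (x : ℝ) : Bsum t K 0 x = 1 := by
  have hS : SS K 0 = {fun _ => 0} := by
    apply Finset.eq_singleton_iff_unique_mem.2
    constructor
    · exact mem_SS_of (Nat.zero_le _) (fun _ _ => rfl) (by simp [wtf])
    · intro m hm
      obtain ⟨⟨_, h0⟩, hw⟩ := mem_SS.1 hm
      funext j
      by_cases h : j < K
      · have := Finset.sum_eq_zero_iff_of_nonneg (fun _ _ => Nat.zero_le _) |>.1 hw
          j (Finset.mem_range.2 h)
        simpa using this
      · exact h0 j (Nat.not_lt.1 h)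
  simp [Bsum, hS, Dden, monomF]
def BderTerm (t : ℝ) (K : ℕ) (m : ℕ → ℕ) (x : ℝ) : ℝ :=
  ∑ j ∈ Finset.range K,
    (∏ l ∈ (Finset.range K).erase j, vj t (l+1) x ^ m l) *
      ((m j : ℝ) * vj t (j+1) x ^ (m j - 1) * vj t (j+2) x)

lemma hasDerivAt_monomF (t : ℝ) (K : ℕ) (m : ℕ → ℕ) (x : ℝ) :
    HasDerivAt (fun y => monomF t K m y) (BderTerm t K m x) x := by
  have h := HasDerivAt.fun_finsetProd (u := Finset.range K)
    (f := fun j y => vj t (j+1) y ^ m j)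
    (f' := fun j => (m j : ℝ) * vj t (j+1) x ^ (m j - 1) * vj t (j+2) x)
    (fun j _ => (hasDerivAt_vj t (j+1) x).pow (m j))
  simpa [monomF, BderTerm, smul_eq_mul, mul_comm] using h

lemma hasDerivAt_Bsum (t : ℝ) (K n : ℕ) (x : ℝ) :
    HasDerivAt (fun y => Bsum t K n y)
      (∑ m ∈ SS K n, ((n.factorial : ℝ) / (Dden K m : ℝ)) * BderTerm t K m x) x :=
  HasDerivAt.fun_sum fun m _ => (hasDerivAt_monomF t K m x).const_mul _

def addE (j : ℕ) (m : ℕ → ℕ) : ℕ → ℕ := fun l => if l = j then m l + 1 else m l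
def subE (j : ℕ) (m : ℕ → ℕ) : ℕ → ℕ := fun l => if l = j then m l - 1 else m l

lemma addE_apply_self (j : ℕ) (m : ℕ → ℕ) : addE j m j = m j + 1 := by simp [addE]
lemma addE_apply_ne (j l : ℕ) (m : ℕ → ℕ) (h : l ≠ j) : addE j m l = m l := by simp [addE, h]
lemma subE_apply_ne (j l : ℕ) (m : ℕ → ℕ) (h : l ≠ j) : subE j m l = m l := by simp [subE, h]

lemma addE_subE (j : ℕ) (m : ℕ → ℕ) (h : 1 ≤ m j) : addE j (subE j m) = m := by
  funext l; rcases eq_or_ne l j with rfl | hl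
  · simp [addE, subE]; omega
  · simp [addE, subE, hl]

lemma subE_addE (j : ℕ) (m : ℕ → ℕ) : subE j (addE j m) = m := by
  funext l; rcases eq_or_ne l j with rfl | hl
  · simp [addE, subE]
  · simp [addE, subE, hl]

lemma wtf_addE {K : ℕ} (j : ℕ) (hj : j < K) (m : ℕ → ℕ) :
    wtf K (addE j m) = wtf K m + (j + 1) := by
  unfold wtf
  have : ∀ l ∈ Finset.range K, (l+1) * addE j m l
      = (l+1) * m l + (if l = j then l + 1 else 0) := by
    intro l _
    rcases eq_or_ne l j with rfl | hl
    · simp [addE]; ring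
    · simp [addE, hl]
  rw [Finset.sum_congr rfl this, Finset.sum_add_distrib,
    Finset.sum_ite_eq' (Finset.range K) j (fun l => l + 1), if_pos (Finset.mem_range.2 hj)]

lemma wtf_subE {K : ℕ} (j : ℕ) (hj : j < K) (m : ℕ → ℕ) (h : 1 ≤ m j) :
    wtf K (subE j m) + (j + 1) = wtf K m := by
  conv_rhs => rw [← addE_subE j m h]
  rw [wtf_addE j hj]

lemma Dden_addE {K : ℕ} (j : ℕ) (hj : j < K) (m : ℕ → ℕ) :
    Dden K (addE j m) = (m j + 1) * (j+1).factorial * Dden K m := by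
  unfold Dden
  have hjm : j ∈ Finset.range K := Finset.mem_range.2 hj
  rw [← Finset.mul_prod_erase _ _ hjm, ← Finset.mul_prod_erase _ (fun l => (m l).factorial * ((l+1).factorial) ^ (m l)) hjm]
  have h1 : ∀ l ∈ (Finset.range K).erase j,
      (addE j m l).factorial * ((l+1).factorial) ^ (addE j m l)
        = (m l).factorial * ((l+1).factorial) ^ (m l) := by
    intro l hl
    rw [addE_apply_ne j l m (Finset.mem_erase.1 hl).1]
  rw [Finset.prod_congr rfl h1, addE_apply_self, Nat.factorial_succ, pow_succ]
  ring

lemma monomF_addE {K : ℕ} (t : ℝ) (j : ℕ) (hj : j < K) (m : ℕ → ℕ) (x : ℝ) :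
    monomF t K (addE j m) x = vj t (j+1) x * monomF t K m x := by
  unfold monomF
  have hjm : j ∈ Finset.range K := Finset.mem_range.2 hj
  rw [← Finset.mul_prod_erase _ _ hjm, ← Finset.mul_prod_erase _ (fun l => vj t (l+1) x ^ m l) hjm]
  have h1 : ∀ l ∈ (Finset.range K).erase j,
      vj t (l+1) x ^ (addE j m l) = vj t (l+1) x ^ m l := by
    intro l hl
    rw [addE_apply_ne j l m (Finset.mem_erase.1 hl).1]
  rw [Finset.prod_congr rfl h1, addE_apply_self, pow_succ]
  ring

lemma monomF_subE_eq {K : ℕ} (t : ℝ) (j : ℕ) (hj : j < K) (m : ℕ → ℕ) (x : ℝ) :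
    (∏ l ∈ (Finset.range K).erase j, vj t (l+1) x ^ m l) * vj t (j+1) x ^ (m j - 1)
      = monomF t K (subE j m) x := by
  unfold monomF
  have hjm : j ∈ Finset.range K := Finset.mem_range.2 hj
  rw [← Finset.mul_prod_erase _ (fun l => vj t (l+1) x ^ subE j m l) hjm]
  have h1 : ∀ l ∈ (Finset.range K).erase j,
      vj t (l+1) x ^ (subE j m l) = vj t (l+1) x ^ m l := by
    intro l hl
    rw [subE_apply_ne j l m (Finset.mem_erase.1 hl).1]
  rw [Finset.prod_congr rfl h1]
  have : subE j m j = m j - 1 := by simp [subE]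
  rw [this]; ring
lemma Dden_ne (K : ℕ) (m : ℕ → ℕ) : ((Dden K m : ℝ)) ≠ 0 :=
  Nat.cast_ne_zero.2 (Dden_pos K m).ne'

lemma stepC (t : ℝ) (K n : ℕ) (hK : 0 < K) (hn : n + 1 ≤ K) (x : ℝ) :
    ∑ m' ∈ SS K (n+1), ((n.factorial : ℝ) / (Dden K m' : ℝ)) * ((0+1 : ℝ) * (m' 0 : ℝ))
        * monomF t K m' x
      = vj t 1 x * Bsum t K n x := by
  rw [Bsum, Finset.mul_sum]
  rw [← Finset.sum_filter_of_ne (p := fun m' => m' 0 ≠ 0)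
    (fun m' _ hne h0 => by simp [h0] at hne)]
  refine Finset.sum_nbij' (subE 0) (addE 0) ?_ ?_ ?_ ?_ ?_
  · intro m' hm'
    obtain ⟨hm', h0⟩ := Finset.mem_filter.1 hm'
    obtain ⟨⟨_, hz⟩, hw⟩ := mem_SS.1 hm'
    refine mem_SS_of (by omega) (fun l hl => ?_) ?_
    · rw [subE_apply_ne 0 l m' (by omega), hz l hl]
    · have := wtf_subE 0 hK m' (by omega)
      omega
  · intro m hm
    obtain ⟨⟨_, hz⟩, hw⟩ := mem_SS.1 hm
    refine Finset.mem_filter.2 ⟨mem_SS_of hn (fun l hl => ?_) ?_, by simp [addE]⟩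
    · rw [addE_apply_ne 0 l m (by omega), hz l hl]
    · rw [wtf_addE 0 hK m, hw]
  · intro m' hm'
    exact addE_subE 0 m' (by have := (Finset.mem_filter.1 hm').2; omega)
  · intro m _; exact subE_addE 0 m
  · intro m' hm'
    obtain ⟨hm'S, h0⟩ := Finset.mem_filter.1 hm'
    have h1 : 1 ≤ m' 0 := by omega
    set m := subE 0 m' with hmdef
    have hrec : m' = addE 0 m := (addE_subE 0 m' h1).symm
    have hD : (Dden K m' : ℝ) = ((m 0 : ℝ) + 1) * 1 * (Dden K m : ℝ) := by
      rw [hrec, Dden_addE 0 hK m]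
      push_cast [Nat.factorial_one]
      ring
    have hM : monomF t K m' x = vj t 1 x * monomF t K m x := by
      rw [hrec, monomF_addE t 0 hK m x]
    have h0' : (m' 0 : ℝ) = (m 0 : ℝ) + 1 := by rw [hrec]; push_cast [addE_apply_self]; ring
    rw [hD, hM, h0']
    have hne1 : ((m 0 : ℝ) + 1) ≠ 0 := by positivity
    have hne0 : (Dden K m : ℝ) ≠ 0 := Dden_ne K m
    field_simp
    ring

lemma stepD (t : ℝ) (K n : ℕ) (hn : n + 1 ≤ K) (j : ℕ) (hj1 : j + 1 < K) (x : ℝ) :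
    ∑ m' ∈ SS K (n+1), ((n.factorial : ℝ) / (Dden K m' : ℝ))
        * (((j:ℝ)+1+1) * (m' (j+1) : ℝ)) * monomF t K m' x
      = ∑ m ∈ SS K n, ((n.factorial : ℝ) / (Dden K m : ℝ)) *
          ((∏ l ∈ (Finset.range K).erase j, vj t (l+1) x ^ m l) *
            ((m j : ℝ) * vj t (j+1) x ^ (m j - 1) * vj t (j+2) x)) := by
  have hj : j < K := by omega
  rw [← Finset.sum_filter_of_ne (p := fun m' => m' (j+1) ≠ 0)
    (fun m' _ hne h0 => by simp [h0] at hne)]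
  rw [← Finset.sum_filter_of_ne (s := SS K n) (p := fun m => m j ≠ 0)
    (fun m _ hne h0 => by simp [h0] at hne)]
  refine Finset.sum_nbij' (fun m' => addE j (subE (j+1) m'))
    (fun m => addE (j+1) (subE j m)) ?_ ?_ ?_ ?_ ?_
  · intro m' hm'
    beta_reduce
    obtain ⟨hm'S, h0⟩ := Finset.mem_filter.1 hm'
    obtain ⟨⟨_, hz⟩, hw⟩ := mem_SS.1 hm'S
    have h1 : 1 ≤ m' (j+1) := by omega
    refine Finset.mem_filter.2 ⟨mem_SS_of (by omega) (fun l hl => ?_) ?_, ?_⟩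
    · rw [addE_apply_ne j l _ (by omega), subE_apply_ne (j+1) l m' (by omega), hz l hl]
    · rw [wtf_addE j hj]
      have := wtf_subE (j+1) hj1 m' h1
      omega
    · rw [addE_apply_self, subE_apply_ne (j+1) j m' (by omega)]
      omega
  · intro m hm
    beta_reduce
    obtain ⟨hmS, h0⟩ := Finset.mem_filter.1 hm
    obtain ⟨⟨_, hz⟩, hw⟩ := mem_SS.1 hmS
    have h1 : 1 ≤ m j := by omega
    refine Finset.mem_filter.2 ⟨mem_SS_of hn (fun l hl => ?_) ?_, ?_⟩
    · rw [addE_apply_ne (j+1) l _ (by omega), subE_apply_ne j l m (by omega), hz l hl]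
    · rw [wtf_addE (j+1) hj1]
      have := wtf_subE j hj m h1
      omega
    · rw [addE_apply_self, subE_apply_ne j (j+1) m (by omega)]
      omega
  · intro m' hm'
    beta_reduce
    have h1 : 1 ≤ m' (j+1) := by have := (Finset.mem_filter.1 hm').2; omega
    rw [subE_addE j _, addE_subE (j+1) m' h1]
  · intro m hm
    beta_reduce
    have h1 : 1 ≤ m j := by have := (Finset.mem_filter.1 hm).2; omega
    rw [subE_addE (j+1) _, addE_subE j m h1]
  · intro m' hm'
    beta_reduce
    obtain ⟨hm'S, h0⟩ := Finset.mem_filter.1 hm'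
    have h1 : 1 ≤ m' (j+1) := by omega
    set M := subE (j+1) m' with hMdef
    set m := addE j M with hmdef
    have hrec : m' = addE (j+1) M := (addE_subE (j+1) m' h1).symm
    have hD' : (Dden K m' : ℝ) = (m' (j+1) : ℝ) * ((j+2).factorial : ℝ) * (Dden K M : ℝ) := by
      conv_lhs => rw [hrec, Dden_addE (j+1) hj1 M]
      have : M (j+1) + 1 = m' (j+1) := by simp [hMdef, subE]; omega
      rw [← this]
      push_cast
      ring
    have hDm : (Dden K m : ℝ) = ((m' j : ℝ) + 1) * ((j+1).factorial : ℝ) * (Dden K M : ℝ) := by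
      rw [hmdef, Dden_addE j hj M]
      have : M j = m' j := subE_apply_ne (j+1) j m' (by omega)
      rw [this]
      push_cast
      ring
    have hM' : monomF t K m' x = vj t (j+2) x * monomF t K M x := by
      conv_lhs => rw [hrec]
      exact monomF_addE t (j+1) hj1 M x
    have hmj : (m j : ℝ) = (m' j : ℝ) + 1 := by
      rw [hmdef, addE_apply_self, hMdef, subE_apply_ne (j+1) j m' (by omega)]
      push_cast; ring
    have hPQ : (∏ l ∈ (Finset.range K).erase j, vj t (l+1) x ^ m l) * vj t (j+1) x ^ (m j - 1)
        = monomF t K M x := by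
      rw [monomF_subE_eq t j hj m x, hmdef, subE_addE]
    have hfac : ((j+2).factorial : ℝ) = ((j:ℝ)+2) * ((j+1).factorial : ℝ) := by
      rw [show j+2 = (j+1)+1 by ring, Nat.factorial_succ]
      push_cast; ring
    rw [hD', hDm, hM', hmj]
    rw [show ((m' (j+1):ℝ)) * ((j+2).factorial : ℝ) * (Dden K M : ℝ)
      = ((m' (j+1):ℝ)) * (((j:ℝ)+2) * ((j+1).factorial : ℝ)) * (Dden K M : ℝ) by rw [hfac]]
    have hne1 : (m' (j+1) : ℝ) ≠ 0 := Nat.cast_ne_zero.2 (by omega)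
    have hne2 : ((m' j : ℝ) + 1) ≠ 0 := by positivity
    have hne3 : ((j+1).factorial : ℝ) ≠ 0 := Nat.cast_ne_zero.2 (Nat.factorial_pos _).ne'
    have hne4 : (Dden K M : ℝ) ≠ 0 := Dden_ne K M
    have hne5 : ((j:ℝ)+2) ≠ 0 := by positivity
    rw [← hPQ]
    rw [div_mul_eq_mul_div, div_mul_eq_mul_div, div_mul_eq_mul_div]
    rw [div_eq_div_iff
      (mul_ne_zero (mul_ne_zero hne1 (mul_ne_zero hne5 hne3)) hne4)
      (mul_ne_zero (mul_ne_zero hne2 hne3) hne4)]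
    ring
lemma key' (t : ℝ) (K n : ℕ) (hK : 0 < K) (hn : n + 1 ≤ K) (x : ℝ) :
    vj t 1 x * Bsum t K n x +
      ∑ m ∈ SS K n, ((n.factorial : ℝ) / (Dden K m : ℝ)) * BderTerm t K m x =
    Bsum t K (n+1) x := by
  obtain ⟨K', rfl⟩ : ∃ K', K = K' + 1 := ⟨K - 1, by omega⟩
  -- RHS as double sum
  have hU : Bsum t (K'+1) (n+1) x
      = ∑ j ∈ Finset.range (K'+1), ∑ m' ∈ SS (K'+1) (n+1),
          ((n.factorial : ℝ) / (Dden (K'+1) m' : ℝ)) * (((j:ℝ)+1) * (m' j : ℝ))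
            * monomF t (K'+1) m' x := by
    rw [Bsum, Finset.sum_comm]
    refine Finset.sum_congr rfl fun m' hm' => ?_
    obtain ⟨_, hw⟩ := mem_SS.1 hm'
    have hcast : ∑ j ∈ Finset.range (K'+1), ((j:ℝ)+1) * (m' j : ℝ) = (n:ℝ)+1 := by
      have h1 : ((wtf (K'+1) m' : ℕ) : ℝ) = ((n+1 : ℕ) : ℝ) := by rw [hw]
      unfold wtf at h1
      push_cast at h1
      convert h1 using 1
    calc ((n+1).factorial : ℝ) / (Dden (K'+1) m' : ℝ) * monomF t (K'+1) m' x
        = ((n.factorial : ℝ) / (Dden (K'+1) m' : ℝ)) * monomF t (K'+1) m' x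
            * ∑ j ∈ Finset.range (K'+1), ((j:ℝ)+1) * (m' j : ℝ) := by
          rw [hcast, Nat.factorial_succ]; push_cast; ring
      _ = _ := by
          rw [Finset.mul_sum]
          exact Finset.sum_congr rfl fun j _ => by ring
  -- LHS derivative part as double sum
  have hL : ∑ m ∈ SS (K'+1) n, ((n.factorial : ℝ) / (Dden (K'+1) m : ℝ)) * BderTerm t (K'+1) m x
      = ∑ j ∈ Finset.range (K'+1), ∑ m ∈ SS (K'+1) n,
          ((n.factorial : ℝ) / (Dden (K'+1) m : ℝ)) *
            ((∏ l ∈ (Finset.range (K'+1)).erase j, vj t (l+1) x ^ m l) *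
              ((m j : ℝ) * vj t (j+1) x ^ (m j - 1) * vj t (j+2) x)) := by
    refine (Finset.sum_congr rfl fun m _ => ?_).trans Finset.sum_comm
    rw [BderTerm, Finset.mul_sum]
  -- last column vanishes
  have hVlast : ∑ m ∈ SS (K'+1) n,
      ((n.factorial : ℝ) / (Dden (K'+1) m : ℝ)) *
        ((∏ l ∈ (Finset.range (K'+1)).erase K', vj t (l+1) x ^ m l) *
          ((m K' : ℝ) * vj t (K'+1) x ^ (m K' - 1) * vj t (K'+2) x)) = 0 := by
    refine Finset.sum_eq_zero fun m hm => ?_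
    obtain ⟨⟨_, _⟩, hw⟩ := mem_SS.1 hm
    have hmK : m K' = 0 := by
      by_contra h
      have h1 : K' + 1 ≤ (K'+1) * m K' := Nat.le_mul_of_pos_right _ (by omega)
      have h2 : (K'+1) * m K' ≤ wtf (K'+1) m :=
        Finset.single_le_sum (f := fun j => (j+1) * m j)
          (fun _ _ => Nat.zero_le _) (Finset.mem_range.2 (by omega))
      omega
    simp [hmK]
  rw [hL, Finset.sum_range_succ _ K', hVlast, add_zero, hU, Finset.sum_range_succ' _ K']
  have h0 : ∑ m' ∈ SS (K'+1) (n+1),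
      ((n.factorial : ℝ) / (Dden (K'+1) m' : ℝ)) * ((((0:ℕ):ℝ)+1) * (m' 0 : ℝ))
        * monomF t (K'+1) m' x = vj t 1 x * Bsum t (K'+1) n x := by
    rw [← stepC t (K'+1) n hK hn x]
    exact Finset.sum_congr rfl fun m' _ => by push_cast; ring
  have hsucc : ∀ j ∈ Finset.range K',
      (∑ m' ∈ SS (K'+1) (n+1),
        ((n.factorial : ℝ) / (Dden (K'+1) m' : ℝ)) * ((((j+1:ℕ):ℝ)+1) * (m' (j+1) : ℝ))
          * monomF t (K'+1) m' x)
      = ∑ m ∈ SS (K'+1) n,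
          ((n.factorial : ℝ) / (Dden (K'+1) m : ℝ)) *
            ((∏ l ∈ (Finset.range (K'+1)).erase j, vj t (l+1) x ^ m l) *
              ((m j : ℝ) * vj t (j+1) x ^ (m j - 1) * vj t (j+2) x)) := by
    intro j hj
    rw [← stepD t (K'+1) n hn j (by simpa using Finset.mem_range.1 hj) x]
    exact Finset.sum_congr rfl fun m' _ => by push_cast; ring
  rw [h0, Finset.sum_congr rfl hsucc]
  ring
lemma key (t : ℝ) (K n : ℕ) (hK : 0 < K) (hn : n + 1 ≤ K) (x : ℝ) :
    vj t 1 x * Bsum t K n x +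
      ∑ m ∈ SS K n, ((n.factorial : ℝ) / (Dden K m : ℝ)) * BderTerm t K m x =
    Bsum t K (n+1) x :=
  key' t K n hK hn x

lemma main (t : ℝ) (K : ℕ) (hK : 0 < K) :
    ∀ n, n ≤ K → ∀ x, iteratedDeriv n (phi t) x = phi t x * Bsum t K n x := by
  intro n
  induction n with
  | zero => intro _ x; simp [Bsum_zero]
  | succ n ih =>
    intro hn x
    rw [iteratedDeriv_succ]
    have hfe : iteratedDeriv n (phi t) = fun y => phi t y * Bsum t K n y :=
      funext fun y => ih (Nat.le_of_succ_le hn) y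
    rw [hfe]
    have hd := (hasDerivAt_phi t x).fun_mul (hasDerivAt_Bsum t K n x)
    rw [hd.deriv, ← key t K n hK hn x]
    ring

lemma hfun_pow (j e : ℕ) (θ : ℝ) :
    hfun j θ ^ e
      = Real.cos θ ^ (if Even j then e else 0) * Real.sin θ ^ (if Odd j then e else 0) := by
  by_cases h : Odd j
  · simp [hfun, h, ← Nat.not_odd_iff_even]
  · simp [hfun, h, ← Nat.not_odd_iff_even]

lemma wtf_extF (k : ℕ) (M : Fin k → ℕ) :
    wtf k (extF k M) = ∑ i : Fin k, ((i : ℕ) + 1) * M i := by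
  rw [wtf, ← Fin.sum_univ_eq_sum_range (fun j => (j+1) * extF k M j) k]
  refine Finset.sum_congr rfl fun i _ => ?_
  simp [extF, i.2]

lemma Dden_extF (k : ℕ) (M : Fin k → ℕ) :
    ((Dden k (extF k M) : ℕ) : ℝ)
      = ∏ i : Fin k, ((Nat.factorial (M i) * Nat.factorial ((i : ℕ) + 1) ^ (M i) : ℕ) : ℝ) := by
  have h : Dden k (extF k M)
      = ∏ i : Fin k, (Nat.factorial (M i) * Nat.factorial ((i : ℕ) + 1) ^ (M i)) := by
    rw [Dden, ← Fin.prod_univ_eq_prod_range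
      (fun j => (extF k M j).factorial * (j+1).factorial ^ (extF k M j)) k]
    refine Finset.prod_congr rfl fun i _ => ?_
    simp [extF, i.2]
  rw [h]; push_cast; rfl

lemma monomF_extF (t θ : ℝ) (k : ℕ) (M : Fin k → ℕ) :
    monomF t k (extF k M) θ
      = (2:ℝ) ^ (∑ i, M i) * t ^ (∑ i, M i)
        * (-1 : ℝ) ^ (∑ i : Fin k, (((i:ℕ)+2)/2) * M i)
        * Real.cos θ ^ (∑ i : Fin k, if Even ((i:ℕ)+1) then M i else 0)
        * Real.sin θ ^ (∑ i : Fin k, if Odd ((i:ℕ)+1) then M i else 0) := by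
  have h1 : monomF t k (extF k M) θ = ∏ i : Fin k, vj t ((i:ℕ)+1) θ ^ M i := by
    rw [monomF, ← Fin.prod_univ_eq_prod_range (fun j => vj t (j+1) θ ^ extF k M j) k]
    refine Finset.prod_congr rfl fun i _ => ?_
    simp [extF, i.2]
  have h2 : ∀ i : Fin k, vj t ((i:ℕ)+1) θ ^ M i
      = (2:ℝ)^(M i) * t^(M i) * (-1:ℝ)^(((((i:ℕ)+2))/2) * M i)
        * (Real.cos θ ^ (if Even ((i:ℕ)+1) then M i else 0)
          * Real.sin θ ^ (if Odd ((i:ℕ)+1) then M i else 0)) := by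
    intro i
    rw [vj_eq, mul_pow, mul_pow, mul_pow, ← pow_mul, hfun_pow]
    have : ((i:ℕ)+1+1)/2 = ((i:ℕ)+2)/2 := by omega
    rw [this]
    ring
  rw [h1, Finset.prod_congr rfl (fun i _ => h2 i)]
  simp only [Finset.prod_mul_distrib, Finset.prod_pow_eq_pow_sum]
  ring

def TgtTerm (t θ : ℝ) (k : ℕ) (M : Fin k → ℕ) : ℝ :=
  if (∑ i : Fin k, ((i : ℕ) + 1) * M i) = k then
    ((-1 : ℝ)) ^ (∑ i : Fin k, (((i : ℕ) + 2) / 2) * M i) *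
        (2 : ℝ) ^ (∑ i : Fin k, M i) * (Nat.factorial k : ℝ) /
        (∏ i : Fin k,
          ((Nat.factorial (M i) * Nat.factorial ((i : ℕ) + 1) ^ (M i) : ℕ) : ℝ)) *
      t ^ (∑ i : Fin k, M i) *
      Real.cos θ ^ (∑ i : Fin k, if Even ((i : ℕ) + 1) then M i else 0) *
      Real.sin θ ^ (∑ i : Fin k, if Odd ((i : ℕ) + 1) then M i else 0)
  else 0

lemma step1 (t θ : ℝ) (k : ℕ) :
    ∑ m : Fin k → Fin (k+1), TgtTerm t θ k (fun i => (m i : ℕ))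
      = ∑ M ∈ Fintype.piFinset (fun _ : Fin k => Finset.range (k+1)), TgtTerm t θ k M := by
  refine Finset.sum_nbij' (fun m i => (m i : ℕ))
    (fun M i => ⟨M i % (k+1), Nat.mod_lt _ (Nat.succ_pos k)⟩) ?_ ?_ ?_ ?_ ?_
  · intro m _; exact Fintype.mem_piFinset.2 fun i => Finset.mem_range.2 (m i).2
  · intro M _; exact Finset.mem_univ _
  · intro m _
    funext i
    exact Fin.ext (by simp [Nat.mod_eq_of_lt (m i).2])
  · intro M hM
    funext i
    have := Finset.mem_range.1 (Fintype.mem_piFinset.1 hM i)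
    simp [Nat.mod_eq_of_lt this]
  · intro m _; rfl

lemma step2 (t θ : ℝ) (k : ℕ) :
    Bsum t k k θ
      = ∑ M ∈ Fintype.piFinset (fun _ : Fin k => Finset.range (k+1)), TgtTerm t θ k M := by
  rw [Bsum, SS, Finset.sum_filter, Finset.sum_map]
  refine Finset.sum_congr rfl fun M _ => ?_
  simp only [Function.Embedding.coeFn_mk]
  unfold TgtTerm
  rw [wtf_extF]
  by_cases h : (∑ i : Fin k, ((i:ℕ)+1) * M i) = k
  · rw [if_pos h, if_pos h, monomF_extF, Dden_extF]
    ring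
  · rw [if_neg h, if_neg h]

end FdB


/-- Faa di Bruno expansion of the k-th derivative of phi_t (Lemma 2.1). -/
theorem derivative_phi_formula (k : ℕ) (hk : 1 ≤ k) (t : ℝ) (ht : 0 < t)
    (θ : ℝ) (hθ : θ ∈ Set.Ioo 0 Real.pi) :
    iteratedDeriv k (phi t) θ =
      phi t θ *
        ∑ m : Fin k → Fin (k + 1),
          if (∑ i : Fin k, ((i : ℕ) + 1) * (m i : ℕ)) = k then
            ((-1 : ℝ)) ^ (∑ i : Fin k, (((i : ℕ) + 2) / 2) * (m i : ℕ)) *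
                (2 : ℝ) ^ (∑ i : Fin k, (m i : ℕ)) * (Nat.factorial k : ℝ) /
                (∏ i : Fin k,
                  ((Nat.factorial (m i : ℕ) * Nat.factorial ((i : ℕ) + 1) ^ (m i : ℕ) : ℕ) : ℝ)) *
              t ^ (∑ i : Fin k, (m i : ℕ)) *
              Real.cos θ ^ (∑ i : Fin k, if Even ((i : ℕ) + 1) then (m i : ℕ) else 0) *
              Real.sin θ ^ (∑ i : Fin k, if Odd ((i : ℕ) + 1) then (m i : ℕ) else 0)
          else 0 := by
  rw [FdB.main t k hk k le_rfl θ, FdB.step2 t θ k, ← FdB.step1 t θ k]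
  rfl
end
end

section
/- Let k ∈ ℕ. For every m ∈ ℤ with m ≠ 0 and every t > 0, G(m,t) = ((-1)^{⌊(k+1)/2⌋} / (π m^k)) ∫_0^π ∂_θ^k φ_t(θ) h_k(mθ) dθ. -/
open MeasureTheory Set
open scoped ENNReal NNReal Real

noncomputable section

lemma phi_contDiff (t : ℝ) : ContDiff ℝ ⊤ (phi t) :=
  Real.contDiff_exp.comp ((contDiff_const.mul (contDiff_const.sub Real.contDiff_cos)))

lemma phi_even (t θ : ℝ) : phi t (-θ) = phi t θ := by simp [phi]

lemma oddDeriv_zero (t : ℝ) {k : ℕ} (hk : Odd k) : iteratedDeriv k (phi t) 0 = 0 := by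
  have h := iteratedDeriv_comp_neg k (phi t) 0
  have he : (fun x => phi t (-x)) = phi t := funext fun x => phi_even t x
  rw [he, neg_zero, hk.neg_one_pow, neg_smul, one_smul] at h
  linarith

lemma oddDeriv_pi (t : ℝ) {k : ℕ} (hk : Odd k) : iteratedDeriv k (phi t) π = 0 := by
  have he : (fun x => phi t (π + -x)) = (fun x => phi t (π + x)) := by
    funext x
    simp [phi, Real.cos_add]
  have h := iteratedDeriv_comp_neg k (fun x => phi t (π + x)) 0
  have h2 : iteratedDeriv k (fun x => phi t (π + x)) 0 = iteratedDeriv k (phi t) π := by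
    rw [iteratedDeriv_comp_const_add k (phi t) π]; simp
  rw [he, neg_zero, hk.neg_one_pow, neg_smul, one_smul, h2] at h
  linarith

lemma neg_one_pow_congr' {a b : ℕ} (h : a % 2 = b % 2) : (-1:ℝ)^a = (-1)^b := by
  rw [← Nat.mod_add_div a 2, ← Nat.mod_add_div b 2, h, pow_add, pow_add, pow_mul, pow_mul]
  norm_num

lemma hfun_continuous (k : ℕ) : Continuous (hfun k) := by
  unfold hfun
  split
  · exact Real.continuous_sin
  · exact Real.continuous_cos

lemma hfun_hasDerivAt (k : ℕ) (m x : ℝ) :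
    HasDerivAt (fun y => hfun (k+1) (m * y)) ((-1:ℝ)^k * m * hfun k (m * x)) x := by
  have hmx : HasDerivAt (fun y : ℝ => m * y) m x := by
    simpa using (hasDerivAt_id x).const_mul m
  rcases Nat.even_or_odd k with hk | hk
  · have h1 : ¬ Odd k := Nat.not_odd_iff_even.mpr hk
    have h2 : Odd (k+1) := hk.add_one
    have : HasDerivAt (fun y => Real.sin (m*y)) (Real.cos (m*x) * m) x :=
      (Real.hasDerivAt_sin (m*x)).comp x hmx
    simpa [hfun, h1, h2, hk.neg_one_pow, mul_comm] using this
  · have h1 : ¬ Odd (k+1) := by simp [Nat.odd_add_one, hk]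
    have : HasDerivAt (fun y => Real.cos (m*y)) (-Real.sin (m*x) * m) x :=
      (Real.hasDerivAt_cos (m*x)).comp x hmx
    simpa [hfun, h1, hk, hk.neg_one_pow, mul_comm] using this

lemma ibp (t : ℝ) (k : ℕ) (m : ℤ) :
    (∫ θ in (0:ℝ)..π, iteratedDeriv (k+1) (phi t) θ * hfun (k+1) ((m:ℝ)*θ))
      = (-1:ℝ)^(k+1) * (m:ℝ) *
        ∫ θ in (0:ℝ)..π, iteratedDeriv k (phi t) θ * hfun k ((m:ℝ)*θ) := by
  have hc := phi_contDiff t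
  have hu : ∀ x ∈ uIcc (0:ℝ) π, HasDerivAt (fun y => hfun (k+1) ((m:ℝ) * y))
      ((-1:ℝ)^k * (m:ℝ) * hfun k ((m:ℝ) * x)) x := fun x _ => hfun_hasDerivAt k m x
  have hv : ∀ x ∈ uIcc (0:ℝ) π, HasDerivAt (iteratedDeriv k (phi t))
      (iteratedDeriv (k+1) (phi t) x) x := by
    intro x _
    rw [iteratedDeriv_succ]
    exact ((hc.differentiable_iteratedDeriv k (by simp)).differentiableAt).hasDerivAt
  have hu' : IntervalIntegrable (fun x => (-1:ℝ)^k * (m:ℝ) * hfun k ((m:ℝ) * x))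
      volume 0 π :=
    ((continuous_const.mul ((hfun_continuous k).comp
      (continuous_const.mul continuous_id))).intervalIntegrable _ _)
  have hv' : IntervalIntegrable (iteratedDeriv (k+1) (phi t)) volume 0 π :=
    (hc.continuous_iteratedDeriv (k+1) le_top).intervalIntegrable _ _
  have key := intervalIntegral.integral_mul_deriv_eq_deriv_mul hu hv hu' hv'
  have hbd : hfun (k+1) ((m:ℝ)*π) * iteratedDeriv k (phi t) π
      - hfun (k+1) ((m:ℝ)*0) * iteratedDeriv k (phi t) 0 = 0 := by
    rcases Nat.even_or_odd k with hk | hk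
    · have h2 : Odd (k+1) := hk.add_one
      simp [hfun, h2, Real.sin_int_mul_pi]
    · rw [oddDeriv_zero t hk, oddDeriv_pi t hk]; ring
  have comm : (∫ θ in (0:ℝ)..π, iteratedDeriv (k+1) (phi t) θ * hfun (k+1) ((m:ℝ)*θ))
      = ∫ θ in (0:ℝ)..π, hfun (k+1) ((m:ℝ)*θ) * iteratedDeriv (k+1) (phi t) θ := by
    simp_rw [mul_comm]
  rw [comm, key, hbd]
  rw [show (∫ x in (0:ℝ)..π, (-1:ℝ)^k * (m:ℝ) * hfun k ((m:ℝ)*x) * iteratedDeriv k (phi t) x)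
      = (-1:ℝ)^k * (m:ℝ) * ∫ x in (0:ℝ)..π, iteratedDeriv k (phi t) x * hfun k ((m:ℝ)*x) by
    rw [← intervalIntegral.integral_const_mul]
    congr 1; funext x; ring]
  ring


/-- Integration-by-parts representation of G(m,t) (Lemma 2.3). -/
theorem Gker_repr (k : ℕ) (m : ℤ) (hm : m ≠ 0) (t : ℝ) (ht : 0 < t) :
    Gker m t =
      ((-1 : ℝ) ^ ((k + 1) / 2) / (Real.pi * (m : ℝ) ^ k)) *
        ∫ θ in (0:ℝ)..Real.pi, iteratedDeriv k (phi t) θ * hfun k ((m : ℝ) * θ) := by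
  induction k with
  | zero => simp [Gker, hfun]
  | succ k ih =>
    have hm' : (m:ℝ) ≠ 0 := Int.cast_ne_zero.mpr hm
    have hπ : (Real.pi) ≠ 0 := Real.pi_ne_zero
    have hmod : ((k+1+1)/2 + (k+1)) % 2 = ((k+1)/2) % 2 := by
      rcases Nat.even_or_odd' k with ⟨j, hj | hj⟩ <;> subst hj <;> omega
    have hE : (-1:ℝ)^((k+1+1)/2) * (-1:ℝ)^(k+1) = (-1:ℝ)^((k+1)/2) := by
      rw [← pow_add]; exact neg_one_pow_congr' hmod
    have hcoef : (-1:ℝ)^((k+1+1)/2) / (Real.pi * (m:ℝ)^(k+1)) * ((-1:ℝ)^(k+1) * (m:ℝ))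
        = (-1:ℝ)^((k+1)/2) / (Real.pi * (m:ℝ)^k) := by
      rw [pow_succ, ← hE]
      field_simp
    rw [ih, ibp t k m, ← hcoef]
    ring
end
end

section
/- Let k ∈ ℕ, k ≥ 1. Then sup_{t ∈ (0,∞)} ∫_0^π |∂_θ^k φ_t(θ)| θ^{k-1} dθ < ∞. -/
open MeasureTheory Set
open scoped ENNReal NNReal Real

noncomputable section

namespace PhiAux

abbrev Ent := ℝ × ℕ × ℕ × ℕ

def mono (e : Ent) (t θ : ℝ) : ℝ :=
  e.1 * t ^ e.2.1 * Real.sin θ ^ e.2.2.1 * Real.cos θ ^ e.2.2.2 * phi t θ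

def evalL (L : List Ent) (t θ : ℝ) : ℝ := (L.map fun e => mono e t θ).sum

def stepE (e : Ent) : List Ent :=
  [(e.1 * (e.2.2.1 : ℝ), e.2.1, e.2.2.1 - 1, e.2.2.2 + 1),
   (-(e.1 * (e.2.2.2 : ℝ)), e.2.1, e.2.2.1 + 1, e.2.2.2 - 1),
   (-(2 * e.1), e.2.1 + 1, e.2.2.1 + 1, e.2.2.2)]

def step (L : List Ent) : List Ent := L.flatMap stepE

lemma hasDerivAt_phi (t θ : ℝ) :
    HasDerivAt (phi t) (-2 * t * Real.sin θ * phi t θ) θ := by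
  have h1 : HasDerivAt (fun θ : ℝ => -2 * t * (1 - Real.cos θ)) (-2 * t * Real.sin θ) θ := by
    have := ((hasDerivAt_const θ (1:ℝ)).sub (Real.hasDerivAt_cos θ)).const_mul (-2 * t)
    exact this.congr_deriv (by ring)
  have := h1.exp
  refine this.congr_deriv ?_
  unfold phi; ring

lemma evalL_nil (t θ : ℝ) : evalL [] t θ = 0 := rfl
lemma evalL_cons (e : Ent) (L : List Ent) (t θ : ℝ) :
    evalL (e :: L) t θ = mono e t θ + evalL L t θ := by simp [evalL]
lemma evalL_append (L₁ L₂ : List Ent) (t θ : ℝ) :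
    evalL (L₁ ++ L₂) t θ = evalL L₁ t θ + evalL L₂ t θ := by simp [evalL]

lemma hasDerivAt_mono (e : Ent) (t θ : ℝ) :
    HasDerivAt (fun θ => mono e t θ) (evalL (stepE e) t θ) θ := by
  obtain ⟨c, j, m, b⟩ := e
  have hfun : (fun θ => mono (c, j, m, b) t θ)
      = (fun θ => (c * t ^ j) * ((Real.sin θ ^ m * Real.cos θ ^ b) * phi t θ)) := by
    funext x; simp [mono]; ring
  rw [hfun]
  have h := ((((Real.hasDerivAt_sin θ).pow m).mul ((Real.hasDerivAt_cos θ).pow b)).mul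
    (hasDerivAt_phi t θ)).const_mul (c * t ^ j)
  refine h.congr_deriv ?_
  simp [evalL, stepE, mono]
  ring

lemma hasDerivAt_evalL (L : List Ent) (t θ : ℝ) :
    HasDerivAt (fun θ => evalL L t θ) (evalL (step L) t θ) θ := by
  induction L with
  | nil => simpa [evalL, step] using hasDerivAt_const θ (0:ℝ)
  | cons e L ih =>
    have h := (hasDerivAt_mono e t θ).add ih
    have h1 : (fun θ => evalL (e :: L) t θ) = fun θ => mono e t θ + evalL L t θ := by
      funext x; exact evalL_cons e L t x
    have h2 : evalL (step (e :: L)) t θ = evalL (stepE e) t θ + evalL (step L) t θ := by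
      rw [show step (e :: L) = stepE e ++ step L from rfl, evalL_append]
    rw [h1, h2]; exact h

lemma rep (n : ℕ) : ∃ L : List Ent,
    (∀ e ∈ L, 1 ≤ e.2.1 ∧ 2 * e.2.1 ≤ e.2.2.1 + (n + 1)) ∧
    ∀ t θ : ℝ, iteratedDeriv (n + 1) (phi t) θ = evalL L t θ := by
  induction n with
  | zero =>
    refine ⟨[(-2, 1, 1, 0)], ?_, fun t θ => ?_⟩
    · intro e he
      simp only [List.mem_singleton] at he
      subst he
      norm_num
    rw [iteratedDeriv_one, (hasDerivAt_phi t θ).deriv]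
    simp [evalL, mono]
  | succ n ih =>
    obtain ⟨L, hL, hrep⟩ := ih
    refine ⟨step L, ?_, fun t θ => ?_⟩
    · intro e' he'
      rw [step, List.mem_flatMap] at he'
      obtain ⟨e, heL, he'⟩ := he'
      obtain ⟨hj, hjm⟩ := hL e heL
      obtain ⟨c, j, m, b⟩ := e
      simp only [stepE, List.mem_cons, List.not_mem_nil, or_false] at he'
      simp only [] at hj hjm
      rcases he' with rfl | rfl | rfl <;>
        exact ⟨by simp <;> omega, by simp <;> omega⟩
    · rw [iteratedDeriv_succ]
      have h1 : iteratedDeriv (n + 1) (phi t) = fun θ => evalL L t θ := funext (hrep t)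
      rw [h1, (hasDerivAt_evalL L t θ).deriv]

lemma pow_le_factorial_mul_exp {u : ℝ} (hu : 0 ≤ u) (n : ℕ) :
    u ^ n ≤ (n.factorial : ℝ) * Real.exp u := by
  have h1 : u ^ n / (n.factorial : ℝ) ≤ Real.exp u := by
    calc u ^ n / (n.factorial : ℝ)
        ≤ ∑ i ∈ Finset.range (n + 1), u ^ i / (i.factorial : ℝ) := by
          refine Finset.single_le_sum (f := fun i => u ^ i / (i.factorial : ℝ)) ?_ ?_
          · intro i _
            positivity
          · simp
      _ ≤ Real.exp u := Real.sum_le_exp_of_nonneg hu _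
  have hn : (0:ℝ) < (n.factorial : ℝ) := by positivity
  calc u ^ n = (n.factorial : ℝ) * (u ^ n / (n.factorial : ℝ)) := by field_simp
    _ ≤ (n.factorial : ℝ) * Real.exp u := by
        exact mul_le_mul_of_nonneg_left h1 hn.le

lemma one_sub_cos_ge {θ : ℝ} (h0 : 0 ≤ θ) (hπ : θ ≤ π) :
    2 / π ^ 2 * θ ^ 2 ≤ 1 - Real.cos θ := by
  have hs : θ / π ≤ Real.sin (θ / 2) := by
    have h := Real.mul_le_sin (x := θ / 2) (by linarith) (by linarith)
    calc θ / π = 2 / π * (θ / 2) := by field_simp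
      _ ≤ Real.sin (θ / 2) := h
  have hθπ : 0 ≤ θ / π := div_nonneg h0 Real.pi_pos.le
  have hsq : (θ / π) ^ 2 ≤ Real.sin (θ / 2) ^ 2 := by
    exact pow_le_pow_left₀ hθπ hs 2
  have hcos : Real.sin (θ / 2) ^ 2 = (1 - Real.cos θ) / 2 := by
    have h := Real.cos_two_mul (θ / 2)
    have h2 := Real.sin_sq_add_cos_sq (θ / 2)
    rw [show 2 * (θ / 2) = θ by ring] at h
    linarith
  have hpi : (0:ℝ) < π ^ 2 := by positivity
  rw [hcos] at hsq
  rw [div_pow] at hsq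
  rw [div_le_div_iff₀ hpi (by norm_num : (0:ℝ) < 2)] at hsq
  rw [div_mul_eq_mul_div, div_le_iff₀ hpi]
  linarith

lemma phi_le {t θ : ℝ} (ht : 0 ≤ t) (h0 : 0 ≤ θ) (hπ : θ ≤ π) :
    phi t θ ≤ Real.exp (-(4 / π ^ 2) * t * θ ^ 2) := by
  unfold phi
  apply Real.exp_le_exp.2
  have h := one_sub_cos_ge h0 hπ
  have h2 : 2 * t * (2 / π ^ 2 * θ ^ 2) ≤ 2 * t * (1 - Real.cos θ) :=
    mul_le_mul_of_nonneg_left h (by linarith)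
  calc -2 * t * (1 - Real.cos θ) = -(2 * t * (1 - Real.cos θ)) := by ring
    _ ≤ -(2 * t * (2 / π ^ 2 * θ ^ 2)) := neg_le_neg h2
    _ = -(4 / π ^ 2) * t * θ ^ 2 := by ring

lemma key (n : ℕ) {t θ : ℝ} (ht : 0 ≤ t) (h0 : 0 ≤ θ) :
    (t * θ ^ 2) ^ n * Real.exp (-(4 / π ^ 2) * t * θ ^ 2)
      ≤ (n.factorial : ℝ) * (π ^ 2 / 2) ^ n * Real.exp (-(2 / π ^ 2) * t * θ ^ 2) := by
  set u := 2 / π ^ 2 * t * θ ^ 2 with hu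
  have hπ : (π:ℝ) ≠ 0 := Real.pi_ne_zero
  have hu0 : 0 ≤ u := by positivity
  have htθ : t * θ ^ 2 = π ^ 2 / 2 * u := by rw [hu]; field_simp
  have hexp : Real.exp (-(4 / π ^ 2) * t * θ ^ 2) = Real.exp (-u) * Real.exp (-u) := by
    rw [← Real.exp_add]; congr 1; rw [hu]; ring
  have hrhs : -(2 / π ^ 2) * t * θ ^ 2 = -u := by rw [hu]; ring
  rw [htθ, hexp, hrhs, mul_pow]
  have h1 : u ^ n ≤ (n.factorial : ℝ) * Real.exp u := pow_le_factorial_mul_exp hu0 n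
  have hE : Real.exp u * Real.exp (-u) = 1 := by rw [← Real.exp_add]; simp
  calc (π ^ 2 / 2) ^ n * u ^ n * (Real.exp (-u) * Real.exp (-u))
      ≤ (π ^ 2 / 2) ^ n * ((n.factorial : ℝ) * Real.exp u) * (Real.exp (-u) * Real.exp (-u)) := by
        gcongr
    _ = (n.factorial : ℝ) * (π ^ 2 / 2) ^ n * ((Real.exp u * Real.exp (-u)) * Real.exp (-u)) := by
        ring
    _ = (n.factorial : ℝ) * (π ^ 2 / 2) ^ n * Real.exp (-u) := by rw [hE]; ring

/-- The per-entry constant. -/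
def CB (k : ℕ) (e : Ent) : ℝ :=
  |e.1| * π ^ (e.2.2.1 + k - 2 * e.2.1) * ((e.2.1 - 1).factorial : ℝ) *
    (π ^ 2 / 2) ^ (e.2.1 - 1)

lemma CB_nonneg (k : ℕ) (e : Ent) : 0 ≤ CB k e := by
  unfold CB; positivity

lemma entry_bound (k : ℕ) (e : Ent) {t θ : ℝ} (hj : 1 ≤ e.2.1)
    (hjm : 2 * e.2.1 ≤ e.2.2.1 + k) (hk : 1 ≤ k) (ht : 0 < t)
    (h0 : 0 ≤ θ) (hπ : θ ≤ π) :
    |mono e t θ| * θ ^ (k - 1)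
      ≤ CB k e * (t * θ * Real.exp (-(2 / π ^ 2) * t * θ ^ 2)) := by
  obtain ⟨c, j, m, b⟩ := e
  simp only [] at hj hjm
  have hsin0 : 0 ≤ Real.sin θ := Real.sin_nonneg_of_nonneg_of_le_pi h0 hπ
  have hφ : 0 < phi t θ := Real.exp_pos _
  -- Step A : |mono| ≤ |c| * t^j * θ^m * exp(-(4/π²) t θ²)
  have hA : |mono (c, j, m, b) t θ|
      ≤ |c| * t ^ j * θ ^ m * Real.exp (-(4 / π ^ 2) * t * θ ^ 2) := by
    have h1 : |mono (c, j, m, b) t θ|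
        = |c| * t ^ j * Real.sin θ ^ m * |Real.cos θ| ^ b * phi t θ := by
      simp only [mono, abs_mul, abs_pow]
      rw [abs_of_pos hφ, abs_of_pos ht, abs_of_nonneg hsin0]
    rw [h1]
    have hsm : Real.sin θ ^ m ≤ θ ^ m :=
      pow_le_pow_left₀ hsin0 (Real.sin_le h0) m
    have hcb : |Real.cos θ| ^ b ≤ 1 :=
      pow_le_one₀ (abs_nonneg _) (Real.abs_cos_le_one θ)
    have hφ2 : phi t θ ≤ Real.exp (-(4 / π ^ 2) * t * θ ^ 2) := phi_le ht.le h0 hπ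
    calc |c| * t ^ j * Real.sin θ ^ m * |Real.cos θ| ^ b * phi t θ
        ≤ |c| * t ^ j * θ ^ m * 1 * Real.exp (-(4 / π ^ 2) * t * θ ^ 2) := by
          gcongr <;> first | assumption | positivity | exact hφ.le
      _ = |c| * t ^ j * θ ^ m * Real.exp (-(4 / π ^ 2) * t * θ ^ 2) := by ring
  -- Step B : combine with θ^(k-1)
  have hθpow : θ ^ m * θ ^ (k - 1) = θ ^ (2 * j - 1) * θ ^ (m + k - 2 * j) := by
    rw [← pow_add, ← pow_add]
    congr 1
    omega
  have hB1 : θ ^ (m + k - 2 * j) ≤ π ^ (m + k - 2 * j) :=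
    pow_le_pow_left₀ h0 hπ _
  have hsplit : t ^ j * θ ^ (2 * j - 1) = (t * θ) * (t * θ ^ 2) ^ (j - 1) := by
    obtain ⟨i, rfl⟩ : ∃ i, j = i + 1 := ⟨j - 1, by omega⟩
    have h2j : 2 * (i + 1) - 1 = i * 2 + 1 := by omega
    rw [h2j, Nat.add_sub_cancel, mul_pow, pow_succ, pow_succ, pow_mul]
    ring
  have hkey := key (j - 1) ht.le h0
  calc |mono (c, j, m, b) t θ| * θ ^ (k - 1)
      ≤ |c| * t ^ j * θ ^ m * Real.exp (-(4 / π ^ 2) * t * θ ^ 2) * θ ^ (k - 1) := by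
        gcongr <;> positivity
    _ = |c| * (θ ^ m * θ ^ (k - 1)) * (t ^ j * Real.exp (-(4 / π ^ 2) * t * θ ^ 2)) := by
        ring
    _ = |c| * (θ ^ (2 * j - 1) * θ ^ (m + k - 2 * j)) *
          (t ^ j * Real.exp (-(4 / π ^ 2) * t * θ ^ 2)) := by rw [hθpow]
    _ ≤ |c| * (θ ^ (2 * j - 1) * π ^ (m + k - 2 * j)) *
          (t ^ j * Real.exp (-(4 / π ^ 2) * t * θ ^ 2)) := by
        gcongr <;> positivity
    _ = |c| * π ^ (m + k - 2 * j) *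
          ((t ^ j * θ ^ (2 * j - 1)) * Real.exp (-(4 / π ^ 2) * t * θ ^ 2)) := by ring
    _ = |c| * π ^ (m + k - 2 * j) *
          ((t * θ) * ((t * θ ^ 2) ^ (j - 1) * Real.exp (-(4 / π ^ 2) * t * θ ^ 2))) := by
        rw [hsplit]; ring
    _ ≤ |c| * π ^ (m + k - 2 * j) *
          ((t * θ) * (((j - 1).factorial : ℝ) * (π ^ 2 / 2) ^ (j - 1) *
            Real.exp (-(2 / π ^ 2) * t * θ ^ 2))) := by
        gcongr <;> positivity
    _ = CB k (c, j, m, b) * (t * θ * Real.exp (-(2 / π ^ 2) * t * θ ^ 2)) := by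
        simp only [CB]
        ring

lemma list_bound (k : ℕ) (L : List Ent)
    (hL : ∀ e ∈ L, 1 ≤ e.2.1 ∧ 2 * e.2.1 ≤ e.2.2.1 + k) (hk : 1 ≤ k)
    {t θ : ℝ} (ht : 0 < t) (h0 : 0 ≤ θ) (hπ : θ ≤ π) :
    |evalL L t θ| * θ ^ (k - 1)
      ≤ (L.map (CB k)).sum * (t * θ * Real.exp (-(2 / π ^ 2) * t * θ ^ 2)) := by
  induction L with
  | nil => simp [evalL]
  | cons e L ih =>
    have he := hL e List.mem_cons_self
    have hL' : ∀ e ∈ L, 1 ≤ e.2.1 ∧ 2 * e.2.1 ≤ e.2.2.1 + k := fun e' he' =>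
      hL e' (List.mem_cons_of_mem _ he')
    have h1 : |evalL (e :: L) t θ| ≤ |mono e t θ| + |evalL L t θ| := by
      rw [evalL_cons]; exact abs_add_le _ _
    have h2 : |evalL (e :: L) t θ| * θ ^ (k - 1)
        ≤ |mono e t θ| * θ ^ (k - 1) + |evalL L t θ| * θ ^ (k - 1) := by
      rw [← add_mul]
      exact mul_le_mul_of_nonneg_right h1 (by positivity)
    have h3 := entry_bound k e he.1 he.2 hk ht h0 hπ
    have h4 := ih hL'
    calc |evalL (e :: L) t θ| * θ ^ (k - 1)
        ≤ |mono e t θ| * θ ^ (k - 1) + |evalL L t θ| * θ ^ (k - 1) := h2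
      _ ≤ CB k e * (t * θ * Real.exp (-(2 / π ^ 2) * t * θ ^ 2))
          + (L.map (CB k)).sum * (t * θ * Real.exp (-(2 / π ^ 2) * t * θ ^ 2)) := by
          exact add_le_add h3 h4
      _ = ((e :: L).map (CB k)).sum * (t * θ * Real.exp (-(2 / π ^ 2) * t * θ ^ 2)) := by
          simp [add_mul]

lemma continuous_phi (t : ℝ) : Continuous (phi t) := by
  unfold phi; fun_prop

lemma continuous_mono (e : Ent) (t : ℝ) : Continuous (fun θ => mono e t θ) := by
  have := continuous_phi t
  unfold mono; fun_prop

lemma continuous_evalL (L : List Ent) (t : ℝ) : Continuous (fun θ => evalL L t θ) := by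
  induction L with
  | nil => simpa [evalL] using continuous_const
  | cons e L ih =>
    have : (fun θ => evalL (e :: L) t θ) = fun θ => mono e t θ + evalL L t θ := by
      funext x; exact evalL_cons e L t x
    rw [this]
    exact (continuous_mono e t).add ih

lemma gauss_integral {t : ℝ} (ht : 0 < t) :
    (∫ θ in (0:ℝ)..π, t * θ * Real.exp (-(2 / π ^ 2) * t * θ ^ 2)) ≤ π ^ 2 / 4 := by
  have hπ : (π:ℝ) ≠ 0 := Real.pi_ne_zero
  set F : ℝ → ℝ := fun x => -(π ^ 2 / 4) * Real.exp (-(2 / π ^ 2) * t * x ^ 2) with hF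
  have hder : ∀ x ∈ Set.uIcc (0:ℝ) π, HasDerivAt F
      (t * x * Real.exp (-(2 / π ^ 2) * t * x ^ 2)) x := by
    intro x _
    have h1 : HasDerivAt (fun y : ℝ => -(2 / π ^ 2 * t * y ^ 2))
        (-(2 / π ^ 2 * t * (2 * x))) x := by
      have h := (hasDerivAt_pow 2 x).const_mul (-(2 / π ^ 2) * t)
      norm_num at h
      exact h
    have hfun : F = fun y : ℝ => -(π ^ 2 / 4) * Real.exp (-(2 / π ^ 2 * t * y ^ 2)) := by
      funext y
      simp only [hF]
      ring_nf
    rw [hfun]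
    have h2 := h1.exp.const_mul (-(π ^ 2 / 4))
    refine h2.congr_deriv ?_
    rw [show -(2 / π ^ 2) * t * x ^ 2 = -(2 / π ^ 2 * t * x ^ 2) by ring]
    field_simp
    ring
  have hcont : Continuous fun x : ℝ => t * x * Real.exp (-(2 / π ^ 2) * t * x ^ 2) := by
    fun_prop
  have hint := intervalIntegral.integral_eq_sub_of_hasDerivAt hder
    (hcont.intervalIntegrable 0 π)
  rw [hint]
  have h0 : F 0 = -(π ^ 2 / 4) := by simp [hF]
  have hπ2 : -(π ^ 2 / 4) * Real.exp (-(2 / π ^ 2) * t * π ^ 2) ≤ 0 := by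
    have := Real.exp_pos (-(2 / π ^ 2) * t * π ^ 2)
    nlinarith [Real.pi_pos]
  rw [h0]
  simp only [hF]
  linarith

end PhiAux


/-- Proposition 2.4: the supremum over t > 0 is finite. -/
theorem sup_integral_abs_deriv_phi_lt_top (k : ℕ) (hk : 1 ≤ k) :
    ∃ C : ℝ, ∀ t : ℝ, 0 < t →
      (∫ θ in (0:ℝ)..Real.pi, |iteratedDeriv k (phi t) θ| * θ ^ (k - 1)) ≤ C := by
  obtain ⟨L, hL, hrep⟩ := PhiAux.rep (k - 1)
  rw [show k - 1 + 1 = k from by omega] at hL hrep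
  set D : ℝ := (L.map (PhiAux.CB k)).sum with hD
  have hD0 : 0 ≤ D := by
    apply List.sum_nonneg
    intro x hx
    obtain ⟨e, _, rfl⟩ := List.mem_map.1 hx
    exact PhiAux.CB_nonneg k e
  refine ⟨D * (π ^ 2 / 4), fun t ht => ?_⟩
  have hcont1 : Continuous fun θ : ℝ => |PhiAux.evalL L t θ| * θ ^ (k - 1) :=
    (PhiAux.continuous_evalL L t).abs.mul (continuous_pow (k - 1))
  have hcont2 : Continuous fun θ : ℝ => D * (t * θ * Real.exp (-(2 / π ^ 2) * t * θ ^ 2)) := by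
    fun_prop
  have hstep1 : (∫ θ in (0:ℝ)..π, |iteratedDeriv k (phi t) θ| * θ ^ (k - 1))
      = ∫ θ in (0:ℝ)..π, |PhiAux.evalL L t θ| * θ ^ (k - 1) := by
    apply intervalIntegral.integral_congr
    intro θ _
    simp only [hrep t θ]
  have hstep2 : (∫ θ in (0:ℝ)..π, |PhiAux.evalL L t θ| * θ ^ (k - 1))
      ≤ ∫ θ in (0:ℝ)..π, D * (t * θ * Real.exp (-(2 / π ^ 2) * t * θ ^ 2)) := by
    apply intervalIntegral.integral_mono_on Real.pi_pos.le
      (hcont1.intervalIntegrable 0 π) (hcont2.intervalIntegrable 0 π)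
    intro θ hθ
    exact PhiAux.list_bound k L hL hk ht hθ.1 hθ.2
  have hstep3 : (∫ θ in (0:ℝ)..π, D * (t * θ * Real.exp (-(2 / π ^ 2) * t * θ ^ 2)))
      = D * ∫ θ in (0:ℝ)..π, t * θ * Real.exp (-(2 / π ^ 2) * t * θ ^ 2) := by
    exact intervalIntegral.integral_const_mul D _
  calc (∫ θ in (0:ℝ)..π, |iteratedDeriv k (phi t) θ| * θ ^ (k - 1))
      ≤ ∫ θ in (0:ℝ)..π, D * (t * θ * Real.exp (-(2 / π ^ 2) * t * θ ^ 2)) := by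
        rw [hstep1]; exact hstep2
    _ = D * ∫ θ in (0:ℝ)..π, t * θ * Real.exp (-(2 / π ^ 2) * t * θ ^ 2) := hstep3
    _ ≤ D * (π ^ 2 / 4) := mul_le_mul_of_nonneg_left (PhiAux.gauss_integral ht) hD0
end
end

section
/- Let k ∈ ℕ, k ≥ 1. There exists a constant C > 0 such that for every z ∈ ℝ and every t > 0, |∫_0^π ∂_θ^k φ_t(θ) θ^{k-1} sin(zθ) dθ| ≤ C. -/
open MeasureTheory Set
open scoped ENNReal NNReal Real

noncomputable section

abbrev XTerm := ℝ × ℕ × ℕ × ℕ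

/-- value of an elementary term `c * t^l * sin^a θ * cos^b θ * φ_t(θ)` -/
def Tm (p : XTerm) (t θ : ℝ) : ℝ :=
  p.1 * t ^ p.2.1 * Real.sin θ ^ p.2.2.1 * Real.cos θ ^ p.2.2.2 * phi t θ

def stepL (L : List XTerm) : List XTerm :=
  L.flatMap fun p =>
    [((p.2.2.1 : ℝ) * p.1, p.2.1, p.2.2.1 - 1, p.2.2.2 + 1),
     (-((p.2.2.2 : ℝ) * p.1), p.2.1, p.2.2.1 + 1, p.2.2.2 - 1),
     (-2 * p.1, p.2.1 + 1, p.2.2.1 + 1, p.2.2.2)]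

def FF (L : List XTerm) (t θ : ℝ) : ℝ := (L.map fun p => Tm p t θ).sum

lemma hasDerivAt_phi (t θ : ℝ) :
    HasDerivAt (phi t) (-2 * t * Real.sin θ * phi t θ) θ := by
  have h1 : HasDerivAt (fun x : ℝ => -2 * t * (1 - Real.cos x)) (-2 * t * Real.sin θ) θ := by
    have h := ((Real.hasDerivAt_cos θ).const_sub 1).const_mul (-2 * t)
    convert h using 1
    · rfl
    · rfl
    ring
  have h2 := h1.exp
  convert h2 using 1
  · rfl
  unfold phi; ring

lemma hasDerivAt_Tm (p : XTerm) (t θ : ℝ) :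
    HasDerivAt (fun x => Tm p t x)
      (Tm ((p.2.2.1 : ℝ) * p.1, p.2.1, p.2.2.1 - 1, p.2.2.2 + 1) t θ +
       Tm (-((p.2.2.2 : ℝ) * p.1), p.2.1, p.2.2.1 + 1, p.2.2.2 - 1) t θ +
       Tm (-2 * p.1, p.2.1 + 1, p.2.2.1 + 1, p.2.2.2) t θ) θ := by
  obtain ⟨c, l, a, b⟩ := p
  have hs : HasDerivAt (fun x => Real.sin x ^ a)
      ((a : ℝ) * Real.sin θ ^ (a - 1) * Real.cos θ) θ := (Real.hasDerivAt_sin θ).pow (n := a)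
  have hc : HasDerivAt (fun x => Real.cos x ^ b)
      ((b : ℝ) * Real.cos θ ^ (b - 1) * (-Real.sin θ)) θ := (Real.hasDerivAt_cos θ).pow (n := b)
  have h := ((hs.mul hc).mul (hasDerivAt_phi t θ)).const_mul (c * t ^ l)
  convert h using 1
  · rfl
  · rfl
  · funext x; simp only [Tm, Pi.mul_apply]; ring
  · simp only [Tm, Pi.mul_apply]; ring

lemma hasDerivAt_FF (L : List XTerm) (t θ : ℝ) :
    HasDerivAt (fun x => FF L t x) (FF (stepL L) t θ) θ := by
  induction L with
  | nil => simpa [FF, stepL] using hasDerivAt_const θ (0 : ℝ)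
  | cons p L ih =>
    have h := (hasDerivAt_Tm p t θ).add ih
    have hfun : (fun x => FF (p :: L) t x) = fun x => Tm p t x + FF L t x := by
      funext x; simp [FF]
    have hder : FF (stepL (p :: L)) t θ =
        Tm ((p.2.2.1 : ℝ) * p.1, p.2.1, p.2.2.1 - 1, p.2.2.2 + 1) t θ +
          Tm (-((p.2.2.2 : ℝ) * p.1), p.2.1, p.2.2.1 + 1, p.2.2.2 - 1) t θ +
          Tm (-2 * p.1, p.2.1 + 1, p.2.2.1 + 1, p.2.2.2) t θ + FF (stepL L) t θ := by
      simp only [stepL, List.flatMap_cons, FF, List.map_append, List.sum_append,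
        List.map_cons, List.sum_cons, List.map_nil, List.sum_nil]
      ring
    rw [hfun, hder]
    exact h

lemma continuous_Tm (p : XTerm) (t : ℝ) : Continuous fun θ => Tm p t θ := by
  unfold Tm phi; fun_prop

lemma continuous_FF (L : List XTerm) (t : ℝ) : Continuous fun θ => FF L t θ := by
  induction L with
  | nil => simpa [FF] using continuous_const
  | cons p L ih =>
    have h := (continuous_Tm p t).add ih
    have hfun : (fun θ => FF (p :: L) t θ) = fun θ => Tm p t θ + FF L t θ := by
      funext x; simp [FF]
    rw [hfun]
    exact h

lemma rep (k : ℕ) (hk : 1 ≤ k) : ∃ L : List XTerm,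
    (∀ p ∈ L, 1 ≤ p.2.1 ∧ p.2.1 ≤ k ∧ 2 * p.2.1 ≤ p.2.2.1 + k) ∧
    ∀ t θ : ℝ, iteratedDeriv k (phi t) θ = FF L t θ := by
  induction k with
  | zero => omega
  | succ k ih =>
    rcases Nat.eq_zero_or_pos k with hk0 | hk1
    · subst hk0
      refine ⟨[((-2 : ℝ), 1, 1, 0)], ?_, ?_⟩
      · rintro p hp
        simp only [List.mem_singleton] at hp
        subst hp; exact ⟨le_refl _, le_refl _, by norm_num⟩
      · intro t θ
        rw [iteratedDeriv_one, (hasDerivAt_phi t θ).deriv]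
        simp only [FF, Tm, List.map_cons, List.map_nil, List.sum_cons, List.sum_nil]
        ring
    · obtain ⟨L, hcon, hval⟩ := ih hk1
      refine ⟨stepL L, ?_, ?_⟩
      · intro p hp
        rw [stepL, List.mem_flatMap] at hp
        obtain ⟨q, hq, hpq⟩ := hp
        obtain ⟨h1, h2, h3⟩ := hcon q hq
        simp only [List.mem_cons, List.mem_singleton, List.not_mem_nil, or_false] at hpq
        rcases hpq with rfl | rfl | rfl <;> simp only [] <;> omega
      · intro t θ
        rw [iteratedDeriv_succ]
        have hfe : iteratedDeriv k (phi t) = fun x => FF L t x := funext (hval t)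
        rw [hfe]
        exact (hasDerivAt_FF L t θ).deriv

lemma exp_poly_bound (n : ℕ) (y : ℝ) (hy : 0 ≤ y) :
    y ^ n * Real.exp (-y) ≤ ((n.factorial : ℝ)) := by
  have h := Real.pow_div_factorial_le_exp y hy n
  have hf : (0:ℝ) < ((n.factorial : ℝ)) := by exact_mod_cast Nat.factorial_pos n
  rw [div_le_iff₀ hf] at h
  calc y ^ n * Real.exp (-y) ≤ Real.exp y * ((n.factorial : ℝ)) * Real.exp (-y) := by
        exact mul_le_mul_of_nonneg_right h (Real.exp_nonneg _)
    _ = ((n.factorial : ℝ)) * (Real.exp y * Real.exp (-y)) := by ring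
    _ = ((n.factorial : ℝ)) := by rw [← Real.exp_add]; simp

lemma hD (l : ℕ) (hl : 1 ≤ l) (t θ : ℝ) (ht : 0 < t) (hθ0 : 0 ≤ θ) :
    t ^ l * θ ^ (2 * l - 1) * Real.exp (-(4 * t * θ ^ 2 / Real.pi ^ 2)) ≤
      ((l - 1).factorial : ℝ) * (Real.pi ^ 2 / 2) ^ (l - 1) *
        (t * θ * Real.exp (-(2 * t * θ ^ 2 / Real.pi ^ 2))) := by
  obtain ⟨m, rfl⟩ : ∃ m, l = m + 1 := ⟨l - 1, by omega⟩
  simp only [Nat.add_sub_cancel]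
  have hπ : Real.pi ≠ 0 := Real.pi_ne_zero
  have e1 : (2 * t * θ ^ 2 / Real.pi ^ 2) * (Real.pi ^ 2 / 2) = t * θ ^ 2 := by
    field_simp
  have e2 : Real.exp (-(2 * t * θ ^ 2 / Real.pi ^ 2)) * Real.exp (-(2 * t * θ ^ 2 / Real.pi ^ 2))
      = Real.exp (-(4 * t * θ ^ 2 / Real.pi ^ 2)) := by
    rw [← Real.exp_add]; ring_nf
  have hy : (0:ℝ) ≤ 2 * t * θ ^ 2 / Real.pi ^ 2 := by positivity
  calc t ^ (m + 1) * θ ^ (2 * (m + 1) - 1) * Real.exp (-(4 * t * θ ^ 2 / Real.pi ^ 2))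
      = (t * θ ^ 2) ^ m * (t * θ) * Real.exp (-(4 * t * θ ^ 2 / Real.pi ^ 2)) := by
        rw [show 2 * (m + 1) - 1 = 2 * m + 1 by omega, mul_pow, ← pow_mul]
        ring
    _ = ((2 * t * θ ^ 2 / Real.pi ^ 2) ^ m * Real.exp (-(2 * t * θ ^ 2 / Real.pi ^ 2))) *
          ((Real.pi ^ 2 / 2) ^ m * (t * θ * Real.exp (-(2 * t * θ ^ 2 / Real.pi ^ 2)))) := by
        rw [← e2, ← e1, mul_pow]; ring
    _ ≤ ((m.factorial : ℝ)) * ((Real.pi ^ 2 / 2) ^ m * (t * θ * Real.exp (-(2 * t * θ ^ 2 / Real.pi ^ 2)))) := by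
        apply mul_le_mul_of_nonneg_right (exp_poly_bound m _ hy)
        positivity
    _ = ((m.factorial : ℝ)) * (Real.pi ^ 2 / 2) ^ m * (t * θ * Real.exp (-(2 * t * θ ^ 2 / Real.pi ^ 2))) := by
        ring

lemma phi_le (t θ : ℝ) (ht : 0 < t) (hθ0 : 0 ≤ θ) (hθπ : θ ≤ Real.pi) :
    phi t θ ≤ Real.exp (-(4 * t * θ ^ 2 / Real.pi ^ 2)) := by
  have hcos := Real.cos_le_one_sub_mul_cos_sq (x := θ) (by rwa [abs_of_nonneg hθ0])
  have hcc : 2 * θ ^ 2 / Real.pi ^ 2 ≤ 1 - Real.cos θ := by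
    have h2 : 2 / Real.pi ^ 2 * θ ^ 2 = 2 * θ ^ 2 / Real.pi ^ 2 := by ring
    linarith
  have h3 := mul_le_mul_of_nonneg_left hcc (by positivity : (0:ℝ) ≤ 2 * t)
  have h4 : 2 * t * (2 * θ ^ 2 / Real.pi ^ 2) = 4 * t * θ ^ 2 / Real.pi ^ 2 := by ring
  rw [phi, Real.exp_le_exp]
  linarith

lemma term_bound (k : ℕ) (hk : 1 ≤ k) (p : XTerm)
    (h1 : 1 ≤ p.2.1) (h3 : 2 * p.2.1 ≤ p.2.2.1 + k)
    (z t θ : ℝ) (ht : 0 < t) (hθ : θ ∈ Set.Icc (0:ℝ) Real.pi) :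
    |Tm p t θ * θ ^ (k - 1) * Real.sin (z * θ)| ≤
      |p.1| * Real.pi ^ (p.2.2.1 + k) * ((p.2.1 - 1).factorial : ℝ) * (Real.pi ^ 2 / 2) ^ (p.2.1 - 1) *
        (t * θ * Real.exp (-(2 * t * θ ^ 2 / Real.pi ^ 2))) := by
  obtain ⟨hθ0, hθπ⟩ := hθ
  obtain ⟨c, l, a, b⟩ := p
  simp only at h1 h3 ⊢
  have hphi0 : (0:ℝ) ≤ phi t θ := Real.exp_nonneg _
  have hsin : |Real.sin θ| ≤ θ := by
    rw [abs_of_nonneg (Real.sin_nonneg_of_nonneg_of_le_pi hθ0 hθπ)]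
    exact Real.sin_le hθ0
  have hπ1 : (1:ℝ) ≤ Real.pi := by linarith [Real.pi_gt_three]
  calc |Tm (c, l, a, b) t θ * θ ^ (k - 1) * Real.sin (z * θ)|
      = |c| * t ^ l * |Real.sin θ| ^ a * |Real.cos θ| ^ b * phi t θ * θ ^ (k - 1) *
          |Real.sin (z * θ)| := by
        simp only [Tm, abs_mul, abs_pow, abs_of_nonneg ht.le, abs_of_nonneg hθ0,
          abs_of_nonneg hphi0]
    _ ≤ |c| * t ^ l * θ ^ a * 1 * phi t θ * θ ^ (k - 1) * 1 := by
        gcongr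
        · exact pow_le_one₀ (abs_nonneg _) (Real.abs_cos_le_one θ)
        · exact Real.abs_sin_le_one _
    _ = |c| * t ^ l * θ ^ (a + (k - 1)) * phi t θ := by rw [pow_add]; ring
    _ ≤ |c| * t ^ l * (θ ^ (2 * l - 1) * Real.pi ^ (a + k)) * phi t θ := by
        have h5 : θ ^ (a + (k - 1)) ≤ θ ^ (2 * l - 1) * Real.pi ^ (a + k) := by
          have hsplit : a + (k - 1) = (2 * l - 1) + (a + k - 2 * l) := by omega
          rw [hsplit, pow_add]
          have h6 : θ ^ (a + k - 2 * l) ≤ Real.pi ^ (a + k) :=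
            (pow_le_pow_left₀ hθ0 hθπ _).trans (pow_le_pow_right₀ hπ1 (by omega))
          exact mul_le_mul_of_nonneg_left h6 (pow_nonneg hθ0 _)
        gcongr
    _ ≤ |c| * t ^ l * (θ ^ (2 * l - 1) * Real.pi ^ (a + k)) *
          Real.exp (-(4 * t * θ ^ 2 / Real.pi ^ 2)) := by
        gcongr
        exact phi_le t θ ht hθ0 hθπ
    _ = |c| * Real.pi ^ (a + k) *
          (t ^ l * θ ^ (2 * l - 1) * Real.exp (-(4 * t * θ ^ 2 / Real.pi ^ 2))) := by ring
    _ ≤ |c| * Real.pi ^ (a + k) *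
          (((l - 1).factorial : ℝ) * (Real.pi ^ 2 / 2) ^ (l - 1) *
            (t * θ * Real.exp (-(2 * t * θ ^ 2 / Real.pi ^ 2)))) := by
        apply mul_le_mul_of_nonneg_left (hD l h1 t θ ht hθ0)
        positivity
    _ = |c| * Real.pi ^ (a + k) * ((l - 1).factorial : ℝ) * (Real.pi ^ 2 / 2) ^ (l - 1) *
          (t * θ * Real.exp (-(2 * t * θ ^ 2 / Real.pi ^ 2))) := by ring

lemma sum_bound (k : ℕ) (hk : 1 ≤ k) (z t : ℝ) (ht : 0 < t) (L : List XTerm)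
    (hcon : ∀ p ∈ L, 1 ≤ p.2.1 ∧ p.2.1 ≤ k ∧ 2 * p.2.1 ≤ p.2.2.1 + k) :
    ∀ θ ∈ Set.Icc (0:ℝ) Real.pi,
      |FF L t θ * θ ^ (k - 1) * Real.sin (z * θ)| ≤
        (L.map fun p => |p.1| * Real.pi ^ (p.2.2.1 + k) * ((p.2.1 - 1).factorial : ℝ) *
          (Real.pi ^ 2 / 2) ^ (p.2.1 - 1)).sum * (t * θ * Real.exp (-(2 * t * θ ^ 2 / Real.pi ^ 2))) := by
  induction L with
  | nil => intro θ hθ; simp [FF]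
  | cons p L ih =>
    intro θ hθ
    have h1 := term_bound k hk p (hcon p (by simp)).1 (hcon p (by simp)).2.2 z t θ ht hθ
    have h2 := ih (fun q hq => hcon q (by simp [hq])) θ hθ
    have e : FF (p :: L) t θ * θ ^ (k - 1) * Real.sin (z * θ) =
        Tm p t θ * θ ^ (k - 1) * Real.sin (z * θ) +
          FF L t θ * θ ^ (k - 1) * Real.sin (z * θ) := by
      simp only [FF, List.map_cons, List.sum_cons]; ring
    rw [e, List.map_cons, List.sum_cons, add_mul]
    exact (abs_add_le _ _).trans (add_le_add h1 h2)

lemma intE (t : ℝ) (ht : 0 < t) :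
    ∫ θ in (0:ℝ)..Real.pi, t * θ * Real.exp (-(2 * t * θ ^ 2 / Real.pi ^ 2)) ≤ Real.pi ^ 2 / 4 := by
  have hπ2 : (0:ℝ) < Real.pi ^ 2 := by positivity
  have hF : ∀ θ : ℝ, HasDerivAt (fun x => -(Real.pi ^ 2 / 4) * Real.exp (-(2 * t * x ^ 2 / Real.pi ^ 2)))
      (t * θ * Real.exp (-(2 * t * θ ^ 2 / Real.pi ^ 2))) θ := by
    intro θ
    have hin : HasDerivAt (fun x : ℝ => -(2 * t * x ^ 2 / Real.pi ^ 2)) (-(4 * t * θ / Real.pi ^ 2)) θ := by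
      have h := (((hasDerivAt_pow 2 θ).const_mul (2 * t)).div_const (Real.pi ^ 2)).neg
      convert h using 1
      · rfl
      · rfl
      · rfl
      norm_num; ring
    have h2 := (hin.exp).const_mul (-(Real.pi ^ 2 / 4))
    convert h2 using 1
    · rfl
    · rfl
    field_simp
  have hint : IntervalIntegrable (fun θ => t * θ * Real.exp (-(2 * t * θ ^ 2 / Real.pi ^ 2)))
      volume 0 Real.pi := by
    apply Continuous.intervalIntegrable; fun_prop
  rw [intervalIntegral.integral_eq_sub_of_hasDerivAt (fun θ _ => hF θ) hint]
  have h0 : -(2 * t * (0:ℝ) ^ 2 / Real.pi ^ 2) = 0 := by norm_num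
  rw [h0, Real.exp_zero]
  nlinarith [Real.exp_pos (-(2 * t * Real.pi ^ 2 / Real.pi ^ 2))]


/-- Uniform bound (2.4) in the paper. -/
theorem integral_deriv_phi_sin_bounded (k : ℕ) (hk : 1 ≤ k) :
    ∃ C : ℝ, 0 < C ∧ ∀ (z t : ℝ), 0 < t →
      |∫ θ in (0:ℝ)..Real.pi, iteratedDeriv k (phi t) θ * θ ^ (k - 1) * Real.sin (z * θ)|
        ≤ C := by
  obtain ⟨L, hcon, hval⟩ := rep k hk
  set Bc := (L.map fun p => |p.1| * Real.pi ^ (p.2.2.1 + k) * ((p.2.1 - 1).factorial : ℝ) *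
    (Real.pi ^ 2 / 2) ^ (p.2.1 - 1)).sum with hBc
  have hBc0 : 0 ≤ Bc := by
    rw [hBc]
    apply List.sum_nonneg
    intro x hx
    simp only [List.mem_map] at hx
    obtain ⟨p, hp, rfl⟩ := hx
    positivity
  refine ⟨Bc * (Real.pi ^ 2 / 4) + 1, by positivity, ?_⟩
  intro z t ht
  have hEq : Set.EqOn (fun θ => iteratedDeriv k (phi t) θ * θ ^ (k - 1) * Real.sin (z * θ))
      (fun θ => FF L t θ * θ ^ (k - 1) * Real.sin (z * θ)) (Set.uIcc (0:ℝ) Real.pi) :=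
    fun θ _ => by simp only [hval t θ]
  rw [intervalIntegral.integral_congr hEq]
  have hcont : Continuous fun θ => FF L t θ * θ ^ (k - 1) * Real.sin (z * θ) := by
    apply ((continuous_FF L t).mul (continuous_pow _)).mul
    fun_prop
  calc |∫ θ in (0:ℝ)..Real.pi, FF L t θ * θ ^ (k - 1) * Real.sin (z * θ)|
      ≤ ∫ θ in (0:ℝ)..Real.pi, |FF L t θ * θ ^ (k - 1) * Real.sin (z * θ)| :=
        intervalIntegral.abs_integral_le_integral_abs Real.pi_pos.le
    _ ≤ ∫ θ in (0:ℝ)..Real.pi, Bc * (t * θ * Real.exp (-(2 * t * θ ^ 2 / Real.pi ^ 2))) := by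
        apply intervalIntegral.integral_mono_on Real.pi_pos.le
          (hcont.abs.intervalIntegrable _ _)
          (Continuous.intervalIntegrable (by fun_prop) _ _)
        exact fun θ hθ => sum_bound k hk z t ht L hcon θ hθ
    _ = Bc * ∫ θ in (0:ℝ)..Real.pi, t * θ * Real.exp (-(2 * t * θ ^ 2 / Real.pi ^ 2)) :=
        intervalIntegral.integral_const_mul _ _
    _ ≤ Bc * (Real.pi ^ 2 / 4) := mul_le_mul_of_nonneg_left (intE t ht) hBc0
    _ ≤ Bc * (Real.pi ^ 2 / 4) + 1 := by linarith
end
end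

section
/- Let k ∈ ℕ, k ≥ 1, and let Ψ : (0,∞) → ℂ be a measurable function with Ψ ∈ L^∞(0,∞). There exists a constant C > 0 such that for every z ≥ 1, | ∫_0^∞ Ψ(t) ∫_0^π ∂_t ∂_θ^k φ_t(θ) θ^{k-1} sin(zθ) dθ dt | ≤ C. -/
open MeasureTheory Set
open scoped ENNReal NNReal Real

noncomputable section

namespace PsiProp

structure Tm where
  c : ℝ
  r : ℕ
  a : ℕ
  b : ℕ
  e : ℕ

def Tm.eval (T : Tm) (t θ : ℝ) : ℝ :=
  T.c * t ^ T.r * Real.sin θ ^ T.a * Real.cos θ ^ T.b * (1 - Real.cos θ) ^ T.e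

def Tm.dth (T : Tm) : List Tm :=
  [⟨T.c * T.a, T.r, T.a - 1, T.b + 1, T.e⟩,
   ⟨-(T.c * T.b), T.r, T.a + 1, T.b - 1, T.e⟩,
   ⟨T.c * T.e, T.r, T.a + 1, T.b, T.e - 1⟩,
   ⟨-(2 * T.c), T.r + 1, T.a + 1, T.b, T.e⟩]

def Tm.dt (T : Tm) : List Tm :=
  [⟨T.c * T.r, T.r - 1, T.a, T.b, T.e⟩,
   ⟨-(2 * T.c), T.r, T.a, T.b, T.e + 1⟩]

def evalL (L : List Tm) (t θ : ℝ) : ℝ := (L.map fun T => T.eval t θ).sum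

def Dth (L : List Tm) : List Tm := L.flatMap Tm.dth
def Dt (L : List Tm) : List Tm := L.flatMap Tm.dt
def P (k : ℕ) : List Tm := Dth^[k] [⟨1, 0, 0, 0, 0⟩]
def Q (k : ℕ) : List Tm := Dt (P k)

lemma evalL_nil (t θ : ℝ) : evalL [] t θ = 0 := rfl

lemma evalL_cons (T : Tm) (L : List Tm) (t θ : ℝ) :
    evalL (T :: L) t θ = T.eval t θ + evalL L t θ := by simp [evalL]

lemma evalL_append (L1 L2 : List Tm) (t θ : ℝ) :
    evalL (L1 ++ L2) t θ = evalL L1 t θ + evalL L2 t θ := by simp [evalL]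

lemma cont_tm (T : Tm) (t : ℝ) : Continuous fun θ => T.eval t θ := by
  unfold Tm.eval; fun_prop

lemma cont_evalL (L : List Tm) (t : ℝ) : Continuous fun θ => evalL L t θ := by
  induction L with
  | nil => simpa [evalL] using continuous_const
  | cons T L ih =>
    have hfn : (fun θ => evalL (T :: L) t θ) = fun θ => T.eval t θ + evalL L t θ := by
      funext θ; rw [evalL_cons]
    rw [hfn]; exact (cont_tm T t).add ih

lemma cont_phi (t : ℝ) : Continuous (phi t) := by unfold phi; fun_prop

lemma tm_hasDerivAt_theta (T : Tm) (t θ : ℝ) :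
    HasDerivAt (fun x => T.eval t x * phi t x) (evalL T.dth t θ * phi t θ) θ := by
  have hphi : HasDerivAt (fun x => phi t x) (phi t θ * (-2 * t * Real.sin θ)) θ := by
    have h1 : HasDerivAt (fun x : ℝ => -2 * t * (1 - Real.cos x)) (-2 * t * Real.sin θ) θ := by
      simpa using ((Real.hasDerivAt_cos θ).const_sub 1).const_mul (-2 * t)
    exact h1.exp
  have hs : HasDerivAt (fun x : ℝ => Real.sin x ^ T.a)
      ((T.a : ℝ) * Real.sin θ ^ (T.a - 1) * Real.cos θ) θ := (Real.hasDerivAt_sin θ).pow _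
  have hc : HasDerivAt (fun x : ℝ => Real.cos x ^ T.b)
      ((T.b : ℝ) * Real.cos θ ^ (T.b - 1) * -Real.sin θ) θ := (Real.hasDerivAt_cos θ).pow _
  have hv : HasDerivAt (fun x : ℝ => (1 - Real.cos x) ^ T.e)
      ((T.e : ℝ) * (1 - Real.cos θ) ^ (T.e - 1) * Real.sin θ) θ := by
    have h1 : HasDerivAt (fun x : ℝ => 1 - Real.cos x) (Real.sin θ) θ := by
      simpa using (Real.hasDerivAt_cos θ).const_sub 1
    exact h1.pow _
  have h := (((hs.mul hc).mul hv).mul hphi).const_mul (T.c * t ^ T.r)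
  have hfn : (fun x => T.eval t x * phi t x)
      = fun x => (T.c * t ^ T.r) *
          (Real.sin x ^ T.a * Real.cos x ^ T.b * (1 - Real.cos x) ^ T.e * phi t x) := by
    funext x; simp only [Tm.eval]; ring
  rw [hfn]
  refine h.congr_deriv ?_
  simp only [evalL, Tm.dth, List.map_cons, List.map_nil, List.sum_cons, List.sum_nil, Tm.eval]
  push_cast
  simp only [Pi.mul_apply]
  ring

lemma evalL_hasDerivAt_theta (L : List Tm) (t θ : ℝ) :
    HasDerivAt (fun x => evalL L t x * phi t x) (evalL (Dth L) t θ * phi t θ) θ := by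
  induction L with
  | nil =>
    have hfn : (fun x => evalL [] t x * phi t x) = fun _ => (0 : ℝ) := by
      funext x; simp [evalL]
    rw [hfn]
    simpa [Dth, evalL] using hasDerivAt_const θ (0 : ℝ)
  | cons T L ih =>
    have h := (tm_hasDerivAt_theta T t θ).add ih
    have hfn : (fun x => evalL (T :: L) t x * phi t x)
        = fun x => T.eval t x * phi t x + evalL L t x * phi t x := by
      funext x; rw [evalL_cons]; ring
    rw [hfn]
    refine h.congr_deriv ?_
    simp only [Dth, List.flatMap_cons, evalL_append]
    ring

lemma tm_hasDerivAt_t (T : Tm) (θ t : ℝ) :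
    HasDerivAt (fun s => T.eval s θ * phi s θ) (evalL T.dt t θ * phi t θ) t := by
  have hphi : HasDerivAt (fun s => phi s θ) (phi t θ * (-2 * (1 - Real.cos θ))) t := by
    have h1 : HasDerivAt (fun s : ℝ => -2 * s * (1 - Real.cos θ)) (-2 * (1 - Real.cos θ)) t := by
      simpa using ((hasDerivAt_id t).const_mul (-2 : ℝ)).mul_const (1 - Real.cos θ)
    exact h1.exp
  have hpow := hasDerivAt_pow T.r t
  have h := (hpow.mul hphi).const_mul
      (T.c * (Real.sin θ ^ T.a * Real.cos θ ^ T.b * (1 - Real.cos θ) ^ T.e))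
  have hfn : (fun s => T.eval s θ * phi s θ)
      = fun s => (T.c * (Real.sin θ ^ T.a * Real.cos θ ^ T.b * (1 - Real.cos θ) ^ T.e)) *
          (s ^ T.r * phi s θ) := by
    funext s; simp only [Tm.eval]; ring
  rw [hfn]
  refine h.congr_deriv ?_
  simp only [evalL, Tm.dt, List.map_cons, List.map_nil, List.sum_cons, List.sum_nil, Tm.eval]
  push_cast
  ring

lemma evalL_hasDerivAt_t (L : List Tm) (θ t : ℝ) :
    HasDerivAt (fun s => evalL L s θ * phi s θ) (evalL (Dt L) t θ * phi t θ) t := by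
  induction L with
  | nil =>
    have hfn : (fun s => evalL [] s θ * phi s θ) = fun _ => (0 : ℝ) := by
      funext s; simp [evalL]
    rw [hfn]
    simpa [Dt, evalL] using hasDerivAt_const t (0 : ℝ)
  | cons T L ih =>
    have h := (tm_hasDerivAt_t T θ t).add ih
    have hfn : (fun s => evalL (T :: L) s θ * phi s θ)
        = fun s => T.eval s θ * phi s θ + evalL L s θ * phi s θ := by
      funext s; rw [evalL_cons]; ring
    rw [hfn]
    refine h.congr_deriv ?_
    simp only [Dt, List.flatMap_cons, evalL_append]
    ring

lemma iteratedDeriv_phi_eq (t : ℝ) (m : ℕ) :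
    iteratedDeriv m (phi t) = fun θ => evalL (P m) t θ * phi t θ := by
  induction m with
  | zero =>
    funext θ
    simp [P, evalL, Tm.eval]
  | succ m ih =>
    funext θ
    rw [iteratedDeriv_succ, ih, (evalL_hasDerivAt_theta (P m) t θ).deriv]
    simp [P, Function.iterate_succ_apply']

lemma deriv_t_eq (k : ℕ) (t θ : ℝ) :
    deriv (fun s => iteratedDeriv k (phi s) θ) t = evalL (Q k) t θ * phi t θ := by
  have hfn : (fun s => iteratedDeriv k (phi s) θ) = fun s => evalL (P k) s θ * phi s θ := by
    funext s; rw [iteratedDeriv_phi_eq s k]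
  rw [hfn, (evalL_hasDerivAt_t (P k) θ t).deriv]; rfl


def Inv (m : ℤ) (L : List Tm) : Prop :=
  ∀ T ∈ L, T.c = 0 ∨ 2 * (T.r : ℤ) ≤ (T.a : ℤ) + 2 * (T.e : ℤ) + m

lemma inv_dth {m : ℤ} {L : List Tm} (h : Inv m L) : Inv (m + 1) (Dth L) := by
  intro T hT
  rw [Dth, List.mem_flatMap] at hT
  obtain ⟨S, hS, hTS⟩ := hT
  simp only [Tm.dth, List.mem_cons, List.not_mem_nil, or_false] at hTS
  rcases h S hS with h0 | hle
  · rcases hTS with rfl | rfl | rfl | rfl <;> left <;> simp [h0]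
  · rcases hTS with rfl | rfl | rfl | rfl
    · by_cases ha : S.a = 0
      · left; simp [ha]
      · right; simp only; omega
    · right; simp only; omega
    · by_cases he : S.e = 0
      · left; simp [he]
      · right; simp only; omega
    · right; simp only; push_cast; omega

lemma inv_dt {m : ℤ} {L : List Tm} (h : Inv m L) : Inv (m - 2) (Dt L) := by
  intro T hT
  rw [Dt, List.mem_flatMap] at hT
  obtain ⟨S, hS, hTS⟩ := hT
  simp only [Tm.dt, List.mem_cons, List.not_mem_nil, or_false] at hTS
  rcases h S hS with h0 | hle
  · rcases hTS with rfl | rfl <;> left <;> simp [h0]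
  · rcases hTS with rfl | rfl
    · by_cases hr : S.r = 0
      · left; simp [hr]
      · right; simp only; omega
    · right; simp only; push_cast; omega

lemma inv_P (k : ℕ) : Inv (k : ℤ) (P k) := by
  induction k with
  | zero =>
    intro T hT
    simp only [P, Function.iterate_zero, id_eq, List.mem_cons, List.not_mem_nil, or_false] at hT
    subst hT; right; simp
  | succ k ih =>
    have h2 : P (k + 1) = Dth (P k) := by rw [P, Function.iterate_succ_apply']; rfl
    have h3 : ((k + 1 : ℕ) : ℤ) = (k : ℤ) + 1 := by push_cast; ring
    rw [h2, h3]
    exact inv_dth ih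

lemma inv_Q (k : ℕ) : Inv ((k : ℤ) - 2) (Q k) := inv_dt (inv_P k)

lemma inv_DthQ (k : ℕ) : Inv ((k : ℤ) - 1) (Dth (Q k)) := by
  have := inv_dth (inv_Q k)
  have h : (k : ℤ) - 2 + 1 = (k : ℤ) - 1 := by ring
  rwa [h] at this


lemma phi_le {t θ : ℝ} (ht : 0 ≤ t) (h0 : 0 ≤ θ) (h1 : θ ≤ Real.pi) :
    phi t θ ≤ Real.exp (-(4 / Real.pi ^ 2 * t) * θ ^ 2) := by
  rw [phi]
  apply Real.exp_le_exp.mpr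
  have hπ : 0 < Real.pi := Real.pi_pos
  have hsin : θ / Real.pi ≤ Real.sin (θ / 2) := by
    have h := Real.mul_le_sin (x := θ / 2) (by linarith) (by linarith)
    have e : 2 / Real.pi * (θ / 2) = θ / Real.pi := by ring
    linarith [e ▸ h]
  have hc2 := Real.cos_two_mul' (θ / 2)
  rw [show 2 * (θ / 2) = θ by ring] at hc2
  have hsc := Real.sin_sq_add_cos_sq (θ / 2)
  have h0' : 0 ≤ θ / Real.pi := div_nonneg h0 hπ.le
  have hsin' : (θ / Real.pi) ^ 2 ≤ Real.sin (θ / 2) ^ 2 := by nlinarith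
  have hcos : 2 * (θ / Real.pi) ^ 2 ≤ 1 - Real.cos θ := by nlinarith
  have e1 : (θ / Real.pi) ^ 2 = θ ^ 2 / Real.pi ^ 2 := div_pow θ Real.pi 2
  rw [e1] at hcos
  have key : 4 / Real.pi ^ 2 * θ ^ 2 ≤ 2 * (1 - Real.cos θ) := by
    have : 4 / Real.pi ^ 2 * θ ^ 2 = 2 * (2 * (θ ^ 2 / Real.pi ^ 2)) := by ring
    linarith
  nlinarith [mul_le_mul_of_nonneg_left key ht]

lemma tm_eval_abs_le (T : Tm) {t θ : ℝ} (ht : 0 ≤ t) (h0 : 0 ≤ θ) (h1 : θ ≤ Real.pi) :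
    |T.eval t θ| ≤ |T.c| * t ^ T.r * θ ^ (T.a + 2 * T.e) := by
  have hs0 : 0 ≤ Real.sin θ := Real.sin_nonneg_of_nonneg_of_le_pi h0 h1
  have hsθ : Real.sin θ ≤ θ := Real.sin_le h0
  have hv0 : 0 ≤ 1 - Real.cos θ := by nlinarith [Real.cos_le_one θ]
  have hv2 : 1 - Real.cos θ ≤ θ ^ 2 := by nlinarith [Real.one_sub_sq_div_two_le_cos (x := θ)]
  have habs : |T.eval t θ|
      = |T.c| * t ^ T.r * Real.sin θ ^ T.a * |Real.cos θ| ^ T.b * (1 - Real.cos θ) ^ T.e := by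
    rw [Tm.eval, abs_mul, abs_mul, abs_mul, abs_mul, abs_pow, abs_pow, abs_pow, abs_pow,
      abs_of_nonneg ht, abs_of_nonneg hs0, abs_of_nonneg hv0]
  rw [habs]
  have h2 : |T.c| * t ^ T.r * Real.sin θ ^ T.a * |Real.cos θ| ^ T.b * (1 - Real.cos θ) ^ T.e
      ≤ |T.c| * t ^ T.r * θ ^ T.a * 1 ^ T.b * (θ ^ 2) ^ T.e := by
    gcongr
    · exact Real.abs_cos_le_one θ
  calc _ ≤ |T.c| * t ^ T.r * θ ^ T.a * 1 ^ T.b * (θ ^ 2) ^ T.e := h2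
    _ = |T.c| * t ^ T.r * θ ^ (T.a + 2 * T.e) := by rw [one_pow]; ring

def Iq (q : ℕ) : ℝ := ∫ u in Set.Ioi (0 : ℝ), u ^ q * Real.exp (-(4 / Real.pi ^ 2) * u ^ 2)

lemma c0_pos : 0 < 4 / Real.pi ^ 2 := by positivity

lemma Iq_integrableOn (q : ℕ) (b : ℝ) (hb : 0 < b) :
    IntegrableOn (fun u : ℝ => u ^ q * Real.exp (-b * u ^ 2)) (Set.Ioi 0) := by
  have h := integrableOn_rpow_mul_exp_neg_mul_sq hb (s := (q : ℝ))
    (by exact_mod_cast lt_of_lt_of_le neg_one_lt_zero (Nat.cast_nonneg q))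
  exact h.congr_fun (fun x _ => by simp only [Real.rpow_natCast]) measurableSet_Ioi

lemma Iq_nonneg (q : ℕ) : 0 ≤ Iq q :=
  setIntegral_nonneg measurableSet_Ioi (fun x hx => by
    have hx' : (0:ℝ) < x := hx
    positivity)

lemma key_integral (q : ℕ) {t : ℝ} (ht : 0 < t) :
    ∫ θ in (0 : ℝ)..Real.pi, θ ^ q * Real.exp (-(4 / Real.pi ^ 2 * t) * θ ^ 2)
      ≤ Iq q * (Real.sqrt t)⁻¹ ^ (q + 1) := by
  set σ := Real.sqrt t with hσ
  have hσpos : 0 < σ := Real.sqrt_pos.mpr ht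
  have hσsq : σ ^ 2 = t := Real.sq_sqrt ht.le
  have hbt : (0 : ℝ) < 4 / Real.pi ^ 2 * t := by positivity
  have hIoi : ∫ θ in (0 : ℝ)..Real.pi, θ ^ q * Real.exp (-(4 / Real.pi ^ 2 * t) * θ ^ 2)
      ≤ ∫ θ in Set.Ioi (0 : ℝ), θ ^ q * Real.exp (-(4 / Real.pi ^ 2 * t) * θ ^ 2) := by
    rw [intervalIntegral.integral_of_le Real.pi_pos.le]
    apply setIntegral_mono_set (Iq_integrableOn q _ hbt)
    · filter_upwards [ae_restrict_mem measurableSet_Ioi] with x hx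
      have hx' : (0:ℝ) < x := hx
      positivity
    · exact HasSubset.Subset.eventuallyLE Set.Ioc_subset_Ioi_self
  have h1 := integral_comp_mul_left_Ioi
    (g := fun u => u ^ q * Real.exp (-(4 / Real.pi ^ 2) * u ^ 2)) 0 hσpos
  simp only [mul_zero] at h1
  have h2 : ∀ x : ℝ, (σ * x) ^ q * Real.exp (-(4 / Real.pi ^ 2) * (σ * x) ^ 2)
      = σ ^ q * (x ^ q * Real.exp (-(4 / Real.pi ^ 2 * t) * x ^ 2)) := by
    intro x
    rw [mul_pow, mul_pow, hσsq,
      show -(4 / Real.pi ^ 2) * (t * x ^ 2) = -(4 / Real.pi ^ 2 * t) * x ^ 2 from by ring]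
    ring
  simp only [h2] at h1
  rw [MeasureTheory.integral_const_mul] at h1
  rw [smul_eq_mul] at h1
  have h1' : σ ^ q * ∫ a in Set.Ioi (0:ℝ), a ^ q * Real.exp (-(4 / Real.pi ^ 2 * t) * a ^ 2)
      = σ⁻¹ * Iq q := h1
  have hInt : ∫ θ in Set.Ioi (0 : ℝ), θ ^ q * Real.exp (-(4 / Real.pi ^ 2 * t) * θ ^ 2)
      = σ⁻¹ * Iq q / σ ^ q := by
    rw [eq_div_iff (pow_ne_zero q hσpos.ne')]
    linear_combination h1'
  calc ∫ θ in (0 : ℝ)..Real.pi, θ ^ q * Real.exp (-(4 / Real.pi ^ 2 * t) * θ ^ 2)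
      ≤ σ⁻¹ * Iq q / σ ^ q := hIoi.trans_eq hInt
    _ = Iq q * σ⁻¹ ^ (q + 1) := by
        rw [pow_succ, inv_pow, div_eq_mul_inv]
        ring



lemma poly_decay (r : ℕ) {t : ℝ} (ht : 1 ≤ t) :
    t ^ r * Real.exp (-(4 * t)) ≤ (Nat.factorial (r+1) : ℝ) * (Real.sqrt t)⁻¹ := by
  have ht0 : (0 : ℝ) < t := by linarith
  have hσ0 : 0 < Real.sqrt t := Real.sqrt_pos.mpr ht0
  have hσt : Real.sqrt t ≤ t := by
    have h := Real.sqrt_le_sqrt (show t ≤ t ^ 2 by nlinarith)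
    rwa [Real.sqrt_sq ht0.le] at h
  rw [← div_eq_mul_inv, le_div_iff₀ hσ0]
  have h1 : t ^ r * Real.exp (-(4 * t)) * Real.sqrt t ≤ t ^ (r + 1) * Real.exp (-t) := by
    calc t ^ r * Real.exp (-(4 * t)) * Real.sqrt t
        = (t ^ r * Real.sqrt t) * Real.exp (-(4 * t)) := by ring
      _ ≤ (t ^ r * t) * Real.exp (-t) := by
          apply mul_le_mul
          · exact mul_le_mul_of_nonneg_left hσt (pow_nonneg ht0.le r)
          · exact Real.exp_le_exp.mpr (by linarith)
          · positivity
          · positivity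
      _ = t ^ (r + 1) * Real.exp (-t) := by rw [pow_succ]
  have h2 : t ^ (r + 1) ≤ (Nat.factorial (r+1) : ℝ) * Real.exp t := by
    have hs := Real.sum_le_exp_of_nonneg (by linarith : (0 : ℝ) ≤ t) (r + 2)
    have hmem : r + 1 ∈ Finset.range (r + 2) := Finset.self_mem_range_succ (r + 1)
    have hterm := Finset.single_le_sum (f := fun i => t ^ i / (Nat.factorial i))
      (fun i _ => by positivity) hmem
    have h3 := hterm.trans hs
    rw [div_le_iff₀ (by positivity)] at h3
    rw [mul_comm] at h3
    exact h3
  calc t ^ r * Real.exp (-(4 * t)) * Real.sqrt t ≤ t ^ (r + 1) * Real.exp (-t) := h1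
    _ ≤ ((Nat.factorial (r+1) : ℝ) * Real.exp t) * Real.exp (-t) :=
        mul_le_mul_of_nonneg_right h2 (Real.exp_nonneg _)
    _ = (Nat.factorial (r+1) : ℝ) := by rw [mul_assoc, ← Real.exp_add]; simp

lemma tm_integral_bound (T : Tm) (w : ℕ) {t : ℝ} (ht : 1 ≤ t) (β : ℤ)
    (hinv : T.c = 0 ∨ 2 * (T.r : ℤ) ≤ (T.a : ℤ) + 2 * T.e + w + 1 + β) :
    ∫ θ in (0 : ℝ)..Real.pi, |T.eval t θ| * phi t θ * θ ^ w
      ≤ |T.c| * Iq (T.a + 2 * T.e + w) * Real.sqrt t ^ β := by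
  have ht0 : (0 : ℝ) < t := lt_of_lt_of_le zero_lt_one ht
  have hσ1 : 1 ≤ Real.sqrt t := Real.one_le_sqrt.mpr ht
  have hσ0 : 0 < Real.sqrt t := lt_of_lt_of_le zero_lt_one hσ1
  have hσsq : Real.sqrt t ^ 2 = t := Real.sq_sqrt ht0.le
  rcases hinv with h0 | hle
  · have hz : ∀ θ : ℝ, T.eval t θ = 0 := fun θ => by simp [Tm.eval, h0]
    simp [hz, h0]
  · set q := T.a + 2 * T.e + w with hq
    have step1 : ∫ θ in (0 : ℝ)..Real.pi, |T.eval t θ| * phi t θ * θ ^ w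
        ≤ ∫ θ in (0 : ℝ)..Real.pi,
            |T.c| * t ^ T.r * (θ ^ q * Real.exp (-(4 / Real.pi ^ 2 * t) * θ ^ 2)) := by
      apply intervalIntegral.integral_mono_on Real.pi_pos.le
      · exact (((cont_tm T t).abs.mul (cont_phi t)).mul (continuous_pow w)).intervalIntegrable 0 Real.pi
      · exact (continuous_const.mul ((continuous_pow q).mul (by fun_prop))).intervalIntegrable 0 Real.pi
      · intro θ hθ
        obtain ⟨hθ0, hθπ⟩ := hθ
        have h1 := tm_eval_abs_le T ht0.le hθ0 hθπ
        have h2 := phi_le (θ := θ) ht0.le hθ0 hθπ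
        have hphi0 : 0 ≤ phi t θ := Real.exp_nonneg _
        calc |T.eval t θ| * phi t θ * θ ^ w
            ≤ (|T.c| * t ^ T.r * θ ^ (T.a + 2 * T.e)) *
                Real.exp (-(4 / Real.pi ^ 2 * t) * θ ^ 2) * θ ^ w := by
              exact mul_le_mul_of_nonneg_right
                (mul_le_mul h1 h2 hphi0 (by positivity)) (pow_nonneg hθ0 w)
          _ = |T.c| * t ^ T.r * (θ ^ q * Real.exp (-(4 / Real.pi ^ 2 * t) * θ ^ 2)) := by
              rw [hq]; ring
    have step2 : ∫ θ in (0 : ℝ)..Real.pi,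
          |T.c| * t ^ T.r * (θ ^ q * Real.exp (-(4 / Real.pi ^ 2 * t) * θ ^ 2))
        = |T.c| * t ^ T.r *
          ∫ θ in (0 : ℝ)..Real.pi, θ ^ q * Real.exp (-(4 / Real.pi ^ 2 * t) * θ ^ 2) :=
      intervalIntegral.integral_const_mul _ _
    have step3 := key_integral q ht0
    have e3 : |T.c| * t ^ T.r * (Iq q * (Real.sqrt t)⁻¹ ^ (q + 1))
        = |T.c| * Iq q * Real.sqrt t ^ (((2 * T.r : ℕ) : ℤ) - ((q + 1 : ℕ) : ℤ)) := by
      rw [zpow_sub₀ hσ0.ne', zpow_natCast, zpow_natCast,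
        show t ^ T.r = Real.sqrt t ^ (2 * T.r) from by rw [pow_mul, hσsq], inv_pow]
      field_simp
    have hexp : ((2 * T.r : ℕ) : ℤ) - ((q + 1 : ℕ) : ℤ) ≤ β := by
      push_cast
      omega
    calc ∫ θ in (0 : ℝ)..Real.pi, |T.eval t θ| * phi t θ * θ ^ w
        ≤ |T.c| * t ^ T.r *
            ∫ θ in (0 : ℝ)..Real.pi, θ ^ q * Real.exp (-(4 / Real.pi ^ 2 * t) * θ ^ 2) :=
          step1.trans_eq step2
      _ ≤ |T.c| * t ^ T.r * (Iq q * (Real.sqrt t)⁻¹ ^ (q + 1)) :=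
          mul_le_mul_of_nonneg_left step3 (by positivity)
      _ = |T.c| * Iq q * Real.sqrt t ^ (((2 * T.r : ℕ) : ℤ) - ((q + 1 : ℕ) : ℤ)) := e3
      _ ≤ |T.c| * Iq q * Real.sqrt t ^ β := by
          apply mul_le_mul_of_nonneg_left (zpow_le_zpow_right₀ hσ1 hexp)
          exact mul_nonneg (abs_nonneg _) (Iq_nonneg q)

lemma list_integral_bound (L : List Tm) (w : ℕ) {t : ℝ} (ht : 1 ≤ t) (β : ℤ)
    (hinv : ∀ T ∈ L, T.c = 0 ∨ 2 * (T.r : ℤ) ≤ (T.a : ℤ) + 2 * T.e + w + 1 + β) :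
    ∫ θ in (0 : ℝ)..Real.pi, |evalL L t θ| * phi t θ * θ ^ w
      ≤ (L.map fun T => |T.c| * Iq (T.a + 2 * T.e + w)).sum * Real.sqrt t ^ β := by
  have hσ1 : 1 ≤ Real.sqrt t := Real.one_le_sqrt.mpr ht
  have hσ0 : 0 < Real.sqrt t := lt_of_lt_of_le zero_lt_one hσ1
  induction L with
  | nil => simp [evalL]
  | cons T L ih =>
    have hT := hinv T List.mem_cons_self
    have hL := fun S hS => hinv S (List.mem_cons_of_mem T hS)
    have hint1 : IntervalIntegrable (fun θ => |T.eval t θ| * phi t θ * θ ^ w)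
        MeasureTheory.volume 0 Real.pi :=
      (((cont_tm T t).abs.mul (cont_phi t)).mul (continuous_pow w)).intervalIntegrable 0 Real.pi
    have hint2 : IntervalIntegrable (fun θ => |evalL L t θ| * phi t θ * θ ^ w)
        MeasureTheory.volume 0 Real.pi :=
      (((cont_evalL L t).abs.mul (cont_phi t)).mul (continuous_pow w)).intervalIntegrable 0 Real.pi
    calc ∫ θ in (0 : ℝ)..Real.pi, |evalL (T :: L) t θ| * phi t θ * θ ^ w
        ≤ ∫ θ in (0 : ℝ)..Real.pi,
            (|T.eval t θ| * phi t θ * θ ^ w + |evalL L t θ| * phi t θ * θ ^ w) := by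
          apply intervalIntegral.integral_mono_on Real.pi_pos.le
          · exact (((cont_evalL (T :: L) t).abs.mul (cont_phi t)).mul
              (continuous_pow w)).intervalIntegrable 0 Real.pi
          · exact hint1.add hint2
          · intro θ hθ
            have habs : |evalL (T :: L) t θ| ≤ |T.eval t θ| + |evalL L t θ| := by
              rw [evalL_cons]; exact abs_add_le _ _
            have hphi0 : 0 ≤ phi t θ := Real.exp_nonneg _
            have hθw : 0 ≤ θ ^ w := pow_nonneg hθ.1 w
            nlinarith [mul_le_mul_of_nonneg_right
              (mul_le_mul_of_nonneg_right habs hphi0) hθw]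
      _ = (∫ θ in (0 : ℝ)..Real.pi, |T.eval t θ| * phi t θ * θ ^ w)
          + ∫ θ in (0 : ℝ)..Real.pi, |evalL L t θ| * phi t θ * θ ^ w :=
          intervalIntegral.integral_add hint1 hint2
      _ ≤ |T.c| * Iq (T.a + 2 * T.e + w) * Real.sqrt t ^ β
          + (L.map fun T => |T.c| * Iq (T.a + 2 * T.e + w)).sum * Real.sqrt t ^ β :=
          add_le_add (tm_integral_bound T w ht β hT) (ih hL)
      _ = ((T :: L).map fun T => |T.c| * Iq (T.a + 2 * T.e + w)).sum * Real.sqrt t ^ β := by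
          rw [List.map_cons, List.sum_cons]; ring

lemma tm_eval_abs_le_small (T : Tm) {t θ : ℝ} (ht0 : 0 ≤ t) (ht1 : t ≤ 1) :
    |T.eval t θ| ≤ |T.c| * 2 ^ T.e := by
  have h1 : |T.eval t θ| = |T.c| * |t| ^ T.r * |Real.sin θ| ^ T.a * |Real.cos θ| ^ T.b
      * |1 - Real.cos θ| ^ T.e := by
    rw [Tm.eval, abs_mul, abs_mul, abs_mul, abs_mul, abs_pow, abs_pow, abs_pow, abs_pow]
  rw [h1]
  have h2 : |T.c| * |t| ^ T.r * |Real.sin θ| ^ T.a * |Real.cos θ| ^ T.b * |1 - Real.cos θ| ^ T.e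
      ≤ |T.c| * 1 ^ T.r * 1 ^ T.a * 1 ^ T.b * 2 ^ T.e := by
    gcongr
    · rw [abs_of_nonneg ht0]; exact ht1
    · exact Real.abs_sin_le_one θ
    · exact Real.abs_cos_le_one θ
    · have := Real.neg_one_le_cos θ
      have := Real.cos_le_one θ
      rw [abs_le]; constructor <;> linarith
  calc _ ≤ |T.c| * 1 ^ T.r * 1 ^ T.a * 1 ^ T.b * 2 ^ T.e := h2
    _ = |T.c| * 2 ^ T.e := by simp

lemma evalL_abs_le_small (L : List Tm) {t θ : ℝ} (ht0 : 0 ≤ t) (ht1 : t ≤ 1) :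
    |evalL L t θ| ≤ (L.map fun T => |T.c| * 2 ^ T.e).sum := by
  induction L with
  | nil => simp [evalL]
  | cons T L ih =>
    rw [evalL_cons, List.map_cons, List.sum_cons]
    exact (abs_add_le _ _).trans (add_le_add (tm_eval_abs_le_small T ht0 ht1) ih)

lemma tm_boundary (T : Tm) {t : ℝ} (ht : 1 ≤ t) :
    |T.eval t Real.pi| * phi t Real.pi
      ≤ |T.c| * 2 ^ T.e * (Nat.factorial (T.r+1) : ℝ) * (Real.sqrt t)⁻¹ := by
  have ht0 : (0 : ℝ) < t := by linarith
  have hπ : phi t Real.pi = Real.exp (-(4 * t)) := by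
    rw [phi, show -2 * t * (1 - Real.cos Real.pi) = -(4 * t) from by rw [Real.cos_pi]; ring]
  have heval : |T.eval t Real.pi| ≤ |T.c| * 2 ^ T.e * t ^ T.r := by
    rw [Tm.eval, Real.sin_pi, Real.cos_pi]
    rcases Nat.eq_zero_or_pos T.a with ha | ha
    · rw [ha, pow_zero]
      rw [show (1 : ℝ) - -1 = 2 from by norm_num]
      rw [abs_mul, abs_mul, abs_mul, abs_mul, abs_pow, abs_pow, abs_pow,
        abs_of_nonneg ht0.le, abs_one, abs_neg, abs_one]
      simp [abs_of_nonneg (by norm_num : (0:ℝ) ≤ 2)]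
      ring_nf
      nlinarith [abs_nonneg T.c, pow_nonneg ht0.le T.r, pow_pos (show (0:ℝ) < 2 by norm_num) T.e]
    · rw [zero_pow (by omega : T.a ≠ 0)]
      simp
      positivity
  calc |T.eval t Real.pi| * phi t Real.pi
      ≤ (|T.c| * 2 ^ T.e * t ^ T.r) * Real.exp (-(4 * t)) := by
        rw [hπ]; exact mul_le_mul_of_nonneg_right heval (Real.exp_nonneg _)
    _ = (|T.c| * 2 ^ T.e) * (t ^ T.r * Real.exp (-(4 * t))) := by ring
    _ ≤ (|T.c| * 2 ^ T.e) * ((Nat.factorial (T.r+1) : ℝ) * (Real.sqrt t)⁻¹) := by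
        apply mul_le_mul_of_nonneg_left (poly_decay T.r ht) (by positivity)
    _ = |T.c| * 2 ^ T.e * (Nat.factorial (T.r+1) : ℝ) * (Real.sqrt t)⁻¹ := by ring

lemma evalL_boundary (L : List Tm) {t : ℝ} (ht : 1 ≤ t) :
    |evalL L t Real.pi| * phi t Real.pi
      ≤ (L.map fun T => |T.c| * 2 ^ T.e * (Nat.factorial (T.r+1) : ℝ)).sum * (Real.sqrt t)⁻¹ := by
  induction L with
  | nil => simp [evalL]
  | cons T L ih =>
    have hphi0 : 0 ≤ phi t Real.pi := Real.exp_nonneg _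
    calc |evalL (T :: L) t Real.pi| * phi t Real.pi
        ≤ (|T.eval t Real.pi| + |evalL L t Real.pi|) * phi t Real.pi := by
          apply mul_le_mul_of_nonneg_right _ hphi0
          rw [evalL_cons]; exact abs_add_le _ _
      _ = |T.eval t Real.pi| * phi t Real.pi + |evalL L t Real.pi| * phi t Real.pi := by ring
      _ ≤ |T.c| * 2 ^ T.e * (Nat.factorial (T.r+1) : ℝ) * (Real.sqrt t)⁻¹
          + (L.map fun T => |T.c| * 2 ^ T.e * (Nat.factorial (T.r+1) : ℝ)).sum * (Real.sqrt t)⁻¹ :=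
          add_le_add (tm_boundary T ht) ih
      _ = _ := by rw [List.map_cons, List.sum_cons]; ring

lemma evalL_zero {L : List Tm} (h : Inv (-1) L) (t : ℝ) : evalL L t 0 = 0 := by
  rw [evalL]
  apply List.sum_eq_zero
  intro x hx
  rw [List.mem_map] at hx
  obtain ⟨T, hT, rfl⟩ := hx
  rcases h T hT with h0 | hle
  · simp [Tm.eval, h0]
  · rcases (show 1 ≤ T.a ∨ 1 ≤ T.e by omega) with ha | he
    · simp [Tm.eval, zero_pow (show T.a ≠ 0 by omega)]
    · simp [Tm.eval, zero_pow (show T.e ≠ 0 by omega)]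



def CC0 (k : ℕ) : ℝ := Real.pi ^ k * ((Q k).map fun T => |T.c| * 2 ^ T.e).sum
def CC1 (k : ℕ) : ℝ := ((Q k).map fun T => |T.c| * Iq (T.a + 2 * T.e + k)).sum
def CC2 (k : ℕ) : ℝ := ((Dth (Q k)).map fun T => |T.c| * Iq (T.a + 2 * T.e + (k - 1))).sum
def CC3 (k : ℕ) : ℝ :=
  ((k - 1 : ℕ) : ℝ) * ((Q k).map fun T => |T.c| * Iq (T.a + 2 * T.e + (k - 1 - 1))).sum
def CC4 (k : ℕ) : ℝ :=
  Real.pi ^ (k - 1) * ((Q k).map fun T => |T.c| * 2 ^ T.e * (Nat.factorial (T.r + 1) : ℝ)).sum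
def CC5 (k : ℕ) : ℝ := CC4 k + CC2 k + CC3 k

lemma sum_map_nonneg (L : List Tm) (f : Tm → ℝ) (h : ∀ T, 0 ≤ f T) : 0 ≤ (L.map f).sum := by
  apply List.sum_nonneg
  intro x hx
  obtain ⟨T, _, rfl⟩ := List.mem_map.1 hx
  exact h T

lemma CC0_nonneg (k : ℕ) : 0 ≤ CC0 k :=
  mul_nonneg (pow_nonneg Real.pi_pos.le k) (sum_map_nonneg _ _ fun T => by positivity)

lemma CC1_nonneg (k : ℕ) : 0 ≤ CC1 k :=
  sum_map_nonneg _ _ fun T => mul_nonneg (abs_nonneg _) (Iq_nonneg _)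

lemma CC2_nonneg (k : ℕ) : 0 ≤ CC2 k :=
  sum_map_nonneg _ _ fun T => mul_nonneg (abs_nonneg _) (Iq_nonneg _)

lemma CC3_nonneg (k : ℕ) : 0 ≤ CC3 k :=
  mul_nonneg (Nat.cast_nonneg _)
    (sum_map_nonneg _ _ fun T => mul_nonneg (abs_nonneg _) (Iq_nonneg _))

lemma CC4_nonneg (k : ℕ) : 0 ≤ CC4 k :=
  mul_nonneg (pow_nonneg Real.pi_pos.le _) (sum_map_nonneg _ _ fun T => by positivity)

lemma CC5_nonneg (k : ℕ) : 0 ≤ CC5 k :=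
  add_nonneg (add_nonneg (CC4_nonneg k) (CC2_nonneg k)) (CC3_nonneg k)

lemma phi_le_one {t θ : ℝ} (ht : 0 ≤ t) : phi t θ ≤ 1 := by
  rw [phi, Real.exp_le_one_iff]
  nlinarith [Real.cos_le_one θ]

lemma inner_small (k : ℕ) (hk : 1 ≤ k) (z : ℝ) {t : ℝ} (ht0 : 0 < t) (ht1 : t ≤ 1) :
    |∫ θ in (0 : ℝ)..Real.pi,
        evalL (Q k) t θ * phi t θ * θ ^ (k - 1) * Real.sin (z * θ)| ≤ CC0 k := by
  set S := ((Q k).map fun T => |T.c| * 2 ^ T.e).sum with hS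
  have hS0 : 0 ≤ S := sum_map_nonneg _ _ fun T => by positivity
  have h := intervalIntegral.norm_integral_le_of_norm_le_const
    (C := S * Real.pi ^ (k - 1)) (f := fun θ =>
      evalL (Q k) t θ * phi t θ * θ ^ (k - 1) * Real.sin (z * θ)) (a := 0) (b := Real.pi) ?_
  · rw [Real.norm_eq_abs] at h
    calc |∫ θ in (0 : ℝ)..Real.pi,
          evalL (Q k) t θ * phi t θ * θ ^ (k - 1) * Real.sin (z * θ)|
        ≤ S * Real.pi ^ (k - 1) * |Real.pi - 0| := h
      _ = Real.pi ^ (k - 1) * Real.pi * S := by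
          rw [sub_zero, abs_of_nonneg Real.pi_pos.le]; ring
      _ ≤ Real.pi ^ k * S := by
          have : Real.pi ^ (k - 1) * Real.pi ≤ Real.pi ^ k := by
            rw [← pow_succ, show k - 1 + 1 = k by omega]
          exact mul_le_mul_of_nonneg_right this hS0
      _ = CC0 k := by rw [CC0]
  · intro θ hθ
    rw [Set.uIoc_of_le Real.pi_pos.le] at hθ
    obtain ⟨hθ0, hθπ⟩ := hθ
    have h1 : |evalL (Q k) t θ| ≤ S := evalL_abs_le_small _ ht0.le ht1
    have h2 : phi t θ ≤ 1 := phi_le_one ht0.le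
    have h2' : 0 ≤ phi t θ := Real.exp_nonneg _
    have h3 : |θ ^ (k - 1)| ≤ Real.pi ^ (k - 1) := by
      rw [abs_pow, abs_of_nonneg hθ0.le]
      exact pow_le_pow_left₀ hθ0.le hθπ _
    have h4 : |Real.sin (z * θ)| ≤ 1 := Real.abs_sin_le_one _
    rw [Real.norm_eq_abs, abs_mul, abs_mul, abs_mul]
    calc |evalL (Q k) t θ| * |phi t θ| * |θ ^ (k - 1)| * |Real.sin (z * θ)|
        ≤ S * 1 * Real.pi ^ (k - 1) * 1 := by
          gcongr
          · rw [abs_of_nonneg h2']; exact h2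
      _ = S * Real.pi ^ (k - 1) := by ring

lemma inner_large1 (k : ℕ) (hk : 1 ≤ k) {z t : ℝ} (ht : 1 ≤ t) (hz : 0 ≤ z) :
    |∫ θ in (0 : ℝ)..Real.pi,
        evalL (Q k) t θ * phi t θ * θ ^ (k - 1) * Real.sin (z * θ)|
      ≤ z * CC1 k * Real.sqrt t ^ (-3 : ℤ) := by
  have ht0 : (0 : ℝ) < t := lt_of_lt_of_le zero_lt_one ht
  have hg_cont : Continuous fun θ : ℝ => z * (|evalL (Q k) t θ| * phi t θ * θ ^ k) :=
    continuous_const.mul (((cont_evalL _ t).abs.mul (cont_phi t)).mul (continuous_pow k))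
  have h := intervalIntegral.norm_integral_le_abs_of_norm_le
    (f := fun θ => evalL (Q k) t θ * phi t θ * θ ^ (k - 1) * Real.sin (z * θ))
    (g := fun θ => z * (|evalL (Q k) t θ| * phi t θ * θ ^ k))
    (μ := MeasureTheory.volume) (a := 0) (b := Real.pi) ?_
    (hg_cont.intervalIntegrable 0 Real.pi)
  · have hg_nonneg : 0 ≤ ∫ θ in (0 : ℝ)..Real.pi, z * (|evalL (Q k) t θ| * phi t θ * θ ^ k) := by
      apply intervalIntegral.integral_nonneg Real.pi_pos.le
      intro θ hθ
      have := Real.exp_nonneg (-2 * t * (1 - Real.cos θ))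
      have hθ0 : 0 ≤ θ := hθ.1
      positivity
    rw [Real.norm_eq_abs, abs_of_nonneg hg_nonneg] at h
    have h2 : ∫ θ in (0 : ℝ)..Real.pi, z * (|evalL (Q k) t θ| * phi t θ * θ ^ k)
        = z * ∫ θ in (0 : ℝ)..Real.pi, |evalL (Q k) t θ| * phi t θ * θ ^ k :=
      intervalIntegral.integral_const_mul _ _
    have h3 : ∫ θ in (0 : ℝ)..Real.pi, |evalL (Q k) t θ| * phi t θ * θ ^ k
        ≤ CC1 k * Real.sqrt t ^ (-3 : ℤ) := by
      apply list_integral_bound _ k ht (-3)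
      intro T hT
      rcases inv_Q k T hT with h0 | hle
      · exact Or.inl h0
      · right; omega
    calc |∫ θ in (0 : ℝ)..Real.pi,
          evalL (Q k) t θ * phi t θ * θ ^ (k - 1) * Real.sin (z * θ)|
        ≤ z * ∫ θ in (0 : ℝ)..Real.pi, |evalL (Q k) t θ| * phi t θ * θ ^ k := h.trans_eq h2
      _ ≤ z * (CC1 k * Real.sqrt t ^ (-3 : ℤ)) := by
          apply mul_le_mul_of_nonneg_left h3 hz
      _ = z * CC1 k * Real.sqrt t ^ (-3 : ℤ) := by ring
  · filter_upwards [MeasureTheory.ae_restrict_mem measurableSet_uIoc] with θ hθ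
    rw [Set.uIoc_of_le Real.pi_pos.le] at hθ
    obtain ⟨hθ0, hθπ⟩ := hθ
    have hphi0 : 0 ≤ phi t θ := Real.exp_nonneg _
    have hsin : |Real.sin (z * θ)| ≤ z * θ := by
      have := Real.abs_sin_le_abs (x := z * θ)
      rwa [abs_of_nonneg (mul_nonneg hz hθ0.le)] at this
    rw [Real.norm_eq_abs, abs_mul, abs_mul, abs_mul]
    have hpow : |θ ^ (k - 1)| = θ ^ (k - 1) := abs_of_nonneg (pow_nonneg hθ0.le _)
    rw [hpow, abs_of_nonneg hphi0]
    calc |evalL (Q k) t θ| * phi t θ * θ ^ (k - 1) * |Real.sin (z * θ)|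
        ≤ |evalL (Q k) t θ| * phi t θ * θ ^ (k - 1) * (z * θ) := by
          apply mul_le_mul_of_nonneg_left hsin
          positivity
      _ = z * (|evalL (Q k) t θ| * phi t θ * (θ ^ (k - 1) * θ)) := by ring
      _ = z * (|evalL (Q k) t θ| * phi t θ * θ ^ k) := by
          rw [← pow_succ, show k - 1 + 1 = k by omega]



lemma u_zero (k : ℕ) (hk : 1 ≤ k) (t : ℝ) :
    evalL (Q k) t 0 * phi t 0 * (0 : ℝ) ^ (k - 1) = 0 := by
  rcases Nat.lt_or_ge k 2 with h2 | h2
  · have hk1 : k = 1 := by omega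
    subst hk1
    have h := evalL_zero (L := Q 1) ?_ t
    · rw [h]; ring
    · have := inv_Q 1
      simpa using this
  · rw [zero_pow (by omega : k - 1 ≠ 0)]; ring

lemma inner_large2 (k : ℕ) (hk : 1 ≤ k) {z t : ℝ} (ht : 1 ≤ t) (hz : 1 ≤ z) :
    |∫ θ in (0 : ℝ)..Real.pi,
        evalL (Q k) t θ * phi t θ * θ ^ (k - 1) * Real.sin (z * θ)|
      ≤ 1 / z * CC5 k * Real.sqrt t ^ (-1 : ℤ) := by
  have ht0 : (0 : ℝ) < t := lt_of_lt_of_le zero_lt_one ht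
  have hz0 : (0 : ℝ) < z := lt_of_lt_of_le zero_lt_one hz
  have hσ0 : (0 : ℝ) < Real.sqrt t := Real.sqrt_pos.mpr ht0
  set u : ℝ → ℝ := fun θ => evalL (Q k) t θ * phi t θ * θ ^ (k - 1) with hu_def
  set u' : ℝ → ℝ := fun θ => evalL (Dth (Q k)) t θ * phi t θ * θ ^ (k - 1)
      + evalL (Q k) t θ * phi t θ * (((k - 1 : ℕ) : ℝ) * θ ^ (k - 1 - 1)) with hu'_def
  set v : ℝ → ℝ := fun θ => -Real.cos (z * θ) / z with hv_def
  have hu : ∀ θ : ℝ, HasDerivAt u (u' θ) θ := by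
    intro θ
    exact (evalL_hasDerivAt_theta (Q k) t θ).mul (hasDerivAt_pow (k - 1) θ)
  have hv : ∀ θ : ℝ, HasDerivAt v (Real.sin (z * θ)) θ := by
    intro θ
    have h1 : HasDerivAt (fun θ : ℝ => z * θ) z θ := by
      simpa using (hasDerivAt_id θ).const_mul z
    have h2 : HasDerivAt (fun θ : ℝ => Real.cos (z * θ)) (-Real.sin (z * θ) * z) θ :=
      (Real.hasDerivAt_cos (z * θ)).comp θ h1
    have h3 := h2.neg.div_const z
    refine h3.congr_deriv ?_
    field_simp
  have hu'_cont : Continuous u' := by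
    apply Continuous.add
    · exact ((cont_evalL _ t).mul (cont_phi t)).mul (continuous_pow _)
    · exact ((cont_evalL _ t).mul (cont_phi t)).mul (continuous_const.mul (continuous_pow _))
  have hIBP := intervalIntegral.integral_mul_deriv_eq_deriv_mul
    (u := u) (v := v) (u' := u') (v' := fun θ => Real.sin (z * θ))
    (a := 0) (b := Real.pi)
    (fun x _ => hu x) (fun x _ => hv x)
    (hu'_cont.intervalIntegrable 0 Real.pi)
    ((Real.continuous_sin.comp (continuous_const.mul continuous_id)).intervalIntegrable 0 Real.pi)
  have hInn : (∫ θ in (0 : ℝ)..Real.pi,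
      evalL (Q k) t θ * phi t θ * θ ^ (k - 1) * Real.sin (z * θ))
      = u Real.pi * v Real.pi - u 0 * v 0 - ∫ θ in (0 : ℝ)..Real.pi, u' θ * v θ := hIBP
  have hu0 : u 0 = 0 := u_zero k hk t
  -- bound the boundary term
  have hvb : ∀ θ : ℝ, |v θ| ≤ 1 / z := by
    intro θ
    rw [hv_def]
    simp only [abs_div, abs_neg, abs_of_nonneg hz0.le]
    exact (div_le_div_iff_of_pos_right hz0).mpr (Real.abs_cos_le_one _)
  have hbdry : |u Real.pi| ≤ CC4 k * (Real.sqrt t)⁻¹ := by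
    rw [hu_def]
    simp only
    have hph : (0:ℝ) ≤ phi t Real.pi := Real.exp_nonneg _
    rw [abs_mul, abs_of_nonneg (pow_nonneg Real.pi_pos.le _), abs_mul,
      abs_of_nonneg hph]
    calc |evalL (Q k) t Real.pi| * phi t Real.pi * Real.pi ^ (k - 1)
        ≤ ((Q k).map fun T => |T.c| * 2 ^ T.e * (Nat.factorial (T.r + 1) : ℝ)).sum
            * (Real.sqrt t)⁻¹ * Real.pi ^ (k - 1) :=
          mul_le_mul_of_nonneg_right (evalL_boundary (Q k) ht)
            (pow_nonneg Real.pi_pos.le _)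
      _ = CC4 k * (Real.sqrt t)⁻¹ := by rw [CC4]; ring
  -- bound the remaining integral
  have hA : ∫ θ in (0 : ℝ)..Real.pi, |evalL (Dth (Q k)) t θ| * phi t θ * θ ^ (k - 1)
      ≤ CC2 k * Real.sqrt t ^ (-1 : ℤ) := by
    apply list_integral_bound _ (k - 1) ht (-1)
    intro T hT
    rcases inv_DthQ k T hT with h0 | hle
    · exact Or.inl h0
    · right; omega
  have hB : ∫ θ in (0 : ℝ)..Real.pi, |evalL (Q k) t θ| * phi t θ * θ ^ (k - 1 - 1)
      ≤ ((Q k).map fun T => |T.c| * Iq (T.a + 2 * T.e + (k - 1 - 1))).sum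
        * Real.sqrt t ^ (-1 : ℤ) := by
    apply list_integral_bound _ (k - 1 - 1) ht (-1)
    intro T hT
    rcases inv_Q k T hT with h0 | hle
    · exact Or.inl h0
    · right; omega
  have hg_cont : Continuous fun θ : ℝ =>
      1 / z * (|evalL (Dth (Q k)) t θ| * phi t θ * θ ^ (k - 1)
        + |evalL (Q k) t θ| * phi t θ * θ ^ (k - 1 - 1) * ((k - 1 : ℕ) : ℝ)) := by
    apply continuous_const.mul
    apply Continuous.add
    · exact ((cont_evalL _ t).abs.mul (cont_phi t)).mul (continuous_pow _)
    · exact (((cont_evalL _ t).abs.mul (cont_phi t)).mul (continuous_pow _)).mul continuous_const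
  have hint2 : |∫ θ in (0 : ℝ)..Real.pi, u' θ * v θ|
      ≤ 1 / z * ((CC2 k + CC3 k) * Real.sqrt t ^ (-1 : ℤ)) := by
    have h := intervalIntegral.norm_integral_le_abs_of_norm_le
      (f := fun θ => u' θ * v θ)
      (g := fun θ => 1 / z * (|evalL (Dth (Q k)) t θ| * phi t θ * θ ^ (k - 1)
        + |evalL (Q k) t θ| * phi t θ * θ ^ (k - 1 - 1) * ((k - 1 : ℕ) : ℝ)))
      (μ := MeasureTheory.volume) (a := 0) (b := Real.pi) ?_
      (hg_cont.intervalIntegrable 0 Real.pi)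
    · have hg_nonneg : 0 ≤ ∫ θ in (0 : ℝ)..Real.pi,
          1 / z * (|evalL (Dth (Q k)) t θ| * phi t θ * θ ^ (k - 1)
            + |evalL (Q k) t θ| * phi t θ * θ ^ (k - 1 - 1) * ((k - 1 : ℕ) : ℝ)) := by
        apply intervalIntegral.integral_nonneg Real.pi_pos.le
        intro θ hθ
        have hθ0 : 0 ≤ θ := hθ.1
        have h1 : 0 ≤ phi t θ := Real.exp_nonneg _
        positivity
      rw [Real.norm_eq_abs, abs_of_nonneg hg_nonneg] at h
      refine h.trans ?_
      rw [intervalIntegral.integral_const_mul]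
      apply mul_le_mul_of_nonneg_left ?_ (by positivity)
      have hsplit : ∫ θ in (0 : ℝ)..Real.pi,
          (|evalL (Dth (Q k)) t θ| * phi t θ * θ ^ (k - 1)
            + |evalL (Q k) t θ| * phi t θ * θ ^ (k - 1 - 1) * ((k - 1 : ℕ) : ℝ))
          = (∫ θ in (0 : ℝ)..Real.pi, |evalL (Dth (Q k)) t θ| * phi t θ * θ ^ (k - 1))
            + (∫ θ in (0 : ℝ)..Real.pi,
                |evalL (Q k) t θ| * phi t θ * θ ^ (k - 1 - 1)) * ((k - 1 : ℕ) : ℝ) := by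
        rw [← intervalIntegral.integral_mul_const,
          ← intervalIntegral.integral_add
            (f := fun θ => |evalL (Dth (Q k)) t θ| * phi t θ * θ ^ (k - 1))
            (g := fun θ => |evalL (Q k) t θ| * phi t θ * θ ^ (k - 1 - 1) * ((k - 1 : ℕ) : ℝ))
            ((((cont_evalL _ t).abs.mul (cont_phi t)).mul
              (continuous_pow _)).intervalIntegrable 0 Real.pi)
            (((((cont_evalL _ t).abs.mul (cont_phi t)).mul
              (continuous_pow _)).mul continuous_const).intervalIntegrable 0 Real.pi)]
      rw [hsplit]
      have h2 : (∫ θ in (0 : ℝ)..Real.pi,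
            |evalL (Q k) t θ| * phi t θ * θ ^ (k - 1 - 1)) * ((k - 1 : ℕ) : ℝ)
          ≤ CC3 k * Real.sqrt t ^ (-1 : ℤ) := by
        rw [CC3]
        calc (∫ θ in (0 : ℝ)..Real.pi, |evalL (Q k) t θ| * phi t θ * θ ^ (k - 1 - 1))
              * ((k - 1 : ℕ) : ℝ)
            ≤ ((Q k).map fun T => |T.c| * Iq (T.a + 2 * T.e + (k - 1 - 1))).sum
                * Real.sqrt t ^ (-1 : ℤ) * ((k - 1 : ℕ) : ℝ) :=
              mul_le_mul_of_nonneg_right hB (Nat.cast_nonneg _)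
          _ = ((k - 1 : ℕ) : ℝ)
              * ((Q k).map fun T => |T.c| * Iq (T.a + 2 * T.e + (k - 1 - 1))).sum
              * Real.sqrt t ^ (-1 : ℤ) := by ring
      calc (∫ θ in (0 : ℝ)..Real.pi, |evalL (Dth (Q k)) t θ| * phi t θ * θ ^ (k - 1))
            + (∫ θ in (0 : ℝ)..Real.pi,
                |evalL (Q k) t θ| * phi t θ * θ ^ (k - 1 - 1)) * ((k - 1 : ℕ) : ℝ)
          ≤ CC2 k * Real.sqrt t ^ (-1 : ℤ) + CC3 k * Real.sqrt t ^ (-1 : ℤ) :=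
            add_le_add hA h2
        _ = (CC2 k + CC3 k) * Real.sqrt t ^ (-1 : ℤ) := by ring
    · filter_upwards [MeasureTheory.ae_restrict_mem measurableSet_uIoc] with θ hθ
      rw [Set.uIoc_of_le Real.pi_pos.le] at hθ
      obtain ⟨hθ0, hθπ⟩ := hθ
      have h1 : 0 ≤ phi t θ := Real.exp_nonneg _
      rw [Real.norm_eq_abs, abs_mul]
      have hu'b : |u' θ| ≤ |evalL (Dth (Q k)) t θ| * phi t θ * θ ^ (k - 1)
          + |evalL (Q k) t θ| * phi t θ * θ ^ (k - 1 - 1) * ((k - 1 : ℕ) : ℝ) := by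
        rw [hu'_def]
        refine (abs_add_le _ _).trans ?_
        apply add_le_add
        · have hp1 : (0:ℝ) ≤ θ ^ (k-1) := pow_nonneg hθ0.le _
          rw [abs_mul, abs_mul, abs_of_nonneg h1, abs_of_nonneg hp1]
        · have hp2 : (0:ℝ) ≤ θ ^ (k-1-1) := pow_nonneg hθ0.le _
          have hp3 : (0:ℝ) ≤ ((k-1:ℕ):ℝ) := Nat.cast_nonneg _
          rw [abs_mul, abs_mul, abs_of_nonneg h1, abs_mul,
            abs_of_nonneg hp3, abs_of_nonneg hp2]
          apply le_of_eq
          ring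
      calc |u' θ| * |v θ|
          ≤ (|evalL (Dth (Q k)) t θ| * phi t θ * θ ^ (k - 1)
            + |evalL (Q k) t θ| * phi t θ * θ ^ (k - 1 - 1) * ((k - 1 : ℕ) : ℝ)) * (1 / z) := by
            apply mul_le_mul hu'b (hvb θ) (abs_nonneg _)
            positivity
        _ = 1 / z * (|evalL (Dth (Q k)) t θ| * phi t θ * θ ^ (k - 1)
            + |evalL (Q k) t θ| * phi t θ * θ ^ (k - 1 - 1) * ((k - 1 : ℕ) : ℝ)) := by ring
  -- put everything together
  rw [hInn, hu0, zero_mul, sub_zero]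
  have hzpow1 : Real.sqrt t ^ (-1 : ℤ) = (Real.sqrt t)⁻¹ := zpow_neg_one _
  calc |u Real.pi * v Real.pi - ∫ θ in (0 : ℝ)..Real.pi, u' θ * v θ|
      ≤ |u Real.pi * v Real.pi| + |∫ θ in (0 : ℝ)..Real.pi, u' θ * v θ| := abs_sub _ _
    _ ≤ CC4 k * (Real.sqrt t)⁻¹ * (1 / z)
        + 1 / z * ((CC2 k + CC3 k) * Real.sqrt t ^ (-1 : ℤ)) := by
        apply add_le_add _ hint2
        rw [abs_mul]
        exact mul_le_mul hbdry (hvb _) (abs_nonneg _)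
          (mul_nonneg (CC4_nonneg k) (inv_nonneg.mpr hσ0.le))
    _ = 1 / z * CC5 k * Real.sqrt t ^ (-1 : ℤ) := by
        rw [hzpow1, CC5]; ring

lemma sqrt_zpow' (m : ℤ) {t : ℝ} (ht : 0 < t) :
    Real.sqrt t ^ m = t ^ ((m : ℝ) / 2) := by
  rw [Real.sqrt_eq_rpow, ← Real.rpow_intCast (t ^ ((1 : ℝ) / 2)) m, ← Real.rpow_mul ht.le]
  congr 1
  ring

end PsiProp


open PsiProp in
/-- Proposition 2.7: uniform bound for the Psi-averaged integrals. -/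
theorem psi_integral_bounded (k : ℕ) (hk : 1 ≤ k) (Ψ : ℝ → ℂ)
    (hΨ : MemLp Ψ ⊤ (volume.restrict (Set.Ioi (0:ℝ)))) :
    ∃ C : ℝ, 0 < C ∧ ∀ z : ℝ, 1 ≤ z →
      ‖∫ t in Set.Ioi (0:ℝ), Ψ t *
          ((∫ θ in (0:ℝ)..Real.pi,
              deriv (fun s => iteratedDeriv k (phi s) θ) t * θ ^ (k - 1) * Real.sin (z * θ) : ℝ) : ℂ)‖
        ≤ C := by
  classical
  set NΨ := (eLpNorm Ψ ⊤ (volume.restrict (Set.Ioi (0:ℝ)))).toReal with hNdef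
  have hN0 : 0 ≤ NΨ := ENNReal.toReal_nonneg
  have hΨae : ∀ᵐ t ∂(volume.restrict (Set.Ioi (0:ℝ))), ‖Ψ t‖ ≤ NΨ := by
    filter_upwards [MeasureTheory.ae_le_eLpNormEssSup
      (f := Ψ) (μ := volume.restrict (Set.Ioi (0:ℝ)))] with t hle
    have hfin : eLpNormEssSup Ψ (volume.restrict (Set.Ioi (0:ℝ))) ≠ ⊤ := by
      rw [← MeasureTheory.eLpNorm_exponent_top]
      exact hΨ.2.ne
    calc ‖Ψ t‖ = ((‖Ψ t‖₊ : ℝ≥0∞)).toReal := by simp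
      _ ≤ (eLpNormEssSup Ψ (volume.restrict (Set.Ioi (0:ℝ)))).toReal :=
        ENNReal.toReal_mono hfin hle
      _ = NΨ := by rw [hNdef, MeasureTheory.eLpNorm_exponent_top]
  have hC0 := CC0_nonneg k; have hC1 := CC1_nonneg k; have hC5 := CC5_nonneg k
  set Ktot : ℝ := CC0 k + 2 * CC5 k + 2 * CC1 k with hKdef
  have hKtot0 : 0 ≤ Ktot := by rw [hKdef]; linarith
  refine ⟨NΨ * Ktot + 1, by nlinarith [mul_nonneg hN0 hKtot0], ?_⟩
  intro z hz
  have hz0 : (0:ℝ) < z := lt_of_lt_of_le zero_lt_one hz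
  simp only [PsiProp.deriv_t_eq]
  set B : ℝ → ℝ := fun t => if t ≤ 1 then CC0 k
    else min (z * CC1 k * t ^ (-(3:ℝ)/2)) (1 / z * CC5 k * t ^ (-(1:ℝ)/2)) with hBdef
  -- pointwise bound
  have hbound : ∀ t ∈ Set.Ioi (0:ℝ),
      |∫ θ in (0:ℝ)..Real.pi,
        evalL (Q k) t θ * phi t θ * θ ^ (k - 1) * Real.sin (z * θ)| ≤ B t := by
    intro t ht
    have ht0 : (0:ℝ) < t := ht
    by_cases h1 : t ≤ 1
    · rw [hBdef]; simp only [if_pos h1]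
      exact inner_small k hk z ht0 h1
    · push_neg at h1
      rw [hBdef]; simp only [if_neg (not_le.mpr h1)]
      have ht1 : (1:ℝ) ≤ t := h1.le
      apply le_min
      · calc |∫ θ in (0:ℝ)..Real.pi,
              evalL (Q k) t θ * phi t θ * θ ^ (k - 1) * Real.sin (z * θ)|
            ≤ z * CC1 k * Real.sqrt t ^ (-3 : ℤ) := inner_large1 k hk ht1 hz0.le
          _ = z * CC1 k * t ^ (-(3:ℝ)/2) := by rw [sqrt_zpow' (-3) ht0]; norm_num
      · calc |∫ θ in (0:ℝ)..Real.pi,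
              evalL (Q k) t θ * phi t θ * θ ^ (k - 1) * Real.sin (z * θ)|
            ≤ 1 / z * CC5 k * Real.sqrt t ^ (-1 : ℤ) := inner_large2 k hk ht1 hz
          _ = 1 / z * CC5 k * t ^ (-(1:ℝ)/2) := by rw [sqrt_zpow' (-1) ht0]; norm_num
  -- B is nonnegative on positive reals
  have hBnonneg : ∀ t : ℝ, 0 < t → 0 ≤ B t := by
    intro t ht0
    rw [hBdef]
    by_cases h1 : t ≤ 1
    · simp only [if_pos h1]; exact hC0
    · simp only [if_neg h1]
      apply le_min
      · have := Real.rpow_nonneg ht0.le (-(3:ℝ)/2); positivity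
      · have := Real.rpow_nonneg ht0.le (-(1:ℝ)/2); positivity
  -- integrability of B
  have hmin_contOn : ContinuousOn (fun t : ℝ =>
      min (z * CC1 k * t ^ (-(3:ℝ)/2)) (1 / z * CC5 k * t ^ (-(1:ℝ)/2))) (Set.Ioi (1:ℝ)) := by
    have hc1 : ContinuousOn (fun t : ℝ => z * CC1 k * t ^ (-(3:ℝ)/2)) (Set.Ioi (1:ℝ)) :=
      continuousOn_const.mul (ContinuousOn.rpow_const continuousOn_id
        (fun x hx => Or.inl (ne_of_gt (lt_trans zero_lt_one hx))))
    have hc2 : ContinuousOn (fun t : ℝ => 1 / z * CC5 k * t ^ (-(1:ℝ)/2)) (Set.Ioi (1:ℝ)) :=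
      continuousOn_const.mul (ContinuousOn.rpow_const continuousOn_id
        (fun x hx => Or.inl (ne_of_gt (lt_trans zero_lt_one hx))))
    exact continuous_min.comp_continuousOn (hc1.prodMk hc2)
  have hBeq1 : Set.EqOn (fun _ : ℝ => CC0 k) B (Set.Ioc (0:ℝ) 1) := by
    intro x hx
    rw [hBdef]
    simp only [if_pos hx.2]
  have hBeq2 : Set.EqOn B (fun t : ℝ =>
      min (z * CC1 k * t ^ (-(3:ℝ)/2)) (1 / z * CC5 k * t ^ (-(1:ℝ)/2))) (Set.Ioi (1:ℝ)) := by
    intro x hx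
    rw [hBdef]
    simp only [if_neg (not_le.mpr (show (1:ℝ) < x from hx))]
  have hIB1 : IntegrableOn B (Set.Ioc (0:ℝ) 1) volume :=
    (integrableOn_const (C := CC0 k) measure_Ioc_lt_top.ne).congr_fun hBeq1 measurableSet_Ioc
  have hIB2 : IntegrableOn B (Set.Ioi (1:ℝ)) volume := by
    apply MeasureTheory.Integrable.mono' (g := fun t => z * CC1 k * t ^ (-(3:ℝ)/2))
    · exact (integrableOn_Ioi_rpow_of_lt (by norm_num) zero_lt_one).const_mul (z * CC1 k)
    · exact ((hmin_contOn.aestronglyMeasurable measurableSet_Ioi).congr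
        (by filter_upwards [MeasureTheory.ae_restrict_mem measurableSet_Ioi] with x hx
            exact (hBeq2 hx).symm))
    · filter_upwards [MeasureTheory.ae_restrict_mem measurableSet_Ioi] with x hx
      have hx1 : (1:ℝ) < x := hx
      rw [hBeq2 hx, Real.norm_eq_abs,
        abs_of_nonneg (by
          apply le_min
          · have := Real.rpow_nonneg (lt_trans zero_lt_one hx1).le (-(3:ℝ)/2); positivity
          · have := Real.rpow_nonneg (lt_trans zero_lt_one hx1).le (-(1:ℝ)/2); positivity)]
      exact min_le_left _ _
  have hsplit1 : Set.Ioc (0:ℝ) 1 ∪ Set.Ioi (1:ℝ) = Set.Ioi (0:ℝ) :=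
    Set.Ioc_union_Ioi_eq_Ioi zero_le_one
  have hBint : IntegrableOn B (Set.Ioi (0:ℝ)) volume := by
    rw [← hsplit1]; exact hIB1.union hIB2
  -- compute the integral of B
  have hz2 : (1:ℝ) ≤ z ^ 2 := by nlinarith
  have hz20 : (0:ℝ) < z ^ 2 := by positivity
  have hzz : ((z:ℝ) ^ 2) ^ ((1:ℝ)/2) = z := by
    rw [← Real.rpow_natCast z 2, ← Real.rpow_mul hz0.le]
    norm_num
  have hzzneg : ((z:ℝ) ^ 2) ^ (-(1:ℝ)/2) = z⁻¹ := by
    rw [← Real.rpow_natCast z 2, ← Real.rpow_mul hz0.le]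
    norm_num [Real.rpow_neg_one]
  have hIBval : ∫ t in Set.Ioi (0:ℝ), B t ≤ Ktot := by
    rw [← hsplit1, MeasureTheory.setIntegral_union (Set.Ioc_disjoint_Ioi le_rfl)
      measurableSet_Ioi hIB1 hIB2]
    have hpart1 : ∫ t in Set.Ioc (0:ℝ) 1, B t = CC0 k := by
      rw [← MeasureTheory.setIntegral_congr_fun measurableSet_Ioc hBeq1]
      simp [Real.volume_Ioc]
    have hsplit2 : Set.Ioc (1:ℝ) (z^2) ∪ Set.Ioi (z^2) = Set.Ioi (1:ℝ) :=
      Set.Ioc_union_Ioi_eq_Ioi hz2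
    have hIB2a : IntegrableOn B (Set.Ioc (1:ℝ) (z^2)) volume :=
      hIB2.mono_set Set.Ioc_subset_Ioi_self
    have hIB2b : IntegrableOn B (Set.Ioi (z^2)) volume :=
      hIB2.mono_set (Set.Ioi_subset_Ioi hz2)
    have hpart2 : ∫ t in Set.Ioi (1:ℝ), B t ≤ 2 * CC5 k + 2 * CC1 k := by
      rw [← hsplit2, MeasureTheory.setIntegral_union (Set.Ioc_disjoint_Ioi le_rfl)
        measurableSet_Ioi hIB2a hIB2b]
      have ha : ∫ t in Set.Ioc (1:ℝ) (z^2), B t ≤ 2 * CC5 k := by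
        have hga : IntegrableOn (fun t : ℝ => 1 / z * CC5 k * t ^ (-(1:ℝ)/2))
            (Set.Ioc (1:ℝ) (z^2)) volume := by
          apply IntegrableOn.mono_set _ Set.Ioc_subset_Icc_self
          apply ContinuousOn.integrableOn_Icc
          exact continuousOn_const.mul (ContinuousOn.rpow_const continuousOn_id
            (fun x hx => Or.inl (ne_of_gt (lt_of_lt_of_le zero_lt_one hx.1))))
        have hmono := MeasureTheory.setIntegral_mono_on hIB2a hga measurableSet_Ioc
          (fun x hx => by
            rw [hBeq2 (Set.Ioc_subset_Ioi_self hx)]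
            exact min_le_right _ _)
        refine hmono.trans ?_
        rw [MeasureTheory.integral_const_mul]
        have hval : ∫ t in Set.Ioc (1:ℝ) (z^2), t ^ (-(1:ℝ)/2) ≤ 2 * z := by
          rw [← intervalIntegral.integral_of_le hz2]
          rw [integral_rpow (Or.inl (by norm_num : (-1:ℝ) < -(1:ℝ)/2))]
          rw [show -(1:ℝ)/2 + 1 = (1:ℝ)/2 by ring, hzz, Real.one_rpow]
          rw [div_le_iff₀ (by norm_num : (0:ℝ) < 1/2)]
          nlinarith
        calc 1 / z * CC5 k * ∫ t in Set.Ioc (1:ℝ) (z^2), t ^ (-(1:ℝ)/2)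
            ≤ 1 / z * CC5 k * (2 * z) := by
              apply mul_le_mul_of_nonneg_left hval (by positivity)
          _ = 2 * CC5 k := by field_simp
      have hb : ∫ t in Set.Ioi (z^2), B t ≤ 2 * CC1 k := by
        have hgb : IntegrableOn (fun t : ℝ => z * CC1 k * t ^ (-(3:ℝ)/2))
            (Set.Ioi (z^2)) volume :=
          (integrableOn_Ioi_rpow_of_lt (by norm_num) hz20).const_mul (z * CC1 k)
        have hmono := MeasureTheory.setIntegral_mono_on hIB2b hgb measurableSet_Ioi
          (fun x hx => by
            have hx1 : (1:ℝ) < x := lt_of_le_of_lt hz2 hx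
            rw [hBeq2 hx1]
            exact min_le_left _ _)
        refine hmono.trans ?_
        rw [MeasureTheory.integral_const_mul, integral_Ioi_rpow_of_lt (by norm_num) hz20]
        rw [show -(3:ℝ)/2 + 1 = -(1:ℝ)/2 by ring, hzzneg]
        rw [show -(z:ℝ)⁻¹ / (-(1:ℝ)/2) = 2 * z⁻¹ by ring]
        rw [show z * CC1 k * (2 * z⁻¹) = 2 * CC1 k * (z * z⁻¹) by ring,
          mul_inv_cancel₀ hz0.ne', mul_one]
      linarith
    rw [hpart1, hKdef]
    linarith
  -- final estimate
  have hgInt : Integrable (fun t => NΨ * B t) (volume.restrict (Set.Ioi (0:ℝ))) :=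
    hBint.const_mul NΨ
  refine (MeasureTheory.norm_integral_le_of_norm_le hgInt ?_).trans ?_
  · filter_upwards [hΨae, MeasureTheory.ae_restrict_mem measurableSet_Ioi] with t h1 h2
    rw [norm_mul, Complex.norm_real, Real.norm_eq_abs]
    exact mul_le_mul h1 (hbound t h2) (abs_nonneg _) hN0
  · rw [MeasureTheory.integral_const_mul]
    have := mul_le_mul_of_nonneg_left hIBval hN0
    linarith
end
end

section
/- Let Ψ : (0,∞) → ℂ be a measurable function with Ψ ∈ L^∞(0,∞). There exists a constant C > 0 such that |K_Ψ(n)| ≤ C/|n| for every n ∈ ℤ, n ≠ 0. -/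
open MeasureTheory Set
open scoped ENNReal NNReal Real

noncomputable section

namespace KkerAux

lemma two_mul_le_exp {y : ℝ} (hy : 0 ≤ y) : 2 * y ≤ Real.exp y := by
  have h := Real.add_one_le_exp (y / 2)
  have h2 : Real.exp y = Real.exp (y / 2) * Real.exp (y / 2) := by
    rw [← Real.exp_add]; ring_nf
  nlinarith [Real.exp_pos (y / 2), sq_nonneg (y / 2 - 1)]

lemma sq_le_exp {y : ℝ} (hy : 0 ≤ y) : y ^ 2 ≤ Real.exp y := by
  have h := two_mul_le_exp (by linarith : (0:ℝ) ≤ y / 2)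
  have h' : y ≤ Real.exp (y / 2) := by linarith
  have h2 : Real.exp y = Real.exp (y / 2) * Real.exp (y / 2) := by
    rw [← Real.exp_add]; ring_nf
  nlinarith [Real.exp_pos (y / 2)]

def fA (t θ : ℝ) : ℝ := -2 * (1 - Real.cos θ) * phi t θ
def fB (t θ : ℝ) : ℝ := (Real.sin θ * (4 * t * (1 - Real.cos θ) - 2)) * phi t θ
def fC (t θ : ℝ) : ℝ := (Real.cos θ * (4 * t * (1 - Real.cos θ) - 2)
    + Real.sin θ ^ 2 * (8 * t - 8 * t ^ 2 * (1 - Real.cos θ))) * phi t θ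

lemma continuous_phi (t : ℝ) : Continuous (fun θ => phi t θ) := by unfold phi; fun_prop
lemma continuous_fA (t : ℝ) : Continuous (fun θ => fA t θ) := by unfold fA phi; fun_prop
lemma continuous_fB (t : ℝ) : Continuous (fun θ => fB t θ) := by unfold fB phi; fun_prop
lemma continuous_fC (t : ℝ) : Continuous (fun θ => fC t θ) := by unfold fC phi; fun_prop

lemma hasDerivAt_phi_theta (t θ : ℝ) :
    HasDerivAt (fun x => phi t x) (-2 * t * Real.sin θ * phi t θ) θ := by
  have h1 : HasDerivAt (fun x : ℝ => 1 - Real.cos x) (Real.sin θ) θ := by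
    simpa using (Real.hasDerivAt_cos θ).const_sub 1
  have h2 := (h1.const_mul (-2 * t)).exp
  simp only [phi]
  convert h2 using 1
  ring

lemma hasDerivAt_fA (t θ : ℝ) : HasDerivAt (fun x => fA t x) (fB t θ) θ := by
  have h1 : HasDerivAt (fun x : ℝ => -2 * (1 - Real.cos x)) (-2 * Real.sin θ) θ := by
    simpa using ((Real.hasDerivAt_cos θ).const_sub 1).const_mul (-2)
  have h2 := h1.mul (hasDerivAt_phi_theta t θ)
  simp only [fA]
  exact h2.congr_deriv (by unfold fB; ring)

lemma hasDerivAt_fB (t θ : ℝ) : HasDerivAt (fun x => fB t x) (fC t θ) θ := by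
  have h3 : HasDerivAt (fun x : ℝ => 4 * t * (1 - Real.cos x) - 2) (4 * t * Real.sin θ) θ := by
    simpa using (((Real.hasDerivAt_cos θ).const_sub 1).const_mul (4 * t)).sub_const 2
  have hs := (Real.hasDerivAt_sin θ).mul h3
  have h2 := hs.mul (hasDerivAt_phi_theta t θ)
  simp only [fB]
  exact h2.congr_deriv (by unfold fC; simp only [Pi.mul_apply]; ring)


open intervalIntegral Real

lemma fA_cos_ibp (t : ℝ) {n : ℤ} (hn : n ≠ 0) :
    ∫ θ in (0:ℝ)..π, fA t θ * Real.cos ((n:ℝ) * θ)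
      = -(1 / (n:ℝ) ^ 2) * ∫ θ in (0:ℝ)..π, fC t θ * Real.cos ((n:ℝ) * θ) := by
  have hn' : ((n:ℝ)) ≠ 0 := Int.cast_ne_zero.mpr hn
  have hv : ∀ θ : ℝ, HasDerivAt (fun x => Real.sin ((n:ℝ) * x) / (n:ℝ))
      (Real.cos ((n:ℝ) * θ)) θ := by
    intro θ
    have h := ((Real.hasDerivAt_sin ((n:ℝ) * θ)).comp θ
      ((hasDerivAt_id θ).const_mul (n:ℝ))).div_const (n:ℝ)
    exact h.congr_deriv (by field_simp)
  have hw : ∀ θ : ℝ, HasDerivAt (fun x => -Real.cos ((n:ℝ) * x) / (n:ℝ) ^ 2)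
      (Real.sin ((n:ℝ) * θ) / (n:ℝ)) θ := by
    intro θ
    have h := (((Real.hasDerivAt_cos ((n:ℝ) * θ)).comp θ
      ((hasDerivAt_id θ).const_mul (n:ℝ))).neg).div_const ((n:ℝ) ^ 2)
    exact h.congr_deriv (by field_simp)
  have int_fB : IntervalIntegrable (fun θ => fB t θ) MeasureTheory.volume 0 π :=
    (continuous_fB t).intervalIntegrable _ _
  have int_fC : IntervalIntegrable (fun θ => fC t θ) MeasureTheory.volume 0 π :=
    (continuous_fC t).intervalIntegrable _ _
  have int_cos : IntervalIntegrable (fun θ => Real.cos ((n:ℝ) * θ)) MeasureTheory.volume 0 π := by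
    apply Continuous.intervalIntegrable; fun_prop
  have int_sin : IntervalIntegrable (fun θ => Real.sin ((n:ℝ) * θ) / (n:ℝ))
      MeasureTheory.volume 0 π := by
    apply Continuous.intervalIntegrable; fun_prop
  have step1 := intervalIntegral.integral_mul_deriv_eq_deriv_mul
      (u := fun θ => fA t θ) (u' := fun θ => fB t θ)
      (v := fun x => Real.sin ((n:ℝ) * x) / (n:ℝ)) (v' := fun θ => Real.cos ((n:ℝ) * θ))
      (fun x _ => hasDerivAt_fA t x) (fun x _ => hv x) int_fB int_cos
  have step2 := intervalIntegral.integral_mul_deriv_eq_deriv_mul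
      (u := fun θ => fB t θ) (u' := fun θ => fC t θ)
      (v := fun x => -Real.cos ((n:ℝ) * x) / (n:ℝ) ^ 2)
      (v' := fun θ => Real.sin ((n:ℝ) * θ) / (n:ℝ))
      (fun x _ => hasDerivAt_fB t x) (fun x _ => hw x) int_fC int_sin
  have e0 : fA t 0 = 0 := by simp [fA]
  have b0 : fB t 0 = 0 := by simp [fB]
  have bπ : fB t π = 0 := by simp [fB, Real.sin_pi]
  have eπ : Real.sin ((n:ℝ) * π) = 0 := Real.sin_int_mul_pi n
  have hT : ∫ x in (0:ℝ)..π, fC t x * (-Real.cos ((n:ℝ) * x) / (n:ℝ) ^ 2)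
      = -(1 / (n:ℝ) ^ 2) * ∫ x in (0:ℝ)..π, fC t x * Real.cos ((n:ℝ) * x) := by
    rw [← intervalIntegral.integral_const_mul]
    apply intervalIntegral.integral_congr
    intro x _
    field_simp
  rw [step1, step2]
  beta_reduce
  rw [e0, b0, bπ, eπ, hT]
  simp


lemma one_sub_cos_lower {θ : ℝ} (h0 : 0 ≤ θ) (h1 : θ ≤ π) :
    2 / π ^ 2 * θ ^ 2 ≤ 1 - Real.cos θ := by
  have hπ := Real.pi_pos
  have hs : Real.cos θ = 1 - 2 * Real.sin (θ / 2) ^ 2 := by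
    have h := Real.cos_two_mul' (θ / 2)
    rw [show 2 * (θ / 2) = θ by ring] at h
    have h2 := Real.sin_sq_add_cos_sq (θ / 2)
    linarith
  have hsin : θ / π ≤ Real.sin (θ / 2) := by
    have h := Real.mul_le_sin (x := θ / 2) (by linarith) (by linarith)
    calc θ / π = 2 / π * (θ / 2) := by ring
    _ ≤ Real.sin (θ / 2) := h
  have hθπ : 0 ≤ θ / π := div_nonneg h0 hπ.le
  have hsq : (θ / π) ^ 2 ≤ Real.sin (θ / 2) ^ 2 := by
    have := pow_le_pow_left₀ hθπ hsin 2
    simpa using this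
  calc 2 / π ^ 2 * θ ^ 2 = 2 * (θ / π) ^ 2 := by field_simp
  _ ≤ 2 * Real.sin (θ / 2) ^ 2 := by linarith
  _ = 1 - Real.cos θ := by rw [hs]; ring

lemma exp_mono_bound {t θ : ℝ} (ht : 0 ≤ t) (h0 : 0 ≤ θ) (h1 : θ ≤ π) :
    Real.exp (-(t * (1 - Real.cos θ))) ≤ Real.exp (-(2 / π ^ 2 * t) * θ ^ 2) := by
  apply Real.exp_le_exp.mpr
  have hl := one_sub_cos_lower h0 h1
  nlinarith [mul_le_mul_of_nonneg_left hl ht]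

lemma abs_fA_le {t θ : ℝ} (ht : 0 < t) (h0 : 0 ≤ θ) (h1 : θ ≤ π) :
    |fA t θ| ≤ (1 / t) * Real.exp (-(2 / π ^ 2 * t) * θ ^ 2) := by
  set u := 1 - Real.cos θ with hu
  have hu0 : 0 ≤ u := by have := Real.cos_le_one θ; simp [hu]; linarith
  have habs : |fA t θ| = 2 * u * Real.exp (-2 * t * u) := by
    unfold fA phi
    rw [abs_mul, abs_of_pos (Real.exp_pos _), abs_of_nonpos (by nlinarith : -2 * u ≤ 0)]
    ring
  have key : 2 * u * Real.exp (-2 * t * u) ≤ (1 / t) * Real.exp (-(t * u)) := by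
    have h2 : 2 * (t * u) ≤ Real.exp (t * u) := two_mul_le_exp (by positivity)
    have e : Real.exp (t * u) * Real.exp (-2 * t * u) = Real.exp (-(t * u)) := by
      rw [← Real.exp_add]; ring_nf
    have epos := (Real.exp_pos (-2 * t * u)).le
    calc 2 * u * Real.exp (-2 * t * u) = (1 / t) * (2 * (t * u)) * Real.exp (-2 * t * u) := by
          field_simp
    _ ≤ (1 / t) * Real.exp (t * u) * Real.exp (-2 * t * u) := by
          have h1t : (0:ℝ) ≤ 1 / t := by positivity
          have := mul_le_mul_of_nonneg_left h2 h1t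
          exact mul_le_mul_of_nonneg_right this epos
    _ = (1 / t) * Real.exp (-(t * u)) := by rw [mul_assoc, e]
  have mono := exp_mono_bound ht.le h0 h1
  rw [habs]
  calc 2 * u * Real.exp (-2 * t * u) ≤ (1 / t) * Real.exp (-(t * u)) := key
  _ ≤ (1 / t) * Real.exp (-(2 / π ^ 2 * t) * θ ^ 2) := by
      apply mul_le_mul_of_nonneg_left _ (by positivity : (0:ℝ) ≤ 1 / t)
      exact mono

lemma abs_fC_le {t θ : ℝ} (ht : 0 ≤ t) (h0 : 0 ≤ θ) (h1 : θ ≤ π) :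
    |fC t θ| ≤ 28 * Real.exp (-(2 / π ^ 2 * t) * θ ^ 2) := by
  set u := 1 - Real.cos θ with hu
  have hu0 : 0 ≤ u := by have := Real.cos_le_one θ; simp [hu]; linarith
  set y := t * u with hy
  have hy0 : 0 ≤ y := mul_nonneg ht hu0
  have h1' : |fC t θ| ≤ (2 + 20 * y + 16 * y ^ 2) * Real.exp (-2 * t * u) := by
    unfold fC phi
    rw [abs_mul, abs_of_pos (Real.exp_pos _)]
    apply mul_le_mul_of_nonneg_right _ (Real.exp_pos _).le
    have hc := abs_cos_le_one θ
    have hs2 : Real.sin θ ^ 2 ≤ 2 * u := by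
      have := Real.sin_sq_add_cos_sq θ
      have h2 := Real.cos_le_one θ
      have h3 := Real.neg_one_le_cos θ
      nlinarith
    have hs0 : (0:ℝ) ≤ Real.sin θ ^ 2 := sq_nonneg _
    have habs1 : |Real.cos θ * (4 * t * u - 2)| ≤ 4 * y + 2 := by
      rw [abs_mul]
      have h4 : |4 * t * u - 2| ≤ 4 * y + 2 := by
        rw [abs_le]; constructor <;> nlinarith
      nlinarith [abs_nonneg (4 * t * u - 2), abs_nonneg (Real.cos θ)]
    have habs2 : |Real.sin θ ^ 2 * (8 * t - 8 * t ^ 2 * u)| ≤ 16 * y + 16 * y ^ 2 := by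
      rw [abs_mul, abs_of_nonneg hs0]
      have h5 : |8 * t - 8 * t ^ 2 * u| ≤ 8 * t * (1 + y) := by
        rw [abs_le]; constructor <;> nlinarith
      calc Real.sin θ ^ 2 * |8 * t - 8 * t ^ 2 * u| ≤ 2 * u * (8 * t * (1 + y)) := by
            apply mul_le_mul hs2 h5 (abs_nonneg _) (by linarith)
      _ = 16 * y + 16 * y ^ 2 := by rw [hy]; ring
    calc |Real.cos θ * (4 * t * u - 2) + Real.sin θ ^ 2 * (8 * t - 8 * t ^ 2 * u)|
        ≤ |Real.cos θ * (4 * t * u - 2)| + |Real.sin θ ^ 2 * (8 * t - 8 * t ^ 2 * u)| :=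
          abs_add_le _ _
    _ ≤ (4 * y + 2) + (16 * y + 16 * y ^ 2) := by linarith
    _ = 2 + 20 * y + 16 * y ^ 2 := by ring
  have h2' : (2 + 20 * y + 16 * y ^ 2) * Real.exp (-2 * t * u) ≤ 28 * Real.exp (-(t * u)) := by
    have a1 := two_mul_le_exp hy0
    have a2 := sq_le_exp hy0
    have a3 : (1:ℝ) ≤ Real.exp y := by have := Real.add_one_le_exp y; linarith
    have sum : 2 + 20 * y + 16 * y ^ 2 ≤ 28 * Real.exp y := by nlinarith
    have eid : Real.exp y * Real.exp (-2 * t * u) = Real.exp (-(t * u)) := by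
      rw [← Real.exp_add, hy]; ring_nf
    have epos := (Real.exp_pos (-2 * t * u)).le
    calc (2 + 20 * y + 16 * y ^ 2) * Real.exp (-2 * t * u)
        ≤ (28 * Real.exp y) * Real.exp (-2 * t * u) :=
          mul_le_mul_of_nonneg_right sum epos
    _ = 28 * Real.exp (-(t * u)) := by rw [mul_assoc, eid]
  have h3' := exp_mono_bound ht h0 h1
  calc |fC t θ| ≤ (2 + 20 * y + 16 * y ^ 2) * Real.exp (-2 * t * u) := h1'
  _ ≤ 28 * Real.exp (-(t * u)) := h2'
  _ ≤ 28 * Real.exp (-(2 / π ^ 2 * t) * θ ^ 2) := by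
      apply mul_le_mul_of_nonneg_left h3' (by norm_num)

lemma exp_integral_le {t : ℝ} (ht : 0 < t) :
    ∫ θ in (0:ℝ)..π, Real.exp (-(2 / π ^ 2 * t) * θ ^ 2) ≤ 2 / Real.sqrt t := by
  have hπ := Real.pi_pos
  have hb : 0 < 2 / π ^ 2 * t := by positivity
  rw [intervalIntegral.integral_of_le Real.pi_pos.le]
  have h2 : ∫ θ in Ioc (0:ℝ) π, Real.exp (-(2 / π ^ 2 * t) * θ ^ 2)
      ≤ ∫ θ in Ioi (0:ℝ), Real.exp (-(2 / π ^ 2 * t) * θ ^ 2) := by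
    apply setIntegral_mono_set (integrable_exp_neg_mul_sq hb).integrableOn
      (Filter.Eventually.of_forall fun x => (Real.exp_pos _).le)
    exact HasSubset.Subset.eventuallyLE Ioc_subset_Ioi_self
  have h3 : ∫ θ in Ioi (0:ℝ), Real.exp (-(2 / π ^ 2 * t) * θ ^ 2)
      = Real.sqrt (π / (2 / π ^ 2 * t)) / 2 := integral_gaussian_Ioi _
  have hcube : π ^ 3 < 32 := by nlinarith [Real.pi_lt_d2, Real.pi_pos]
  have h4 : π / (2 / π ^ 2 * t) ≤ 16 / t := by
    have heq : π / (2 / π ^ 2 * t) = π ^ 3 / (2 * t) := by field_simp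
    rw [heq, div_le_div_iff₀ (by positivity) ht]
    nlinarith
  have h5 : Real.sqrt (π / (2 / π ^ 2 * t)) ≤ Real.sqrt (16 / t) := Real.sqrt_le_sqrt h4
  have h6 : Real.sqrt (16 / t) = 4 / Real.sqrt t := by
    rw [Real.sqrt_div (by norm_num : (0:ℝ) ≤ 16) t,
      show (16:ℝ) = 4 ^ 2 by norm_num, Real.sqrt_sq (by norm_num : (0:ℝ) ≤ 4)]
  have hst : 0 < Real.sqrt t := Real.sqrt_pos.mpr ht
  calc ∫ θ in Ioc (0:ℝ) π, Real.exp (-(2 / π ^ 2 * t) * θ ^ 2)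
      ≤ Real.sqrt (π / (2 / π ^ 2 * t)) / 2 := by rw [← h3]; exact h2
  _ ≤ (4 / Real.sqrt t) / 2 := by rw [← h6]; linarith
  _ = 2 / Real.sqrt t := by ring

end KkerAux
namespace KkerAux2

open KkerAux intervalIntegral Real

lemma hasDerivAt_Gker (n : ℤ) {t : ℝ} (ht : 0 < t) :
    HasDerivAt (fun s => Gker n s)
      ((1 / π) * ∫ θ in (0:ℝ)..π, fA t θ * Real.cos ((n:ℝ) * θ)) t := by
  have main := intervalIntegral.hasDerivAt_integral_of_dominated_loc_of_deriv_le
    (F := fun s θ => phi s θ * Real.cos ((n:ℝ) * θ))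
    (F' := fun s θ => fA s θ * Real.cos ((n:ℝ) * θ))
    (x₀ := t) (s := Metric.ball t (t / 2)) (a := (0:ℝ)) (b := π) (μ := MeasureTheory.volume)
    (bound := fun _ => 4) (Metric.ball_mem_nhds t (half_pos ht))
    (Filter.Eventually.of_forall fun x =>
      (((continuous_phi x).mul (by fun_prop)).aestronglyMeasurable).restrict)
    (((continuous_phi t).mul (by fun_prop)).intervalIntegrable _ _)
    ((((continuous_fA t).mul (by fun_prop)).aestronglyMeasurable).restrict)
    ?bnd (intervalIntegrable_const) ?diff
  case bnd =>
    apply Filter.Eventually.of_forall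
    intro θ _ x hx
    rw [Metric.mem_ball, Real.dist_eq] at hx
    have hx0 : 0 < x := by have := abs_lt.mp hx; linarith
    have hu0 : 0 ≤ 1 - Real.cos θ := by have := Real.cos_le_one θ; linarith
    have hu2 : 1 - Real.cos θ ≤ 2 := by have := Real.neg_one_le_cos θ; linarith
    have hexp : Real.exp (-2 * x * (1 - Real.cos θ)) ≤ 1 :=
      Real.exp_le_one_iff.mpr (by nlinarith)
    beta_reduce
    rw [Real.norm_eq_abs, abs_mul]
    have hcos := Real.abs_cos_le_one ((n:ℝ) * θ)
    have hfa : |fA x θ| ≤ 4 := by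
      unfold fA phi
      rw [abs_mul, abs_of_pos (Real.exp_pos _),
        abs_of_nonpos (by linarith : -2 * (1 - Real.cos θ) ≤ 0)]
      nlinarith [Real.exp_pos (-2 * x * (1 - Real.cos θ))]
    nlinarith [abs_nonneg (fA x θ), abs_nonneg (Real.cos ((n:ℝ) * θ))]
  case diff =>
    apply Filter.Eventually.of_forall
    intro θ _ x _
    have hinner : HasDerivAt (fun s : ℝ => -2 * s * (1 - Real.cos θ))
        (-2 * (1 - Real.cos θ)) x := by
      simpa using ((hasDerivAt_id x).const_mul (-2:ℝ)).mul_const (1 - Real.cos θ)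
    have h2 := (hinner.exp).mul_const (Real.cos ((n:ℝ) * θ))
    have : HasDerivAt (fun s : ℝ => phi s θ * Real.cos ((n:ℝ) * θ))
        (Real.exp (-2 * x * (1 - Real.cos θ)) * (-2 * (1 - Real.cos θ)) * Real.cos ((n:ℝ) * θ)) x := h2
    exact this.congr_deriv (by unfold fA phi; ring)
  have h := main.2.const_mul (1 / π)
  simpa [Gker] using h



open KkerAux intervalIntegral Real

lemma deriv_Gker_eq (n : ℤ) {t : ℝ} (ht : 0 < t) :
    deriv (fun s => Gker n s) t
      = (1 / π) * ∫ θ in (0:ℝ)..π, fA t θ * Real.cos ((n:ℝ) * θ) :=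
  (hasDerivAt_Gker n ht).deriv

lemma exp_int_nonneg (t : ℝ) :
    0 ≤ ∫ θ in (0:ℝ)..π, Real.exp (-(2 / π ^ 2 * t) * θ ^ 2) :=
  intervalIntegral.integral_nonneg Real.pi_pos.le (fun x _ => (Real.exp_pos _).le)

lemma exp_int_intervalIntegrable (t c : ℝ) :
    IntervalIntegrable (fun θ => c * Real.exp (-(2 / π ^ 2 * t) * θ ^ 2))
      MeasureTheory.volume 0 π := by
  apply Continuous.intervalIntegrable; fun_prop

lemma abs_deriv_le₁ (n : ℤ) {t : ℝ} (ht : 0 < t) :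
    |deriv (fun s => Gker n s) t| ≤ 2 / (π * t * Real.sqrt t) := by
  have hπ := Real.pi_pos
  have hst := Real.sqrt_pos.mpr ht
  rw [deriv_Gker_eq n ht, abs_mul]
  have hb := intervalIntegral.norm_integral_le_abs_of_norm_le
    (f := fun θ => fA t θ * Real.cos ((n:ℝ) * θ))
    (g := fun θ => (1 / t) * Real.exp (-(2 / π ^ 2 * t) * θ ^ 2))
    (μ := MeasureTheory.volume) (a := 0) (b := π) ?ae (exp_int_intervalIntegrable t (1/t))
  case ae =>
    rw [uIoc_of_le Real.pi_pos.le]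
    filter_upwards [MeasureTheory.ae_restrict_mem measurableSet_Ioc] with θ hθ
    rw [Real.norm_eq_abs, abs_mul]
    have h1 := abs_fA_le ht hθ.1.le hθ.2
    have h2 := Real.abs_cos_le_one ((n:ℝ) * θ)
    calc |fA t θ| * |Real.cos ((n:ℝ) * θ)| ≤ |fA t θ| * 1 :=
          mul_le_mul_of_nonneg_left h2 (abs_nonneg _)
    _ = |fA t θ| := mul_one _
    _ ≤ (1 / t) * Real.exp (-(2 / π ^ 2 * t) * θ ^ 2) := h1
  rw [Real.norm_eq_abs] at hb
  have hg : ∫ θ in (0:ℝ)..π, (1 / t) * Real.exp (-(2 / π ^ 2 * t) * θ ^ 2)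
      = (1 / t) * ∫ θ in (0:ℝ)..π, Real.exp (-(2 / π ^ 2 * t) * θ ^ 2) :=
    intervalIntegral.integral_const_mul _ _
  have hE := exp_integral_le ht
  have hEnn := exp_int_nonneg t
  have key : |∫ θ in (0:ℝ)..π, fA t θ * Real.cos ((n:ℝ) * θ)| ≤ (1 / t) * (2 / Real.sqrt t) := by
    calc |∫ θ in (0:ℝ)..π, fA t θ * Real.cos ((n:ℝ) * θ)|
        ≤ |∫ θ in (0:ℝ)..π, (1 / t) * Real.exp (-(2 / π ^ 2 * t) * θ ^ 2)| := hb
    _ = (1 / t) * ∫ θ in (0:ℝ)..π, Real.exp (-(2 / π ^ 2 * t) * θ ^ 2) := by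
        rw [hg, abs_of_nonneg (by positivity)]
    _ ≤ (1 / t) * (2 / Real.sqrt t) := by
        apply mul_le_mul_of_nonneg_left hE (by positivity)
  calc |1 / π| * |∫ θ in (0:ℝ)..π, fA t θ * Real.cos ((n:ℝ) * θ)|
      ≤ (1 / π) * ((1 / t) * (2 / Real.sqrt t)) := by
        rw [abs_of_pos (by positivity : (0:ℝ) < 1 / π)]
        exact mul_le_mul_of_nonneg_left key (by positivity)
  _ = 2 / (π * t * Real.sqrt t) := by field_simp

lemma abs_deriv_le₂ {n : ℤ} (hn : n ≠ 0) {t : ℝ} (ht : 0 < t) :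
    |deriv (fun s => Gker n s) t| ≤ 56 / (π * (n:ℝ) ^ 2 * Real.sqrt t) := by
  have hπ := Real.pi_pos
  have hst := Real.sqrt_pos.mpr ht
  have hn' : ((n:ℝ)) ≠ 0 := Int.cast_ne_zero.mpr hn
  have hn2 : (0:ℝ) < (n:ℝ) ^ 2 := by positivity
  rw [deriv_Gker_eq n ht, fA_cos_ibp t hn, abs_mul, abs_mul]
  have hb := intervalIntegral.norm_integral_le_abs_of_norm_le
    (f := fun θ => fC t θ * Real.cos ((n:ℝ) * θ))
    (g := fun θ => 28 * Real.exp (-(2 / π ^ 2 * t) * θ ^ 2))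
    (μ := MeasureTheory.volume) (a := 0) (b := π) ?ae (exp_int_intervalIntegrable t 28)
  case ae =>
    rw [uIoc_of_le Real.pi_pos.le]
    filter_upwards [MeasureTheory.ae_restrict_mem measurableSet_Ioc] with θ hθ
    rw [Real.norm_eq_abs, abs_mul]
    have h1 := abs_fC_le ht.le hθ.1.le hθ.2
    have h2 := Real.abs_cos_le_one ((n:ℝ) * θ)
    calc |fC t θ| * |Real.cos ((n:ℝ) * θ)| ≤ |fC t θ| * 1 :=
          mul_le_mul_of_nonneg_left h2 (abs_nonneg _)
    _ = |fC t θ| := mul_one _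
    _ ≤ 28 * Real.exp (-(2 / π ^ 2 * t) * θ ^ 2) := h1
  rw [Real.norm_eq_abs] at hb
  have hg : ∫ θ in (0:ℝ)..π, 28 * Real.exp (-(2 / π ^ 2 * t) * θ ^ 2)
      = 28 * ∫ θ in (0:ℝ)..π, Real.exp (-(2 / π ^ 2 * t) * θ ^ 2) :=
    intervalIntegral.integral_const_mul _ _
  have hE := exp_integral_le ht
  have hEnn := exp_int_nonneg t
  have key : |∫ θ in (0:ℝ)..π, fC t θ * Real.cos ((n:ℝ) * θ)| ≤ 28 * (2 / Real.sqrt t) := by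
    calc |∫ θ in (0:ℝ)..π, fC t θ * Real.cos ((n:ℝ) * θ)|
        ≤ |∫ θ in (0:ℝ)..π, 28 * Real.exp (-(2 / π ^ 2 * t) * θ ^ 2)| := hb
    _ = 28 * ∫ θ in (0:ℝ)..π, Real.exp (-(2 / π ^ 2 * t) * θ ^ 2) := by
        rw [hg, abs_of_nonneg (by positivity)]
    _ ≤ 28 * (2 / Real.sqrt t) := by
        apply mul_le_mul_of_nonneg_left hE (by norm_num)
  calc |1 / π| * (|-(1 / (n:ℝ) ^ 2)| * |∫ θ in (0:ℝ)..π, fC t θ * Real.cos ((n:ℝ) * θ)|)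
      ≤ (1 / π) * ((1 / (n:ℝ) ^ 2) * (28 * (2 / Real.sqrt t))) := by
        rw [abs_of_pos (by positivity : (0:ℝ) < 1 / π), abs_neg,
          abs_of_pos (by positivity : (0:ℝ) < 1 / (n:ℝ) ^ 2)]
        apply mul_le_mul_of_nonneg_left _ (by positivity)
        exact mul_le_mul_of_nonneg_left key (by positivity)
  _ = 56 / (π * (n:ℝ) ^ 2 * Real.sqrt t) := by field_simp; ring



open KkerAux Real MeasureTheory

lemma rpow_neg_half {t : ℝ} (ht : 0 < t) : t ^ (-(1:ℝ)/2) = (Real.sqrt t)⁻¹ := by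
  rw [show -(1:ℝ)/2 = -(1/2) by norm_num, Real.rpow_neg ht.le, Real.sqrt_eq_rpow]

lemma rpow_neg_threehalf {t : ℝ} (ht : 0 < t) : t ^ (-(3:ℝ)/2) = (t * Real.sqrt t)⁻¹ := by
  rw [show -(3:ℝ)/2 = -(3/2) by norm_num, Real.rpow_neg ht.le]
  congr 1
  rw [show (3:ℝ)/2 = 1 + 1/2 by norm_num, Real.rpow_add ht, Real.rpow_one, Real.sqrt_eq_rpow]

end KkerAux2

/-- Estimate (eq5.2): size bound for the kernel of the Laplace transform type multiplier. -/
theorem Kker_size_bound (Ψ : ℝ → ℂ)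
    (hΨ : MemLp Ψ ⊤ (volume.restrict (Set.Ioi (0:ℝ)))) :
    ∃ C : ℝ, 0 < C ∧ ∀ n : ℤ, n ≠ 0 → ‖Kker Ψ n‖ ≤ C / |(n : ℝ)| := by
  have hπ := Real.pi_pos
  set M : ℝ := (eLpNormEssSup Ψ (volume.restrict (Set.Ioi (0:ℝ)))).toReal with hMdef
  have hM0 : 0 ≤ M := ENNReal.toReal_nonneg
  refine ⟨38 * M + 1, by linarith, ?_⟩
  intro n hn
  have hn' : ((n:ℝ)) ≠ 0 := Int.cast_ne_zero.mpr hn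
  have habsn : 0 < |(n:ℝ)| := abs_pos.mpr hn'
  have hΨae : ∀ᵐ t ∂(volume.restrict (Set.Ioi (0:ℝ))), ‖Ψ t‖ ≤ M := by
    have h := ae_le_eLpNormEssSup (f := Ψ) (μ := volume.restrict (Set.Ioi (0:ℝ)))
    have hfin : eLpNormEssSup Ψ (volume.restrict (Set.Ioi (0:ℝ))) ≠ ⊤ := by
      have h2 := hΨ.2; rw [eLpNorm_exponent_top] at h2; exact h2.ne
    filter_upwards [h] with x hx
    have h3 : ((‖Ψ x‖₊ : ℝ≥0∞)).toReal
        ≤ (eLpNormEssSup Ψ (volume.restrict (Set.Ioi (0:ℝ)))).toReal :=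
      ENNReal.toReal_mono hfin hx
    simpa using h3
  set R : ℝ := (n:ℝ) ^ 2 with hRdef
  have hR0 : 0 < R := by positivity
  by_cases hint : Integrable (fun t => Ψ t * ((deriv (fun s => Gker n s) t : ℝ) : ℂ))
      (volume.restrict (Set.Ioi (0:ℝ)))
  case neg =>
    rw [Kker, integral_undef hint, neg_zero, norm_zero]
    positivity
  case pos =>
  have hsq : Real.sqrt R = |(n:ℝ)| := by rw [hRdef, Real.sqrt_sq_eq_abs]
  have hR12 : R ^ ((1:ℝ)/2) = |(n:ℝ)| := by
    rw [show (1:ℝ)/2 = (1/2 : ℝ) by norm_num, ← Real.sqrt_eq_rpow, hsq]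
  -- split the integral
  have hdisj : Disjoint (Set.Ioc (0:ℝ) R) (Set.Ioi R) := Set.Ioc_disjoint_Ioi le_rfl
  have hi1 : IntegrableOn (fun t => Ψ t * ((deriv (fun s => Gker n s) t : ℝ) : ℂ))
      (Set.Ioc 0 R) := MeasureTheory.IntegrableOn.mono_set hint Set.Ioc_subset_Ioi_self
  have hi2 : IntegrableOn (fun t => Ψ t * ((deriv (fun s => Gker n s) t : ℝ) : ℂ))
      (Set.Ioi R) := MeasureTheory.IntegrableOn.mono_set hint (Set.Ioi_subset_Ioi hR0.le)
  have heq : (∫ t in Set.Ioi (0:ℝ), Ψ t * ((deriv (fun s => Gker n s) t : ℝ) : ℂ))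
      = (∫ t in Set.Ioc (0:ℝ) R, Ψ t * ((deriv (fun s => Gker n s) t : ℝ) : ℂ))
        + ∫ t in Set.Ioi R, Ψ t * ((deriv (fun s => Gker n s) t : ℝ) : ℂ) := by
    rw [← setIntegral_union hdisj measurableSet_Ioi hi1 hi2, Set.Ioc_union_Ioi_eq_Ioi hR0.le]
  -- piece 1
  have hai1 : ∀ᵐ t ∂(volume.restrict (Set.Ioc (0:ℝ) R)),
      ‖Ψ t * ((deriv (fun s => Gker n s) t : ℝ) : ℂ)‖
        ≤ (18 * M / (n:ℝ) ^ 2) * t ^ (-(1:ℝ)/2) := by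
    filter_upwards [ae_restrict_of_ae_restrict_of_subset Set.Ioc_subset_Ioi_self hΨae,
      ae_restrict_mem measurableSet_Ioc] with t hΨt ht
    have ht0 : 0 < t := ht.1
    have hst : 0 < Real.sqrt t := Real.sqrt_pos.mpr ht0
    rw [norm_mul, Complex.norm_real, Real.norm_eq_abs]
    have hd := KkerAux2.abs_deriv_le₂ hn ht0
    have h56 : (56:ℝ) ≤ 18 * π := by nlinarith [Real.pi_gt_d6]
    calc ‖Ψ t‖ * |deriv (fun s => Gker n s) t|
        ≤ M * (56 / (π * (n:ℝ) ^ 2 * Real.sqrt t)) :=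
          mul_le_mul hΨt hd (abs_nonneg _) hM0
    _ ≤ M * (18 / ((n:ℝ) ^ 2 * Real.sqrt t)) := by
        apply mul_le_mul_of_nonneg_left _ hM0
        rw [div_le_div_iff₀ (by positivity) (by positivity)]
        calc (56:ℝ) * ((n:ℝ) ^ 2 * Real.sqrt t)
            ≤ (18 * π) * ((n:ℝ) ^ 2 * Real.sqrt t) :=
              mul_le_mul_of_nonneg_right h56 (by positivity)
        _ = 18 * (π * (n:ℝ) ^ 2 * Real.sqrt t) := by ring
    _ = (18 * M / (n:ℝ) ^ 2) * t ^ (-(1:ℝ)/2) := by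
        rw [KkerAux2.rpow_neg_half ht0]; field_simp
  have hgi1 : Integrable (fun t : ℝ => (18 * M / (n:ℝ) ^ 2) * t ^ (-(1:ℝ)/2))
      (volume.restrict (Set.Ioc (0:ℝ) R)) := by
    have h1 : IntervalIntegrable (fun t : ℝ => t ^ (-(1:ℝ)/2)) volume 0 R :=
      intervalIntegral.intervalIntegrable_rpow' (by norm_num)
    exact ((intervalIntegrable_iff_integrableOn_Ioc_of_le hR0.le).mp h1).const_mul _
  have hp1 : ‖∫ t in Set.Ioc (0:ℝ) R, Ψ t * ((deriv (fun s => Gker n s) t : ℝ) : ℂ)‖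
      ≤ ∫ t in Set.Ioc (0:ℝ) R, (18 * M / (n:ℝ) ^ 2) * t ^ (-(1:ℝ)/2) :=
    norm_integral_le_of_norm_le hgi1 hai1
  have hv1 : (∫ t in Set.Ioc (0:ℝ) R, (18 * M / (n:ℝ) ^ 2) * t ^ (-(1:ℝ)/2))
      = 36 * M / |(n:ℝ)| := by
    rw [MeasureTheory.integral_const_mul, ← intervalIntegral.integral_of_le hR0.le,
      _root_.integral_rpow (Or.inl (by norm_num))]
    rw [show -(1:ℝ)/2 + 1 = (1:ℝ)/2 by norm_num, hR12,
      Real.zero_rpow (by norm_num : (1:ℝ)/2 ≠ 0)]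
    field_simp
    rw [← sq_abs ((n:ℝ))]
    ring
  -- piece 2
  have hai2 : ∀ᵐ t ∂(volume.restrict (Set.Ioi R)),
      ‖Ψ t * ((deriv (fun s => Gker n s) t : ℝ) : ℂ)‖ ≤ M * t ^ (-(3:ℝ)/2) := by
    filter_upwards [ae_restrict_of_ae_restrict_of_subset (Set.Ioi_subset_Ioi hR0.le) hΨae,
      ae_restrict_mem measurableSet_Ioi] with t hΨt ht
    have ht0 : 0 < t := lt_trans hR0 ht
    have hst : 0 < Real.sqrt t := Real.sqrt_pos.mpr ht0
    rw [norm_mul, Complex.norm_real, Real.norm_eq_abs]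
    have hd := KkerAux2.abs_deriv_le₁ n ht0
    calc ‖Ψ t‖ * |deriv (fun s => Gker n s) t|
        ≤ M * (2 / (π * t * Real.sqrt t)) := mul_le_mul hΨt hd (abs_nonneg _) hM0
    _ ≤ M * (1 / (t * Real.sqrt t)) := by
        apply mul_le_mul_of_nonneg_left _ hM0
        rw [div_le_div_iff₀ (by positivity) (by positivity)]
        nlinarith [Real.pi_gt_d6, mul_pos ht0 hst]
    _ = M * t ^ (-(3:ℝ)/2) := by rw [KkerAux2.rpow_neg_threehalf ht0, one_div]
  have hgi2 : Integrable (fun t : ℝ => M * t ^ (-(3:ℝ)/2)) (volume.restrict (Set.Ioi R)) :=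
    (integrableOn_Ioi_rpow_of_lt (by norm_num) hR0).const_mul _
  have hp2 : ‖∫ t in Set.Ioi R, Ψ t * ((deriv (fun s => Gker n s) t : ℝ) : ℂ)‖
      ≤ ∫ t in Set.Ioi R, M * t ^ (-(3:ℝ)/2) :=
    norm_integral_le_of_norm_le hgi2 hai2
  have hv2 : (∫ t in Set.Ioi R, M * t ^ (-(3:ℝ)/2)) = 2 * M / |(n:ℝ)| := by
    rw [MeasureTheory.integral_const_mul, integral_Ioi_rpow_of_lt (by norm_num) hR0]
    rw [show -(3:ℝ)/2 + 1 = -((1:ℝ)/2) by norm_num, Real.rpow_neg hR0.le, hR12]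
    field_simp
  -- combine
  rw [Kker, norm_neg, heq]
  calc ‖(∫ t in Set.Ioc (0:ℝ) R, Ψ t * ((deriv (fun s => Gker n s) t : ℝ) : ℂ))
        + ∫ t in Set.Ioi R, Ψ t * ((deriv (fun s => Gker n s) t : ℝ) : ℂ)‖
      ≤ ‖∫ t in Set.Ioc (0:ℝ) R, Ψ t * ((deriv (fun s => Gker n s) t : ℝ) : ℂ)‖
        + ‖∫ t in Set.Ioi R, Ψ t * ((deriv (fun s => Gker n s) t : ℝ) : ℂ)‖ := norm_add_le _ _
  _ ≤ 36 * M / |(n:ℝ)| + 2 * M / |(n:ℝ)| := by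
      rw [← hv1, ← hv2]; exact add_le_add hp1 hp2
  _ = 38 * M / |(n:ℝ)| := by ring
  _ ≤ (38 * M + 1) / |(n:ℝ)| := by
      gcongr
      linarith
end
end
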